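/- arXiv:1307.0079 — 7 statements merged into one kernel-verified Lean document; each statement's English description precedes it below -/
import Mathlib

section
/- Let G be a connected graph of order n containing two distinct bridges e and f. Then for each integer k with 2 ≤ k ≤ n, every k-rainbow coloring of G assigns distinct colors to e and f. -/
open SimpleGraph

universe u

/-- `T` is a rainbow `S`-tree: a tree (as a subgraph of `G`) containing all vertices of `S`
whose edges receive pairwise distinct colors under `c`. -/
def SimpleGraph.IsRainbowSTree {V : Type u} {α : Type*} (G : SimpleGraph V)
    (c : Sym2 V → α) (S : Set V) (T : G.Subgraph) : Prop :=
  T.coe.IsTree ∧ S ⊆ T.verts ∧ Set.InjOn c T.edgeSet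

/-- `c` is a `k`-rainbow coloring of `G`: every `k`-subset of vertices has a rainbow tree. -/
def SimpleGraph.IsRainbowColoring {V : Type u} {α : Type*} [DecidableEq V]
    (G : SimpleGraph V) (k : ℕ) (c : Sym2 V → α) : Prop :=
  ∀ S : Finset V, S.card = k → ∃ T : G.Subgraph, G.IsRainbowSTree c ↑S T

/-- The `k`-rainbow index: minimum number of colors in a `k`-rainbow coloring. -/
noncomputable def SimpleGraph.rxk {V : Type u} [DecidableEq V]
    (G : SimpleGraph V) (k : ℕ) : ℕ :=
  sInf {q | ∃ c : Sym2 V → Fin q, G.IsRainbowColoring k c}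

/-- Steiner distance of a vertex set `S` : minimum size of a tree of `G` connecting `S`. -/
noncomputable def SimpleGraph.steinerDist {V : Type u} (G : SimpleGraph V) (S : Set V) : ℕ :=
  sInf {m | ∃ T : G.Subgraph, T.coe.IsTree ∧ S ⊆ T.verts ∧ T.edgeSet.ncard = m}

/-- The `k`-Steiner diameter: maximum Steiner distance over all `k`-subsets. -/
noncomputable def SimpleGraph.sdiam {V : Type u} [DecidableEq V]
    (G : SimpleGraph V) (k : ℕ) : ℕ :=
  sSup {d | ∃ S : Finset V, S.card = k ∧ G.steinerDist ↑S = d}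

lemma bridge_mem_tree {V : Type u} {G : SimpleGraph V} {e : Sym2 V} {u w : V}
    (T : G.Subgraph) (hconn : T.coe.Connected) (hu : u ∈ T.verts) (hw : w ∈ T.verts)
    (hreach : ¬(G \ fromEdgeSet {e}).Reachable u w) : e ∈ T.edgeSet := by
  by_contra hne
  obtain ⟨p⟩ := hconn ⟨u, hu⟩ ⟨w, hw⟩
  apply hreach
  refine ⟨(p.map T.hom).transfer _ ?_⟩
  intro e' he'
  rw [SimpleGraph.Walk.edges_map, List.mem_map] at he'
  obtain ⟨d, hd, rfl⟩ := he'
  have hd' : d ∈ T.coe.edgeSet := p.edges_subset_edgeSet hd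
  rw [Subgraph.edgeSet_coe] at hd'
  have hT : Sym2.map Subtype.val d ∈ T.edgeSet := hd'
  simp only [edgeSet_sdiff, edgeSet_fromEdgeSet, edgeSet_sdiff_sdiff_isDiag, Set.mem_diff,
    Set.mem_singleton_iff]
  exact ⟨T.edgeSet_subset hT, fun h' => hne (h' ▸ hT)⟩

theorem stmt_2 {V : Type u} [Fintype V] [DecidableEq V] {α : Type*} (G : SimpleGraph V)
    (n k : ℕ) (hconn : G.Connected) (hn : Fintype.card V = n)
    (e f : Sym2 V) (he : G.IsBridge e) (hf : G.IsBridge f) (hef : e ≠ f)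
    (hk2 : 2 ≤ k) (hkn : k ≤ n)
    (c : Sym2 V → α) (hc : G.IsRainbowColoring k c) :
    c e ≠ c f := by
  induction e using Sym2.ind with | _ a b => ?_
  induction f using Sym2.ind with | _ x y => ?_
  rw [isBridge_iff] at he hf
  obtain ⟨hab, hre⟩ : G.Adj a b ∧ _ :=
    ⟨(IsBridge.reachable_iff_adj (isBridge_iff.2 he)).1 (hconn.preconnected a b), he⟩
  obtain ⟨hxy, hrf⟩ : G.Adj x y ∧ _ :=
    ⟨(IsBridge.reachable_iff_adj (isBridge_iff.2 hf)).1 (hconn.preconnected x y), hf⟩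
  have hxye : (G \ fromEdgeSet {s(a, b)}).Reachable x y := by
    refine Adj.reachable ?_
    rw [sdiff_adj, fromEdgeSet_adj]
    exact ⟨hxy, fun h => hef h.1.symm⟩
  obtain ⟨u, hue, huf0⟩ : ∃ u, ¬(G \ fromEdgeSet {s(a, b)}).Reachable u x ∧
      ¬(G \ fromEdgeSet {s(a, b)}).Reachable u y := by
    by_cases h : (G \ fromEdgeSet {s(a, b)}).Reachable a x
    · exact ⟨b, fun h2 => hre (h.trans h2.symm), fun h2 => hre ((h.trans hxye).trans h2.symm)⟩
    · exact ⟨a, h, fun h2 => h (h2.trans hxye.symm)⟩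
  obtain ⟨w, hwf, hwe⟩ : ∃ w, ¬(G \ fromEdgeSet {s(x, y)}).Reachable u w ∧
      ¬(G \ fromEdgeSet {s(a, b)}).Reachable u w := by
    by_cases h : (G \ fromEdgeSet {s(x, y)}).Reachable u x
    · exact ⟨y, fun h2 => hrf (h.symm.trans h2), huf0⟩
    · exact ⟨x, h, hue⟩
  have huw : u ≠ w := fun h => hwf (h ▸ Reachable.refl u)
  have h2 : ({u, w} : Finset V).card = 2 := Finset.card_pair huw
  obtain ⟨S, hS, hScard⟩ := Finset.exists_superset_card_eq (h2 ▸ hk2) (hn ▸ hkn)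
  obtain ⟨T, htree, hsub, hinj⟩ := hc S hScard
  have hu : u ∈ T.verts := hsub (Finset.mem_coe.mpr (hS (by simp)))
  have hw : w ∈ T.verts := hsub (Finset.mem_coe.mpr (hS (by simp)))
  have heT := bridge_mem_tree T htree.isConnected hu hw hwe
  have hfT := bridge_mem_tree T htree.isConnected hu hw hwf
  intro hcc
  exact hef (hinj heT hfT hcc)
end

section
/- For 3 ≤ n ≤ 5, the 3-rainbow index of the complete graph K_n equals 2. -/
open SimpleGraph

universe u

/-- A subgraph with at most two edges has acyclic coercion. -/
lemma aux_isAcyclic_of_edgeSet_subset_pair {V : Type u} {G : SimpleGraph V}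
    {H : G.Subgraph} {E₁ E₂ : Sym2 V} (h : H.edgeSet ⊆ {E₁, E₂}) : H.coe.IsAcyclic := by
  classical
  intro v c hc
  have hnd : (c.edges.map (Sym2.map (Subtype.val))).Nodup :=
    hc.isCircuit.isTrail.edges_nodup.map (Sym2.map.injective Subtype.val_injective)
  have h3 : 3 ≤ c.edges.length := by
    rw [SimpleGraph.Walk.length_edges]; exact hc.three_le_length
  have hsub : (c.edges.map (Sym2.map (Subtype.val))).toFinset ⊆ {E₁, E₂} := by
    intro e he
    simp only [List.mem_toFinset, List.mem_map] at he
    obtain ⟨e', he', rfl⟩ := he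
    have h1 : e' ∈ H.coe.edgeSet := c.edges_subset_edgeSet he'
    rw [SimpleGraph.Subgraph.edgeSet_coe] at h1
    have := h h1
    simpa using this
  have hcard := Finset.card_le_card hsub
  rw [List.toFinset_card_of_nodup hnd, List.length_map] at hcard
  have h2 : ({E₁, E₂} : Finset (Sym2 V)).card ≤ 2 :=
    (Finset.card_insert_le _ _).trans (by simp)
  omega

/-- In a connected graph, any vertex distinct from another vertex has a neighbor. -/
lemma aux_exists_adj {V : Type u} {G : SimpleGraph V} (hc : G.Connected)
    {a b : V} (hab : a ≠ b) : ∃ x, G.Adj a x := by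
  obtain ⟨p⟩ := hc a b
  cases p with
  | nil => exact absurd rfl hab
  | cons h _ => exact ⟨_, h⟩

/-- Build a rainbow tree from a path on three vertices with two differently colored edges. -/
lemma aux_build {n : ℕ} {α : Type*} {c : Sym2 (Fin n) → α} (x y z : Fin n)
    (hxy : x ≠ y) (hyz : y ≠ z) (hxz : x ≠ z) (hcol : c s(x, y) ≠ c s(y, z)) :
    ∃ T : (⊤ : SimpleGraph (Fin n)).Subgraph,
      (⊤ : SimpleGraph (Fin n)).IsRainbowSTree c {x, y, z} T := by
  let w : (⊤ : SimpleGraph (Fin n)).Walk x z :=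
    .cons (by simpa using hxy) (.cons (by simpa using hyz) .nil)
  have hedges : w.edges = [s(x, y), s(y, z)] := rfl
  refine ⟨w.toSubgraph, ⟨?_, ?_⟩, ?_, ?_⟩
  · exact (w.toSubgraph_connected).coe
  · refine aux_isAcyclic_of_edgeSet_subset_pair (E₁ := s(x, y)) (E₂ := s(y, z)) ?_
    intro e he
    rw [SimpleGraph.Walk.mem_edges_toSubgraph, hedges] at he
    simpa using he
  · intro v hv
    rw [SimpleGraph.Walk.mem_verts_toSubgraph]
    have hsupp : w.support = [x, y, z] := rfl
    rw [hsupp]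
    simpa using hv
  · intro e he f hf hef
    rw [SimpleGraph.Walk.mem_edges_toSubgraph, hedges] at he hf
    simp only [List.mem_cons, List.not_mem_nil, or_false] at he hf
    rcases he with rfl | rfl <;> rcases hf with rfl | rfl
    · rfl
    · exact absurd hef hcol
    · exact absurd hef.symm hcol
    · rfl

/-- The natural-number edge coloring used for the upper bound. -/
def aux_cN (a b : ℕ) : Fin 2 :=
  if max a b - min a b = 1 ∨ max a b - min a b = 4 then 0 else 1

lemma aux_cN_symm (a b : ℕ) : aux_cN a b = aux_cN b a := by
  simp [aux_cN, Nat.max_comm, Nat.min_comm]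

lemma aux_key : ∀ x y z : Fin 5, x ≠ y → y ≠ z → x ≠ z →
    ¬(aux_cN x.val y.val = aux_cN y.val z.val ∧
      aux_cN y.val z.val = aux_cN x.val z.val) := by decide

theorem stmt_3 (n : ℕ) (h3 : 3 ≤ n) (h5 : n ≤ 5) :
    (⊤ : SimpleGraph (Fin n)).rxk 3 = 2 := by
  have hmem : 2 ∈ {q | ∃ c : Sym2 (Fin n) → Fin q,
      (⊤ : SimpleGraph (Fin n)).IsRainbowColoring 3 c} := by
    refine ⟨Sym2.lift ⟨fun a b => aux_cN a.val b.val, fun a b => aux_cN_symm _ _⟩, ?_⟩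
    intro S hS
    obtain ⟨a, b, c, hab, hac, hbc, rfl⟩ := Finset.card_eq_three.mp hS
    set col : Sym2 (Fin n) → Fin 2 :=
      Sym2.lift ⟨fun a b => aux_cN a.val b.val, fun a b => aux_cN_symm _ _⟩ with hcol
    have hkey := aux_key ⟨a.val, a.isLt.trans_le h5⟩ ⟨b.val, b.isLt.trans_le h5⟩
      ⟨c.val, c.isLt.trans_le h5⟩
      (by simpa [Fin.ext_iff] using (Fin.val_injective.ne hab))
      (by simpa [Fin.ext_iff] using (Fin.val_injective.ne hbc))
      (by simpa [Fin.ext_iff] using (Fin.val_injective.ne hac))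
    simp only at hkey
    have hSet : (↑({a, b, c} : Finset (Fin n)) : Set (Fin n)) = {a, b, c} := by simp
    rw [hSet]
    have e1 : col s(a, b) = aux_cN a.val b.val := rfl
    have e2 : col s(b, c) = aux_cN b.val c.val := rfl
    have e3 : col s(a, c) = aux_cN a.val c.val := rfl
    by_cases h1 : col s(a, b) = col s(b, c)
    · by_cases h2 : col s(b, c) = col s(a, c)
      · exact absurd ⟨by rw [← e1, ← e2, h1], by rw [← e2, ← e3, h2]⟩ hkey
      · obtain ⟨T, hT⟩ := aux_build (c := col) b c a hbc (Ne.symm hac) (Ne.symm hab)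
          (by rw [show s(c, a) = s(a, c) from Sym2.eq_swap]; exact h2)
        refine ⟨T, hT.1, ?_, hT.2.2⟩
        have hperm : ({a, b, c} : Set (Fin n)) = {b, c, a} := by
          ext v; simp; tauto
        rw [hperm]; exact hT.2.1
    · exact aux_build (c := col) a b c hab hbc hac h1
  apply le_antisymm
  · exact Nat.sInf_le hmem
  · refine le_csInf ⟨2, hmem⟩ ?_
    rintro q ⟨c, hc⟩
    by_contra hlt
    push_neg at hlt
    have hsub : Subsingleton (Fin q) :=
      ⟨fun a b => Fin.ext (by have := a.isLt; have := b.isLt; omega)⟩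
    set a : Fin n := ⟨0, by omega⟩ with ha_def
    set b : Fin n := ⟨1, by omega⟩ with hb_def
    set cc : Fin n := ⟨2, by omega⟩ with hcc_def
    have hab : a ≠ b := by simp [ha_def, hb_def, Fin.ext_iff]
    have hbc : b ≠ cc := by simp [hb_def, hcc_def, Fin.ext_iff]
    have hac : a ≠ cc := by simp [ha_def, hcc_def, Fin.ext_iff]
    obtain ⟨T, htree, hverts, hinj⟩ := hc {a, b, cc}
      (Finset.card_eq_three.mpr ⟨a, b, cc, hab, hac, hbc, rfl⟩)
    have ha : a ∈ T.verts := hverts (by simp)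
    have hb : b ∈ T.verts := hverts (by simp)
    have hcv : cc ∈ T.verts := hverts (by simp)
    obtain ⟨xa, hxa⟩ := aux_exists_adj htree.isConnected
      (a := (⟨a, ha⟩ : T.verts)) (b := ⟨b, hb⟩) (by simp [hab])
    obtain ⟨xb, hxb⟩ := aux_exists_adj htree.isConnected
      (a := (⟨b, hb⟩ : T.verts)) (b := ⟨a, ha⟩) (by simp [hab.symm])
    obtain ⟨xc, hxc⟩ := aux_exists_adj htree.isConnected
      (a := (⟨cc, hcv⟩ : T.verts)) (b := ⟨a, ha⟩) (by simp [hac.symm])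
    rw [SimpleGraph.Subgraph.coe_adj] at hxa hxb hxc
    have ea : s(a, (xa : Fin n)) ∈ T.edgeSet := (SimpleGraph.Subgraph.mem_edgeSet).mpr hxa
    have eb : s(b, (xb : Fin n)) ∈ T.edgeSet := (SimpleGraph.Subgraph.mem_edgeSet).mpr hxb
    have ec : s(cc, (xc : Fin n)) ∈ T.edgeSet := (SimpleGraph.Subgraph.mem_edgeSet).mpr hxc
    have h1 : s(a, (xa : Fin n)) = s(b, (xb : Fin n)) :=
      hinj ea eb (Subsingleton.elim _ _)
    have h2 : s(cc, (xc : Fin n)) = s(b, (xb : Fin n)) :=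
      hinj ec eb (Subsingleton.elim _ _)
    rw [Sym2.eq_iff] at h1 h2
    rcases h1 with ⟨h1a, _⟩ | ⟨h1a, _⟩
    · exact hab h1a
    · rcases h2 with ⟨h2a, _⟩ | ⟨h2a, _⟩
      · exact hbc h2a.symm
      · exact hac (h1a.trans h2a.symm)
end

section
/- If G is a connected graph of order n ≥ 6, then for each integer k with 3 ≤ k ≤ n, rx_k(G) ≥ 3. -/
open SimpleGraph

universe u

lemma my_exists_tree_le {V : Type u} [Fintype V] (G : SimpleGraph V) (hconn : G.Connected) :
    ∃ H : SimpleGraph V, H ≤ G ∧ H.IsTree := by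
  classical
  set M : Set ℕ := {n | ∃ H : SimpleGraph V, (H ≤ G ∧ H.Connected) ∧ H.edgeSet.ncard = n} with hM
  have hMne : M.Nonempty := ⟨G.edgeSet.ncard, G, ⟨le_refl _, hconn⟩, rfl⟩
  obtain ⟨H, ⟨hle, hc⟩, hcard⟩ := Nat.sInf_mem hMne
  refine ⟨H, hle, hc, ?_⟩
  by_contra hac
  rw [isAcyclic_iff_forall_adj_isBridge] at hac
  push_neg at hac
  obtain ⟨v, w, hadj, hnb⟩ := hac
  rw [isBridge_iff] at hnb
  push_neg at hnb
  have hreach := hnb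
  set H' : SimpleGraph V := H \ fromEdgeSet {s(v, w)} with hH'
  have hle' : H' ≤ H := sdiff_le
  have key : ∀ a b : V, H.Adj a b → H'.Reachable a b := by
    intro a b hab
    by_cases h : s(a, b) = s(v, w)
    · rw [Sym2.eq_iff] at h
      rcases h with ⟨rfl, rfl⟩ | ⟨rfl, rfl⟩
      · exact hreach
      · exact hreach.symm
    · refine Adj.reachable ?_
      rw [hH', sdiff_adj]
      refine ⟨hab, ?_⟩
      rw [fromEdgeSet_adj]
      rintro ⟨h1, -⟩
      exact h h1
  have pre : ∀ a b : V, H.Reachable a b → H'.Reachable a b := by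
    intro a b hr
    obtain ⟨p⟩ := hr
    induction p with
    | nil => exact Reachable.refl _
    | cons h q ih => exact (key _ _ h).trans ih
  have hc' : H'.Connected := by
    have : Nonempty V := hc.nonempty
    exact (connected_iff _).mpr ⟨fun a b => pre a b (hc.preconnected a b), this⟩
  have hss : H'.edgeSet ⊂ H.edgeSet := by
    refine ⟨edgeSet_mono hle', fun hsub => ?_⟩
    have h1 : s(v, w) ∈ H'.edgeSet := hsub hadj
    rw [mem_edgeSet, hH', sdiff_adj] at h1
    exact h1.2 (by rw [fromEdgeSet_adj]; exact ⟨rfl, hadj.ne⟩)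
  have hlt : H'.edgeSet.ncard < H.edgeSet.ncard :=
    Set.ncard_lt_ncard hss (Set.toFinite _)
  have : sInf M ≤ H'.edgeSet.ncard := Nat.sInf_le ⟨H', ⟨hle'.trans hle, hc'⟩, rfl⟩
  omega

lemma my_exists_tree_subgraph {V : Type u} [Fintype V] (G : SimpleGraph V)
    (hconn : G.Connected) : ∃ T : G.Subgraph, T.coe.IsTree ∧ T.verts = Set.univ := by
  classical
  obtain ⟨H, hle, htree⟩ := my_exists_tree_le G hconn
  refine ⟨SimpleGraph.toSubgraph H hle, ?_, rfl⟩
  have φ : (SimpleGraph.toSubgraph H hle).coe ≃g H :=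
    { toEquiv := Equiv.Set.univ V, map_rel_iff' := Iff.rfl }
  constructor
  · exact φ.connected_iff.mpr htree.isConnected
  · intro v p hp
    have hcyc := hp.map (f := φ.toHom) φ.injective
    exact htree.IsAcyclic _ hcyc

lemma my_core {V : Type u} [Fintype V] [DecidableEq V] (G : SimpleGraph V) (c : Sym2 V → Fin 2)
    (hn : 6 ≤ Fintype.card V)
    (H : ∀ x y z : V, x ≠ y → x ≠ z → y ≠ z →
      ∃ e1 e2 : Sym2 V, e1 ≠ e2 ∧ e1 ∈ G.edgeSet ∧ e2 ∈ G.edgeSet ∧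
        (∀ v ∈ e1, v = x ∨ v = y ∨ v = z) ∧ (∀ v ∈ e2, v = x ∨ v = y ∨ v = z) ∧
        c e1 ≠ c e2) : False := by
  classical
  -- edge classification
  have eclass : ∀ (x y z : V) (e : Sym2 V), e ∈ G.edgeSet → (∀ v ∈ e, v = x ∨ v = y ∨ v = z) →
      e = s(x,y) ∨ e = s(x,z) ∨ e = s(y,z) := by
    intro x y z e
    induction e with
    | _ a b =>
      intro he hmem
      have hne : a ≠ b := G.ne_of_adj (by rwa [mem_edgeSet] at he)
      have ha := hmem a (by simp)
      have hb := hmem b (by simp)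
      rcases ha with rfl|rfl|rfl <;> rcases hb with rfl|rfl|rfl <;>
        simp_all [Sym2.eq_iff]
  have good : ∀ x y z : V, x ≠ y → x ≠ z → y ≠ z →
      (G.Adj x y ∧ G.Adj x z ∧ c s(x,y) ≠ c s(x,z)) ∨
      (G.Adj x y ∧ G.Adj y z ∧ c s(x,y) ≠ c s(y,z)) ∨
      (G.Adj x z ∧ G.Adj y z ∧ c s(x,z) ≠ c s(y,z)) := by
    intro x y z hxy hxz hyz
    obtain ⟨e1, e2, hne, he1, he2, hm1, hm2, hcc⟩ := H x y z hxy hxz hyz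
    rcases eclass x y z e1 he1 hm1 with rfl|rfl|rfl <;>
      rcases eclass x y z e2 he2 hm2 with rfl|rfl|rfl <;>
      rw [mem_edgeSet] at he1 he2
    · exact absurd rfl hne
    · exact Or.inl ⟨he1, he2, hcc⟩
    · exact Or.inr (Or.inl ⟨he1, he2, hcc⟩)
    · exact Or.inl ⟨he2, he1, hcc.symm⟩
    · exact absurd rfl hne
    · exact Or.inr (Or.inr ⟨he1, he2, hcc⟩)
    · exact Or.inr (Or.inl ⟨he2, he1, hcc.symm⟩)
    · exact Or.inr (Or.inr ⟨he2, he1, hcc.symm⟩)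
    · exact absurd rfl hne
  have rule : ∀ t u w : V, t ≠ u → t ≠ w → u ≠ w → G.Adj t u → G.Adj t w →
      c s(t,u) = c s(t,w) → G.Adj u w ∧ c s(u,w) ≠ c s(t,u) := by
    intro t u w htu htw huw hau haw hcc
    rcases good t u w htu htw huw with ⟨_,_,h⟩|⟨_,h2,h⟩|⟨_,h2,h⟩
    · exact absurd hcc h
    · exact ⟨h2, h.symm⟩
    · refine ⟨h2, ?_⟩; rw [hcc]; exact h.symm
  have mono : ∀ a b d : V, a ≠ b → a ≠ d → b ≠ d → G.Adj a b → G.Adj a d → G.Adj b d →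
      c s(a,b) = c s(a,d) → c s(a,b) = c s(b,d) → False := by
    intro a b d h1 h2 h3 _ _ _ e1 e2
    rcases good a b d h1 h2 h3 with ⟨_,_,h⟩|⟨_,_,h⟩|⟨_,_,h⟩
    · exact h e1
    · exact h e2
    · exact h (e1.symm.trans e2)
  have nonadj : ∀ t u w : V, t ≠ u → t ≠ w → u ≠ w → ¬G.Adj t u → ¬G.Adj t w → False := by
    intro t u w h1 h2 h3 n1 n2
    rcases good t u w h1 h2 h3 with ⟨h,_,_⟩|⟨h,_,_⟩|⟨h,_,_⟩
    · exact n1 h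
    · exact n1 h
    · exact n2 h
  set A : V → Fin 2 → Finset V :=
    fun t i => Finset.univ.filter (fun u => G.Adj t u ∧ c s(t, u) = i) with hA
  have memA : ∀ t i u, u ∈ A t i ↔ (G.Adj t u ∧ c s(t,u) = i) := by
    intro t i u; simp [hA]
  have symA : ∀ t u i, u ∈ A t i ↔ t ∈ A u i := by
    intro t u i
    rw [memA, memA]
    constructor
    · rintro ⟨h1, h2⟩; exact ⟨h1.symm, by rw [Sym2.eq_swap]; exact h2⟩
    · rintro ⟨h1, h2⟩; exact ⟨h1.symm, by rw [Sym2.eq_swap]; exact h2⟩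
  have f2 : ∀ a b i : Fin 2, a ≠ i → b ≠ i → a = b := by decide
  have f2' : ∀ a : Fin 2, a ≠ 0 → a = 1 := by decide
  have cardA_le : ∀ t i, (A t i).card ≤ 2 := by
    intro t i
    by_contra hlt
    push_neg at hlt
    obtain ⟨u, v, w, hu, hv, hw, huv, huw, hvw⟩ := Finset.two_lt_card_iff.mp hlt
    rw [memA] at hu hv hw
    obtain ⟨hu1, hu2⟩ := hu; obtain ⟨hv1, hv2⟩ := hv; obtain ⟨hw1, hw2⟩ := hw
    have r1 := rule t u v (G.ne_of_adj hu1) (G.ne_of_adj hv1) huv hu1 hv1 (hu2.trans hv2.symm)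
    have r2 := rule t u w (G.ne_of_adj hu1) (G.ne_of_adj hw1) huw hu1 hw1 (hu2.trans hw2.symm)
    have r3 := rule t v w (G.ne_of_adj hv1) (G.ne_of_adj hw1) hvw hv1 hw1 (hv2.trans hw2.symm)
    have c1 : c s(u,v) ≠ i := by rw [← hu2]; exact r1.2
    have c2 : c s(u,w) ≠ i := by rw [← hu2]; exact r2.2
    have c3 : c s(v,w) ≠ i := by rw [← hv2]; exact r3.2
    exact mono u v w huv huw hvw r1.1 r2.1 r3.1 (f2 _ _ i c1 c2) (f2 _ _ i c1 c3)
  have cardA2 : ∀ t, (A t 0).card = 2 ∧ (A t 1).card = 2 ∧ Fintype.card V = 6 := by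
    intro t
    set N : Finset V := Finset.univ.filter (fun u => u ≠ t ∧ ¬G.Adj t u) with hN
    have cardN : N.card ≤ 1 := by
      rw [Finset.card_le_one]
      intro a ha b hb
      rw [hN, Finset.mem_filter] at ha hb
      by_contra hab
      exact nonadj t a b (Ne.symm ha.2.1) (Ne.symm hb.2.1) hab ha.2.2 hb.2.2
    have hsub : Finset.univ ⊆ {t} ∪ N ∪ A t 0 ∪ A t 1 := by
      intro u _
      by_cases h1 : u = t
      · subst h1; simp
      by_cases h2 : G.Adj t u
      · by_cases h3 : c s(t,u) = 0
        · exact Finset.mem_union_left _ (Finset.mem_union_right _ ((memA t 0 u).mpr ⟨h2, h3⟩))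
        · exact Finset.mem_union_right _ ((memA t 1 u).mpr ⟨h2, f2' _ h3⟩)
      · exact Finset.mem_union_left _ (Finset.mem_union_left _
          (Finset.mem_union_right _ (by rw [hN, Finset.mem_filter]; exact ⟨Finset.mem_univ _, h1, h2⟩)))
    have hcard : Fintype.card V ≤ 1 + N.card + (A t 0).card + (A t 1).card := by
      calc Fintype.card V = Finset.univ.card := (Finset.card_univ).symm
        _ ≤ ({t} ∪ N ∪ A t 0 ∪ A t 1).card := Finset.card_le_card hsub
        _ ≤ ({t} ∪ N ∪ A t 0).card + (A t 1).card := Finset.card_union_le _ _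
        _ ≤ ({t} ∪ N).card + (A t 0).card + (A t 1).card := by
            have := Finset.card_union_le ({t} ∪ N) (A t 0); omega
        _ ≤ 1 + N.card + (A t 0).card + (A t 1).card := by
            have := Finset.card_union_le ({t} : Finset V) N
            simp only [Finset.card_singleton] at this; omega
    have h0 := cardA_le t 0
    have h1 := cardA_le t 1
    omega
  -- helper to split a 2-element set containing a given element
  have pairmem : ∀ (s : Finset V) (v : V), s.card = 2 → v ∈ s → ∃ z, z ≠ v ∧ s = {v, z} := by
    intro s v h2 hv
    obtain ⟨a, b, hab, rfl⟩ := Finset.card_eq_two.mp h2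
    rcases Finset.mem_insert.mp hv with rfl | hb
    · exact ⟨b, hab.symm, rfl⟩
    · have hbv : v = b := Finset.mem_singleton.mp hb
      subst hbv
      exact ⟨a, hab, Finset.pair_comm a v⟩
  have memA' : ∀ t i u, u ∈ A t i → G.Adj t u ∧ c s(t,u) = i := fun t i u h => (memA t i u).mp h
  have hne : Nonempty V := Fintype.card_pos_iff.mp (by omega)
  obtain ⟨v⟩ := hne
  obtain ⟨x, y, hxy, hAv⟩ := Finset.card_eq_two.mp (cardA2 v).1
  have hxmem : x ∈ A v 0 := by rw [hAv]; simp
  have hymem : y ∈ A v 0 := by rw [hAv]; simp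
  obtain ⟨hvx, hcvx⟩ := memA' _ _ _ hxmem
  obtain ⟨hvy, hcvy⟩ := memA' _ _ _ hymem
  have nvx : v ≠ x := G.ne_of_adj hvx
  have nvy : v ≠ y := G.ne_of_adj hvy
  obtain ⟨hxyadj, hcxy'⟩ := rule v x y nvx nvy hxy hvx hvy (hcvx.trans hcvy.symm)
  have hcxy : c s(x,y) = 1 := f2' _ (by rwa [hcvx] at hcxy')
  -- A x 0
  have hvmemx : v ∈ A x 0 := (symA v x 0).mp hxmem
  obtain ⟨z, hzv, hAx⟩ := pairmem (A x 0) v (cardA2 x).1 hvmemx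
  have hzmem : z ∈ A x 0 := by rw [hAx]; simp
  obtain ⟨hxz, hcxz⟩ := memA' _ _ _ hzmem
  have nxz : x ≠ z := G.ne_of_adj hxz
  have nzy : z ≠ y := by
    rintro rfl
    rw [hcxz] at hcxy
    exact absurd hcxy (by decide)
  have hcxv : c s(x,v) = 0 := by rw [Sym2.eq_swap]; exact hcvx
  obtain ⟨hvz, hcvz'⟩ := rule x v z nvx.symm nxz hzv.symm hvx.symm hxz (hcxv.trans hcxz.symm)
  have hcvz : c s(v,z) = 1 := f2' _ (by rwa [hcxv] at hcvz')
  -- A y 0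
  have hvmemy : v ∈ A y 0 := (symA v y 0).mp hymem
  obtain ⟨w, hwv, hAy⟩ := pairmem (A y 0) v (cardA2 y).1 hvmemy
  have hwmem : w ∈ A y 0 := by rw [hAy]; simp
  obtain ⟨hyw, hcyw⟩ := memA' _ _ _ hwmem
  have nyw : y ≠ w := G.ne_of_adj hyw
  have nwx : w ≠ x := by
    intro h
    have hh : c s(x, y) = 0 := by rw [Sym2.eq_swap, ← h]; exact hcyw
    rw [hh] at hcxy
    exact absurd hcxy (by decide)
  have hcyv : c s(y,v) = 0 := by rw [Sym2.eq_swap]; exact hcvy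
  obtain ⟨hvw, hcvw'⟩ := rule y v w nvy.symm nyw hwv.symm hvy.symm hyw (hcyv.trans hcyw.symm)
  have hcvw : c s(v,w) = 1 := f2' _ (by rwa [hcyv] at hcvw')
  -- basic card facts
  have hV6 : Fintype.card V = 6 := (cardA2 v).2.2
  by_cases hzw : z = w
  · -- 4-cycle case
    subst hzw
    -- now hAy : A y 0 = {v, z}, hyw : Adj y z, hcyw : c s(y,z) = 0
    have hxmz : x ∈ A z 0 := (symA z x 0).mpr hzmem
    have hymz : y ∈ A z 0 := (symA z y 0).mpr hwmem
    have hsub2 : ({x, y} : Finset V) ⊆ A z 0 :=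
      Finset.insert_subset_iff.mpr ⟨hxmz, Finset.singleton_subset_iff.mpr hymz⟩
    have hAz : A z 0 = {x, y} := by
      refine (Finset.eq_of_subset_of_card_le hsub2 ?_).symm
      rw [(cardA2 z).1, Finset.card_pair hxy]
    have hvP : v ∉ ({x, y, z} : Finset V) := by simp [nvx, nvy, Ne.symm hzv]
    have hxP : x ∉ ({y, z} : Finset V) := by simp [hxy, nxz]
    have hyP : y ∉ ({z} : Finset V) := by simp [Ne.symm nzy]
    have hPcard : ({v, x, y, z} : Finset V).card = 4 := by
      rw [Finset.card_insert_of_notMem hvP, Finset.card_insert_of_notMem hxP,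
        Finset.card_insert_of_notMem hyP, Finset.card_singleton]
    have hScard : (Finset.univ \ ({v, x, y, z} : Finset V)).card = 2 := by
      rw [Finset.card_sdiff_of_subset (Finset.subset_univ _), Finset.card_univ, hV6, hPcard]
    obtain ⟨p, hp⟩ := Finset.card_pos.mp (by rw [hScard]; norm_num :
      0 < (Finset.univ \ ({v, x, y, z} : Finset V)).card)
    have hpP : p ∉ ({v, x, y, z} : Finset V) := (Finset.mem_sdiff.mp hp).2
    have hpfacts : p ≠ v ∧ p ≠ x ∧ p ≠ y ∧ p ≠ z := by
      simp only [Finset.mem_insert, Finset.mem_singleton, not_or] at hpP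
      exact hpP
    obtain ⟨npv, npx, npy, npz⟩ := hpfacts
    have claim : ∀ q, q ∈ A p 0 → q ∉ insert p ({v, x, y, z} : Finset V) := by
      intro q hq
      have hq' : p ∈ A q 0 := (symA p q 0).mp hq
      have hadjpq : G.Adj p q := ((memA p 0 q).mp hq).1
      simp only [Finset.mem_insert, Finset.mem_singleton]
      push_neg
      refine ⟨fun h => G.ne_of_adj hadjpq h.symm, ?_, ?_, ?_, ?_⟩
      · rintro rfl
        rw [hAv] at hq'
        simp only [Finset.mem_insert, Finset.mem_singleton] at hq'
        rcases hq' with rfl | rfl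
        · exact npx rfl
        · exact npy rfl
      · rintro rfl
        rw [hAx] at hq'
        simp only [Finset.mem_insert, Finset.mem_singleton] at hq'
        rcases hq' with rfl | rfl
        · exact npv rfl
        · exact npz rfl
      · rintro rfl
        rw [hAy] at hq'
        simp only [Finset.mem_insert, Finset.mem_singleton] at hq'
        rcases hq' with rfl | rfl
        · exact npv rfl
        · exact npz rfl
      · rintro rfl
        rw [hAz] at hq'
        simp only [Finset.mem_insert, Finset.mem_singleton] at hq'
        rcases hq' with rfl | rfl
        · exact npx rfl
        · exact npy rfl
    obtain ⟨a, b, hab, hAp⟩ := Finset.card_eq_two.mp (cardA2 p).1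
    have haA : a ∈ A p 0 := by rw [hAp]; simp
    have hbA : b ∈ A p 0 := by rw [hAp]; simp
    have hsub3 : ({a, b} : Finset V) ⊆ Finset.univ \ insert p ({v, x, y, z} : Finset V) := by
      intro q hq
      simp only [Finset.mem_insert, Finset.mem_singleton] at hq
      rcases hq with rfl | rfl
      · exact Finset.mem_sdiff.mpr ⟨Finset.mem_univ _, claim _ haA⟩
      · exact Finset.mem_sdiff.mpr ⟨Finset.mem_univ _, claim _ hbA⟩
    have h1 : (Finset.univ \ insert p ({v, x, y, z} : Finset V)).card = 1 := by
      rw [Finset.card_sdiff_of_subset (Finset.subset_univ _), Finset.card_univ, hV6,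
        Finset.card_insert_of_notMem hpP, hPcard]
    have h2 : ({a, b} : Finset V).card = 2 := Finset.card_pair hab
    have := Finset.card_le_card hsub3
    omega
  · -- 6-cycle case
    have hP5 : ({v, x, y, z, w} : Finset V).card = 5 := by
      rw [Finset.card_insert_of_notMem (by simp [nvx, nvy, Ne.symm hzv, Ne.symm hwv]),
        Finset.card_insert_of_notMem (by simp [hxy, nxz, Ne.symm nwx]),
        Finset.card_insert_of_notMem (by simp [Ne.symm nzy, nyw]),
        Finset.card_insert_of_notMem (by simp [hzw]), Finset.card_singleton]
    have hScard : (Finset.univ \ ({v, x, y, z, w} : Finset V)).card = 1 := by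
      rw [Finset.card_sdiff_of_subset (Finset.subset_univ _), Finset.card_univ, hV6, hP5]
    obtain ⟨u, hS⟩ := Finset.card_eq_one.mp hScard
    have huS : u ∈ Finset.univ \ ({v, x, y, z, w} : Finset V) := by
      rw [hS]; exact Finset.mem_singleton_self u
    have hu5 : u ∉ ({v, x, y, z, w} : Finset V) := (Finset.mem_sdiff.mp huS).2
    have hufacts : u ≠ v ∧ u ≠ x ∧ u ≠ y ∧ u ≠ z ∧ u ≠ w := by
      simp only [Finset.mem_insert, Finset.mem_singleton, not_or] at hu5
      exact hu5
    obtain ⟨nuv, nux, nuy, nuz, nuw⟩ := hufacts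
    have enum : ∀ q : V, q = v ∨ q = x ∨ q = y ∨ q = z ∨ q = w ∨ q = u := by
      intro q
      by_cases hq : q ∈ ({v, x, y, z, w} : Finset V)
      · simp only [Finset.mem_insert, Finset.mem_singleton] at hq
        rcases hq with rfl | rfl | rfl | rfl | rfl
        · exact Or.inl rfl
        · exact Or.inr (Or.inl rfl)
        · exact Or.inr (Or.inr (Or.inl rfl))
        · exact Or.inr (Or.inr (Or.inr (Or.inl rfl)))
        · exact Or.inr (Or.inr (Or.inr (Or.inr (Or.inl rfl))))
      · have hq2 : q ∈ Finset.univ \ ({v, x, y, z, w} : Finset V) :=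
          Finset.mem_sdiff.mpr ⟨Finset.mem_univ _, hq⟩
        rw [hS, Finset.mem_singleton] at hq2
        exact Or.inr (Or.inr (Or.inr (Or.inr (Or.inr hq2))))
    have hxmz : x ∈ A z 0 := (symA z x 0).mpr hzmem
    obtain ⟨t, htx, hAz⟩ := pairmem (A z 0) x (cardA2 z).1 hxmz
    have htmem : t ∈ A z 0 := by rw [hAz]; simp
    obtain ⟨hzt, hczt⟩ := memA' _ _ _ htmem
    have ntv : t ≠ v := by
      rintro rfl
      have : z ∈ A t 0 := (symA z t 0).mp htmem
      rw [hAv] at this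
      simp only [Finset.mem_insert, Finset.mem_singleton] at this
      rcases this with rfl | rfl
      · exact nxz rfl
      · exact nzy rfl
    have nty : t ≠ y := by
      rintro rfl
      have : z ∈ A t 0 := (symA z t 0).mp htmem
      rw [hAy] at this
      simp only [Finset.mem_insert, Finset.mem_singleton] at this
      rcases this with rfl | rfl
      · exact hzv rfl
      · exact hzw rfl
    have ntz : t ≠ z := fun h => G.ne_of_adj hzt h.symm
    have htwu : t = w ∨ t = u := by
      rcases enum t with rfl | rfl | rfl | rfl | rfl | rfl
      · exact absurd rfl ntv
      · exact absurd rfl htx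
      · exact absurd rfl nty
      · exact absurd rfl ntz
      · exact Or.inl rfl
      · exact Or.inr rfl
    have hymw : y ∈ A w 0 := (symA y w 0).mp hwmem
    rcases htwu with rfl | rfl
    · -- t = w : C5 plus isolated u, contradiction via A u 0
      have hzmw : z ∈ A t 0 := (symA z t 0).mp htmem
      have hsub2 : ({y, z} : Finset V) ⊆ A t 0 :=
        Finset.insert_subset_iff.mpr ⟨hymw, Finset.singleton_subset_iff.mpr hzmw⟩
      have hAw : A t 0 = {y, z} := by
        refine (Finset.eq_of_subset_of_card_le hsub2 ?_).symm
        rw [(cardA2 t).1, Finset.card_pair (Ne.symm nzy)]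
      obtain ⟨a, ha⟩ := Finset.card_pos.mp
        (by rw [(cardA2 u).1]; norm_num : 0 < (A u 0).card)
      have hua : u ∈ A a 0 := (symA u a 0).mp ha
      have hadjua : G.Adj u a := ((memA u 0 a).mp ha).1
      rcases enum a with rfl | rfl | rfl | rfl | rfl | rfl
      · rw [hAv] at hua
        simp only [Finset.mem_insert, Finset.mem_singleton] at hua
        rcases hua with rfl | rfl
        · exact nux rfl
        · exact nuy rfl
      · rw [hAx] at hua
        simp only [Finset.mem_insert, Finset.mem_singleton] at hua
        rcases hua with rfl | rfl
        · exact nuv rfl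
        · exact nuz rfl
      · rw [hAy] at hua
        simp only [Finset.mem_insert, Finset.mem_singleton] at hua
        rcases hua with rfl | rfl
        · exact nuv rfl
        · exact nuw rfl
      · rw [hAz] at hua
        simp only [Finset.mem_insert, Finset.mem_singleton] at hua
        rcases hua with rfl | rfl
        · exact nux rfl
        · exact nuw rfl
      · rw [hAw] at hua
        simp only [Finset.mem_insert, Finset.mem_singleton] at hua
        rcases hua with rfl | rfl
        · exact nuy rfl
        · exact nuz rfl
      · exact G.ne_of_adj hadjua rfl
    · -- t = u : genuine C6, find the monochromatic triangle x y u
      have hczx : c s(z,x) = 0 := by rw [Sym2.eq_swap]; exact hcxz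
      obtain ⟨hxu, hcxu'⟩ := rule z x t (Ne.symm nxz) (G.ne_of_adj hzt) (Ne.symm nux)
        hxz.symm hzt (hczx.trans hczt.symm)
      have hcxu : c s(x,t) = 1 := f2' _ (by rwa [hczx] at hcxu')
      obtain ⟨s1, hs1y, hAw⟩ := pairmem (A w 0) y (cardA2 w).1 hymw
      have hs1mem : s1 ∈ A w 0 := by rw [hAw]; simp
      obtain ⟨hws1, hcws1⟩ := memA' _ _ _ hs1mem
      have ns1v : s1 ≠ v := by
        rintro rfl
        have hws : w ∈ A s1 0 := (symA w s1 0).mp hs1mem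
        rw [hAv] at hws
        simp only [Finset.mem_insert, Finset.mem_singleton] at hws
        rcases hws with rfl | rfl
        · exact nwx rfl
        · exact nyw rfl
      have ns1x : s1 ≠ x := by
        rintro rfl
        have hws : w ∈ A s1 0 := (symA w s1 0).mp hs1mem
        rw [hAx] at hws
        simp only [Finset.mem_insert, Finset.mem_singleton] at hws
        rcases hws with rfl | rfl
        · exact hwv rfl
        · exact hzw rfl
      have ns1z : s1 ≠ z := by
        rintro rfl
        have hws : w ∈ A s1 0 := (symA w s1 0).mp hs1mem
        rw [hAz] at hws
        simp only [Finset.mem_insert, Finset.mem_singleton] at hws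
        rcases hws with rfl | rfl
        · exact nwx rfl
        · exact nuw rfl
      have ns1w : s1 ≠ w := fun h => G.ne_of_adj hws1 h.symm
      have hs1t : s1 = t := by
        rcases enum s1 with rfl | rfl | rfl | rfl | rfl | rfl
        · exact absurd rfl ns1v
        · exact absurd rfl ns1x
        · exact absurd rfl hs1y
        · exact absurd rfl ns1z
        · exact absurd rfl ns1w
        · rfl
      subst hs1t
      have hcwy : c s(w,y) = 0 := by rw [Sym2.eq_swap]; exact hcyw
      obtain ⟨hyu, hcyu'⟩ := rule w y s1 (Ne.symm nyw) (G.ne_of_adj hws1) (Ne.symm nuy)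
        hyw.symm hws1 (hcwy.trans hcws1.symm)
      have hcyu : c s(y,s1) = 1 := f2' _ (by rwa [hcwy] at hcyu')
      exact mono x y s1 hxy (Ne.symm nux) (Ne.symm nuy) hxyadj hxu hyu
        (hcxy.trans hcxu.symm) (hcxy.trans hcyu.symm)
  
theorem stmt_4 {V : Type u} [Fintype V] [DecidableEq V] (G : SimpleGraph V) (n k : ℕ)
    (hconn : G.Connected) (hn : Fintype.card V = n) (hn6 : 6 ≤ n)
    (hk3 : 3 ≤ k) (hkn : k ≤ n) :
    3 ≤ G.rxk k := by
  classical
  unfold SimpleGraph.rxk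
  obtain ⟨T0, hT0tree, hT0verts⟩ := my_exists_tree_subgraph G hconn
  have hmem : Fintype.card (Sym2 V) ∈ {q | ∃ c : Sym2 V → Fin q, G.IsRainbowColoring k c} := by
    refine ⟨fun e => Fintype.equivFin (Sym2 V) e, fun S hS => ⟨T0, hT0tree, ?_, ?_⟩⟩
    · rw [hT0verts]; exact Set.subset_univ _
    · exact ((Fintype.equivFin (Sym2 V)).injective).injOn
  refine le_csInf ⟨_, hmem⟩ ?_
  rintro q ⟨c, hc⟩
  by_contra hlt
  push_neg at hlt
  have hq2 : q ≤ 2 := by omega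
  set c' : Sym2 V → Fin 2 := fun e => Fin.castLE hq2 (c e) with hc'def
  have hrb : ∀ S : Finset V, S.card = k → ∃ T : G.Subgraph,
      T.coe.IsTree ∧ ↑S ⊆ T.verts ∧ Set.InjOn c' T.edgeSet := by
    intro S hS
    obtain ⟨T, ht, hsub, hinj⟩ := hc S hS
    refine ⟨T, ht, hsub, fun a ha b hb hab => hinj ha hb ?_⟩
    have hval : ((c a : Fin q) : ℕ) = ((c b : Fin q) : ℕ) := by
      simpa [hc'def] using congrArg Fin.val hab
    exact Fin.ext hval
  have bound : ∀ T : G.Subgraph, T.coe.IsTree → Set.InjOn c' T.edgeSet →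
      T.verts.ncard = T.edgeSet.ncard + 1 ∧ T.edgeSet.ncard ≤ 2 := by
    intro T ht hi
    haveI : Fintype ↥T.verts := Set.Finite.fintype (Set.toFinite _)
    haveI : Fintype ↥T.coe.edgeSet := Set.Finite.fintype (Set.toFinite _)
    have h1 := ht.card_edgeFinset
    have himg : T.edgeSet.ncard = T.coe.edgeSet.ncard := by
      rw [← T.image_coe_edgeSet_coe]
      exact Set.ncard_image_of_injective _ (Sym2.map.injective Subtype.val_injective)
    have h2 : T.coe.edgeFinset.card = T.edgeSet.ncard := by
      rw [himg, edgeFinset, Set.ncard_eq_toFinset_card']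
    have h3 : Fintype.card ↥T.verts = T.verts.ncard := by
      rw [Set.ncard_eq_toFinset_card', Set.toFinset_card]
    have h4 : T.edgeSet.ncard ≤ 2 := by
      have h5 := Set.ncard_le_ncard_of_injOn c' (fun e _ => Set.mem_univ (c' e)) hi
        Set.finite_univ
      rwa [Set.ncard_univ, Nat.card_eq_fintype_card, Fintype.card_fin] at h5
    omega
  rcases Nat.lt_or_ge k 4 with hk4 | hk4
  · -- k = 3
    have hk : k = 3 := by omega
    have h6 : 6 ≤ Fintype.card V := by omega
    refine my_core G c' h6 ?_
    intro x y z hxy hxz hyz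
    have hScard : ({x, y, z} : Finset V).card = 3 := by
      rw [Finset.card_insert_of_notMem (by simp [hxy, hxz]),
        Finset.card_insert_of_notMem (by simp [hyz]), Finset.card_singleton]
    obtain ⟨T, ht, hsub, hinj⟩ := hrb {x, y, z} (by rw [hScard, hk])
    obtain ⟨hv1, he2⟩ := bound T ht hinj
    have h3 : ((↑({x, y, z} : Finset V)) : Set V).ncard = 3 := by
      rw [Set.ncard_coe_finset, hScard]
    have hEq : ((↑({x, y, z} : Finset V)) : Set V) = T.verts := by
      refine Set.eq_of_subset_of_ncard_le hsub ?_ (Set.toFinite _)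
      omega
    have hecard : T.edgeSet.ncard = 2 := by
      have : T.verts.ncard = 3 := by rw [← hEq, h3]
      omega
    obtain ⟨e1, e2, hne, hEset⟩ := Set.ncard_eq_two.mp hecard
    have hm1 : e1 ∈ T.edgeSet := by rw [hEset]; exact Set.mem_insert _ _
    have hm2 : e2 ∈ T.edgeSet := by rw [hEset]; exact Set.mem_insert_of_mem _ rfl
    refine ⟨e1, e2, hne, T.edgeSet_subset hm1, T.edgeSet_subset hm2, ?_, ?_,
      fun h => hne (hinj hm1 hm2 h)⟩
    · intro a ha
      have hav : a ∈ T.verts := T.mem_verts_of_mem_edge hm1 ha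
      rw [← hEq] at hav
      simpa using hav
    · intro a ha
      have hav : a ∈ T.verts := T.mem_verts_of_mem_edge hm2 ha
      rw [← hEq] at hav
      simpa using hav
  · -- k ≥ 4
    obtain ⟨S, _, hScard⟩ := Finset.exists_subset_card_eq
      (show k ≤ (Finset.univ : Finset V).card by rw [Finset.card_univ, hn]; exact hkn)
    obtain ⟨T, ht, hsub, hinj⟩ := hrb S hScard
    obtain ⟨hv1, he2⟩ := bound T ht hinj
    have : ((↑S : Set V)).ncard ≤ T.verts.ncard := Set.ncard_le_ncard hsub (Set.toFinite _)
    rw [Set.ncard_coe_finset, hScard] at this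
    omega
end

section
/- Let G be a connected graph of order n. Then rx_3(G) = 2 if and only if G = K_5, or G is a 2-connected graph of order 4, or G has order 3. -/
open SimpleGraph

universe u

/-- A graph is 2-connected: at least 3 vertices and deleting any vertex leaves it connected. -/
def SimpleGraph.TwoConnected {V : Type u} [Fintype V] (G : SimpleGraph V) : Prop :=
  3 ≤ Fintype.card V ∧ ∀ v : V, (G.induce ({v}ᶜ : Set V)).Connected

namespace RX3

variable {V : Type u}

/-- Center property: `x` is adjacent to both `y` and `z` with differently colored edges. -/
def CP (G : SimpleGraph V) (c : Sym2 V → Fin 2) (x y z : V) : Prop :=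
  G.Adj x y ∧ G.Adj x z ∧ c s(x, y) ≠ c s(x, z)

lemma CP.swap {G : SimpleGraph V} {c : Sym2 V → Fin 2} {x y z : V}
    (h : CP G c x y z) : CP G c x z y :=
  ⟨h.2.1, h.1, h.2.2.symm⟩

/-- Some vertex of the ordered triple is a center. -/
def P (G : SimpleGraph V) (c : Sym2 V → Fin 2) (a b d : V) : Prop :=
  CP G c a b d ∨ CP G c b a d ∨ CP G c d a b

lemma P_of_CP {G : SimpleGraph V} {c : Sym2 V → Fin 2} {x y z : V} (h : CP G c x y z) :
    P G c x y z ∧ P G c x z y ∧ P G c y x z ∧ P G c y z x ∧ P G c z x y ∧ P G c z y x :=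
  ⟨Or.inl h, Or.inl h.swap, Or.inr (Or.inl h), Or.inr (Or.inr h),
    Or.inr (Or.inl h.swap), Or.inr (Or.inr h.swap)⟩

lemma isAcyclic_of_edgeSet_subset_pair {W : Type*} (H : SimpleGraph W) (A B : Sym2 W)
    (h : H.edgeSet ⊆ {A, B}) : H.IsAcyclic := by
  intro v w hw
  have hlen := hw.three_le_length
  have hnodup : w.edges.Nodup := hw.edges_nodup
  have hlee : w.edges.length = w.length := Walk.length_edges w
  have hmem : ∀ e ∈ w.edges, e ∈ ({A, B} : Set (Sym2 W)) :=
    fun e he => h (Walk.edges_subset_edgeSet w he)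
  rcases hE : w.edges with _ | ⟨e₁, _ | ⟨e₂, _ | ⟨e₃, tl⟩⟩⟩ <;> rw [hE] at hlee <;>
    try (simp at hlee; omega)
  rw [hE] at hnodup hmem
  simp only [List.nodup_cons, List.mem_cons, not_or] at hnodup
  have h1 := hmem e₁ (by simp)
  have h2 := hmem e₂ (by simp)
  have h3 := hmem e₃ (by simp)
  simp only [Set.mem_insert_iff, Set.mem_singleton_iff] at h1 h2 h3
  obtain ⟨⟨h12, h13, -⟩, ⟨h23, -⟩, -⟩ := hnodup
  rcases h1 with rfl | rfl <;> rcases h2 with rfl | rfl <;> rcases h3 with rfl | rfl <;>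
    simp_all

lemma exists_tree_subgraph {G : SimpleGraph V} {c : Sym2 V → Fin 2} {x y z : V}
    (hxy : G.Adj x y) (hxz : G.Adj x z) (_hyz : y ≠ z) (hc : c s(x, y) ≠ c s(x, z)) :
    ∃ T : G.Subgraph, T.coe.IsTree ∧ T.verts = {x, y, z} ∧ Set.InjOn c T.edgeSet := by
  set T : G.Subgraph := G.subgraphOfAdj hxy ⊔ G.subgraphOfAdj hxz with hT
  have hverts : T.verts = {x, y, z} := by
    rw [hT, Subgraph.verts_sup, subgraphOfAdj_verts, subgraphOfAdj_verts]
    ext t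
    simp only [Set.mem_union, Set.mem_insert_iff, Set.mem_singleton_iff]
    tauto
  have hE : T.edgeSet = {s(x, y), s(x, z)} := by
    rw [hT, Subgraph.edgeSet_sup, edgeSet_subgraphOfAdj, edgeSet_subgraphOfAdj]
    exact Set.singleton_union
  have hxv : x ∈ T.verts := by rw [hverts]; exact Or.inl rfl
  have hyv : y ∈ T.verts := by rw [hverts]; exact Or.inr (Or.inl rfl)
  have hzv : z ∈ T.verts := by rw [hverts]; exact Or.inr (Or.inr rfl)
  refine ⟨T, ⟨?_, ?_⟩, hverts, ?_⟩
  · -- connected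
    have hcon : T.Connected := by
      refine Subgraph.connected_sup (Subgraph.subgraphOfAdj_connected hxy).preconnected (Subgraph.subgraphOfAdj_connected hxz).preconnected ⟨x, ?_⟩
      rw [Subgraph.verts_inf]
      exact ⟨Or.inl rfl, Or.inl rfl⟩
    exact hcon.coe
  · -- acyclic
    apply isAcyclic_of_edgeSet_subset_pair _ s((⟨x, hxv⟩ : T.verts), (⟨y, hyv⟩ : T.verts))
      s((⟨x, hxv⟩ : T.verts), (⟨z, hzv⟩ : T.verts))
    intro e he
    rw [Subgraph.edgeSet_coe] at he
    have he' : Sym2.map Subtype.val e ∈ T.edgeSet := he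
    rw [hE] at he'
    have hinj := Sym2.map.injective (Subtype.val_injective (p := fun t => t ∈ T.verts))
    rcases he' with h' | h'
    · left
      apply hinj
      rw [Sym2.map_pair_eq]
      exact h'
    · right
      apply hinj
      rw [Sym2.map_pair_eq]
      exact h'
  · -- InjOn
    rw [hE]
    intro e₁ h₁ e₂ h₂ hcc
    simp only [Set.mem_insert_iff, Set.mem_singleton_iff] at h₁ h₂
    rcases h₁ with rfl | rfl <;> rcases h₂ with rfl | rfl
    · rfl
    · exact absurd hcc hc
    · exact absurd hcc.symm hc
    · rfl


lemma finite_sym2 {W : Type*} [Finite W] : Finite (Sym2 W) := by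
  exact Finite.of_surjective _ Sym2.mk_surjective

lemma card_verts_lemma [Fintype V] {G : SimpleGraph V} {T : G.Subgraph}
    [Fintype T.verts] {S : Finset V} (hsub : (S : Set V) ⊆ T.verts) :
    S.card ≤ Fintype.card T.verts := by
  have h1 : (S : Set V).ncard ≤ T.verts.ncard := Set.ncard_le_ncard hsub (Set.toFinite _)
  rw [Set.ncard_coe_finset] at h1
  rwa [← Nat.card_coe_set_eq, Nat.card_eq_fintype_card] at h1

lemma two_edges [Fintype V] {G : SimpleGraph V} {T : G.Subgraph}
    (ht : T.coe.IsTree) {S : Finset V} (hsub : (S : Set V) ⊆ T.verts) (hS : 3 ≤ S.card) :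
    ∃ E₁ E₂, E₁ ∈ T.edgeSet ∧ E₂ ∈ T.edgeSet ∧ E₁ ≠ E₂ := by
  classical
  haveI : Fintype T.verts := T.verts.toFinite.fintype
  haveI : Finite (Sym2 T.verts) := finite_sym2
  haveI : Fintype T.coe.edgeSet := T.coe.edgeSet.toFinite.fintype
  have hc := ht.card_edgeFinset
  have h3 : 3 ≤ Fintype.card T.verts := le_trans hS (card_verts_lemma hsub)
  have h2 : 1 < T.coe.edgeFinset.card := by omega
  obtain ⟨e₁, he₁, e₂, he₂, hne⟩ := Finset.one_lt_card.mp h2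
  rw [mem_edgeFinset, Subgraph.edgeSet_coe] at he₁ he₂
  refine ⟨Sym2.map Subtype.val e₁, Sym2.map Subtype.val e₂, he₁, he₂, ?_⟩
  exact fun hcon =>
    hne (Sym2.map.injective (Subtype.val_injective (p := fun t => t ∈ T.verts)) hcon)

lemma sym2_cases {p q a b d : V} (hp : p = a ∨ p = b ∨ p = d) (hq : q = a ∨ q = b ∨ q = d)
    (hpq : p ≠ q) : s(p, q) = s(a, b) ∨ s(p, q) = s(a, d) ∨ s(p, q) = s(b, d) := by
  rcases hp with rfl | rfl | rfl <;> rcases hq with rfl | rfl | rfl <;>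
    simp_all [Sym2.eq_iff]

lemma centers_of_rainbow [Fintype V] [DecidableEq V] {G : SimpleGraph V} {c : Sym2 V → Fin 2}
    (h : G.IsRainbowColoring 3 c) {a b d : V} (hab : a ≠ b) (had : a ≠ d) (hbd : b ≠ d) :
    P G c a b d := by
  classical
  have hS : ({a, b, d} : Finset V).card = 3 := by
    rw [Finset.card_insert_of_notMem (by simp [hab, had]),
      Finset.card_insert_of_notMem (by simp [hbd]), Finset.card_singleton]
  obtain ⟨T, ht, hsub, hinj⟩ := h {a, b, d} hS
  haveI : Fintype T.verts := T.verts.toFinite.fintype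
  haveI : Finite (Sym2 T.verts) := finite_sym2
  haveI : Fintype T.coe.edgeSet := T.coe.edgeSet.toFinite.fintype
  have hc := ht.card_edgeFinset
  have h3 : 3 ≤ Fintype.card T.verts := le_trans hS.ge (card_verts_lemma hsub)
  -- at most two edges
  have hinj' : Set.InjOn (fun e => c (Sym2.map Subtype.val e)) (T.coe.edgeFinset : Set (Sym2 T.verts)) := by
    intro e₁ h₁ e₂ h₂ hcc
    rw [Finset.mem_coe, mem_edgeFinset, Subgraph.edgeSet_coe] at h₁ h₂
    exact Sym2.map.injective (Subtype.val_injective (p := fun t => t ∈ T.verts))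
      (hinj h₁ h₂ hcc)
  have hle : T.coe.edgeFinset.card ≤ 2 := by
    have := Finset.card_le_card_of_injOn (fun e => c (Sym2.map Subtype.val e))
      (fun e _ => Finset.mem_univ _) hinj'
    simpa using this
  have hvcard : Fintype.card T.verts = 3 := by omega
  -- vertex set is exactly S
  have hveq : ((({a, b, d} : Finset V)) : Set V) = T.verts := by
    apply Set.eq_of_subset_of_ncard_le hsub _ (Set.toFinite _)
    rw [Set.ncard_coe_finset, hS, ← Nat.card_coe_set_eq, Nat.card_eq_fintype_card, hvcard]
  -- two distinct edges
  obtain ⟨E₁, E₂, hE₁, hE₂, hne⟩ := two_edges ht hsub hS.ge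
  have hcol : c E₁ ≠ c E₂ := fun hcc => hne (hinj hE₁ hE₂ hcc)
  have hadjG : ∀ E ∈ T.edgeSet, ∀ p q : V, E = s(p, q) → G.Adj p q := by
    intro E hE p q hEpq
    subst hEpq
    exact T.adj_sub (Subgraph.mem_edgeSet.mp hE)
  have hmem3 : ∀ E ∈ T.edgeSet, E = s(a, b) ∨ E = s(a, d) ∨ E = s(b, d) := by
    intro E hE
    induction E with
    | _ p q =>
      have hAdj : T.Adj p q := Subgraph.mem_edgeSet.mp hE
      have hp : p ∈ T.verts := T.edge_vert hAdj
      have hq : q ∈ T.verts := T.edge_vert hAdj.symm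
      rw [← hveq] at hp hq
      simp only [Finset.coe_insert, Set.mem_insert_iff, Finset.coe_singleton,
        Set.mem_singleton_iff] at hp hq
      exact sym2_cases hp hq hAdj.ne
  have swap : ∀ p q : V, s(p, q) = s(q, p) := fun p q => Sym2.eq_swap
  rcases hmem3 E₁ hE₁ with rfl | rfl | rfl <;> rcases hmem3 E₂ hE₂ with rfl | rfl | rfl
  · exact absurd rfl hne
  · exact Or.inl ⟨hadjG _ hE₁ a b rfl, hadjG _ hE₂ a d rfl, hcol⟩
  · -- E₁ = s(a,b), E₂ = s(b,d) : center b
    refine Or.inr (Or.inl ⟨(hadjG _ hE₁ a b rfl).symm, hadjG _ hE₂ b d rfl, ?_⟩)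
    rw [swap b a]; exact hcol
  · exact Or.inl ⟨hadjG _ hE₂ a b rfl, hadjG _ hE₁ a d rfl, hcol.symm⟩
  · exact absurd rfl hne
  · -- E₁ = s(a,d), E₂ = s(b,d) : center d
    refine Or.inr (Or.inr ⟨(hadjG _ hE₁ a d rfl).symm, (hadjG _ hE₂ b d rfl).symm, ?_⟩)
    rw [swap d a, swap d b]; exact hcol
  · -- E₁ = s(b,d), E₂ = s(a,b) : center b
    refine Or.inr (Or.inl ⟨(hadjG _ hE₂ a b rfl).symm, hadjG _ hE₁ b d rfl, ?_⟩)
    rw [swap b a]; exact hcol.symm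
  · refine Or.inr (Or.inr ⟨(hadjG _ hE₂ a d rfl).symm, (hadjG _ hE₁ b d rfl).symm, ?_⟩)
    rw [swap d a, swap d b]; exact hcol.symm
  · exact absurd rfl hne

lemma rainbow_of_centers [DecidableEq V] {G : SimpleGraph V} {c : Sym2 V → Fin 2}
    (h : ∀ a b d : V, a ≠ b → a ≠ d → b ≠ d → P G c a b d) :
    G.IsRainbowColoring 3 c := by
  intro S hS
  obtain ⟨a, b, d, hab, had, hbd, rfl⟩ := Finset.card_eq_three.mp hS
  have hset : ((({a, b, d} : Finset V)) : Set V) = {a, b, d} := by simp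
  rcases h a b d hab had hbd with hCP | hCP | hCP
  · obtain ⟨T, ht, hv, hinj⟩ := exists_tree_subgraph hCP.1 hCP.2.1 hbd hCP.2.2
    exact ⟨T, ht, by rw [hset, hv], hinj⟩
  · obtain ⟨T, ht, hv, hinj⟩ := exists_tree_subgraph hCP.1 hCP.2.1 had hCP.2.2
    refine ⟨T, ht, ?_, hinj⟩
    rw [hset, hv]; intro t htm; simp only [Set.mem_insert_iff, Set.mem_singleton_iff] at *; tauto
  · obtain ⟨T, ht, hv, hinj⟩ := exists_tree_subgraph hCP.1 hCP.2.1 hab hCP.2.2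
    refine ⟨T, ht, ?_, hinj⟩
    rw [hset, hv]; intro t htm; simp only [Set.mem_insert_iff, Set.mem_singleton_iff] at *; tauto

/-- The set whose infimum is `rxk`. -/
def Q [DecidableEq V] (G : SimpleGraph V) : Set ℕ :=
  {q | ∃ c : Sym2 V → Fin q, G.IsRainbowColoring 3 c}

lemma rxk_eq_sInf [DecidableEq V] (G : SimpleGraph V) : G.rxk 3 = sInf (Q G) := rfl

lemma zero_not_mem [DecidableEq V] [Nonempty V] (G : SimpleGraph V) : 0 ∉ Q G := by
  rintro ⟨c, -⟩
  obtain ⟨v⟩ := ‹Nonempty V›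
  exact (c s(v, v)).elim0

lemma one_not_mem [Fintype V] [DecidableEq V] {G : SimpleGraph V}
    (h3 : 3 ≤ Fintype.card V) : 1 ∉ Q G := by
  rintro ⟨c, hc⟩
  obtain ⟨S, -, hS⟩ := Finset.exists_subset_card_eq (s := Finset.univ) (n := 3) (by simpa using h3)
  obtain ⟨T, ht, hsub, hinj⟩ := hc S hS
  obtain ⟨E₁, E₂, h1, h2, hne⟩ := two_edges ht hsub hS.ge
  exact hne (hinj h1 h2 (Subsingleton.elim _ _))

lemma rxk_eq_two [Fintype V] [DecidableEq V] {G : SimpleGraph V}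
    (h3 : 3 ≤ Fintype.card V) (h2 : 2 ∈ Q G) : G.rxk 3 = 2 := by
  haveI : Nonempty V := Fintype.card_pos_iff.mp (by omega)
  rw [rxk_eq_sInf]
  have hle : sInf (Q G) ≤ 2 := Nat.sInf_le h2
  have hmem := Nat.sInf_mem (⟨2, h2⟩ : (Q G).Nonempty)
  have : sInf (Q G) = 0 ∨ sInf (Q G) = 1 ∨ sInf (Q G) = 2 := by omega
  rcases this with h | h | h
  · rw [h] at hmem; exact absurd hmem (zero_not_mem G)
  · rw [h] at hmem; exact absurd hmem (one_not_mem h3)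
  · exact h

lemma of_rxk_eq_two [Fintype V] [DecidableEq V] {G : SimpleGraph V}
    (h : G.rxk 3 = 2) : 2 ∈ Q G ∧ 3 ≤ Fintype.card V := by
  rw [rxk_eq_sInf] at h
  have hne : (Q G).Nonempty := by
    by_contra hc
    rw [Set.not_nonempty_iff_eq_empty] at hc
    rw [hc, Nat.sInf_empty] at h
    omega
  have hmem := Nat.sInf_mem hne
  rw [h] at hmem
  refine ⟨hmem, ?_⟩
  by_contra hcard
  push_neg at hcard
  have h1 : 1 ∈ Q G := by
    refine ⟨fun _ => 0, fun S hS => absurd hS ?_⟩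
    have := Finset.card_le_univ S
    omega
  have := Nat.sInf_le h1
  omega

lemma induce_connected_of_center {G : SimpleGraph V} {s : Set V} {x y z : V}
    (hs : s = {x, y, z}) (hxy : G.Adj x y) (hxz : G.Adj x z) :
    (G.induce s).Connected := by
  subst hs
  have hx : x ∈ ({x, y, z} : Set V) := Or.inl rfl
  have key : ∀ t (ht : t ∈ ({x, y, z} : Set V)),
      (G.induce ({x, y, z} : Set V)).Reachable ⟨t, ht⟩ ⟨x, hx⟩ := by
    intro t ht
    obtain rfl | rfl | rfl := ht
    · exact Reachable.refl _
    · exact Adj.reachable (by simp only [comap_adj, Function.Embedding.coe_subtype]; exact hxy.symm)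
    · exact Adj.reachable (by simp only [comap_adj, Function.Embedding.coe_subtype]; exact hxz.symm)
  haveI : Nonempty ({x, y, z} : Set V) := ⟨⟨x, hx⟩⟩
  constructor
  rintro ⟨t, ht⟩ ⟨t', ht'⟩
  exact (key t ht).trans (key t' ht').symm

lemma twoConnected_of_rainbow [Fintype V] [DecidableEq V] {G : SimpleGraph V}
    {c : Sym2 V → Fin 2} (hc : G.IsRainbowColoring 3 c) (h4 : Fintype.card V = 4) :
    G.TwoConnected := by
  refine ⟨by omega, fun v => ?_⟩
  have hcard : (Finset.univ.erase v).card = 3 := by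
    rw [Finset.card_erase_of_mem (Finset.mem_univ v), Finset.card_univ, h4]
  obtain ⟨a, b, d, hab, had, hbd, heq⟩ := Finset.card_eq_three.mp hcard
  have hmem : ∀ t : V, t ≠ v ↔ (t = a ∨ t = b ∨ t = d) := by
    intro t
    constructor
    · intro h
      have : t ∈ Finset.univ.erase v := Finset.mem_erase.mpr ⟨h, Finset.mem_univ t⟩
      rw [heq] at this
      simpa using this
    · intro h
      have : t ∈ Finset.univ.erase v := by
        rw [heq]; simp only [Finset.mem_insert, Finset.mem_singleton]; exact h
      exact (Finset.mem_erase.mp this).1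
  have hset : ({v}ᶜ : Set V) = {a, b, d} := by
    ext t
    simp only [Set.mem_compl_iff, Set.mem_singleton_iff, Set.mem_insert_iff]
    exact hmem t
  rcases centers_of_rainbow hc hab had hbd with h | h | h
  · exact induce_connected_of_center hset h.1 h.2.1
  · refine induce_connected_of_center (x := b) (y := a) (z := d) ?_ h.1 h.2.1
    rw [hset]; ext t; simp only [Set.mem_insert_iff, Set.mem_singleton_iff]; tauto
  · refine induce_connected_of_center (x := d) (y := a) (z := b) ?_ h.1 h.2.1
    rw [hset]; ext t; simp only [Set.mem_insert_iff, Set.mem_singleton_iff]; tauto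

lemma complete_of_rainbow [Fintype V] [DecidableEq V] {G : SimpleGraph V}
    {c : Sym2 V → Fin 2} (hc : G.IsRainbowColoring 3 c) (h5 : 5 ≤ Fintype.card V) :
    ∀ u v : V, u ≠ v → G.Adj u v := by
  intro u v huv
  by_contra hna
  have hcard : 2 < (Finset.univ \ {u, v} : Finset V).card := by
    rw [Finset.card_sdiff_of_subset (Finset.subset_univ _), Finset.card_univ]
    have h2 : ({u, v} : Finset V).card ≤ 2 := Finset.card_insert_le u {v} |>.trans (by simp)
    omega
  obtain ⟨x, y, z, hx, hy, hz, hxy, hxz, hyz⟩ := Finset.two_lt_card_iff.mp hcard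
  simp only [Finset.mem_sdiff, Finset.mem_univ, true_and, Finset.mem_insert,
    Finset.mem_singleton, not_or] at hx hy hz
  have key : ∀ w, w ≠ u → w ≠ v → CP G c w u v := by
    intro w hwu hwv
    rcases centers_of_rainbow hc huv hwu.symm hwv.symm with h | h | h
    · exact absurd h.1 hna
    · exact absurd h.1.symm hna
    · exact h
  have swap : ∀ p q : V, s(p, q) = s(q, p) := fun _ _ => Sym2.eq_swap
  have hfin : ∀ a b x : Fin 2, a ≠ x → b ≠ x → a = b := by decide
  have main : ∀ p q : V, p ≠ u → p ≠ v → q ≠ u → q ≠ v → p ≠ q →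
      c s(p, u) = c s(q, u) → False := by
    intro p q hpu hpv hqu hqv hpq hco
    have hp := key p hpu hpv
    have hq := key q hqu hqv
    have hvv : c s(p, v) = c s(q, v) :=
      hfin _ _ _ hp.2.2.symm (by rw [hco]; exact hq.2.2.symm)
    have h1 : c s(p, q) ≠ c s(p, u) := by
      rcases centers_of_rainbow hc hpu.symm hqu.symm hpq with h | h | h
      · exact absurd (by rw [swap u p, swap u q, hco] : c s(u, p) = c s(u, q)) h.2.2
      · exact h.2.2.symm
      · rw [swap p q]; intro hh; exact h.2.2 (by rw [← hco, ← hh])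
    have h2 : c s(p, q) ≠ c s(p, v) := by
      rcases centers_of_rainbow hc hpv.symm hqv.symm hpq with h | h | h
      · exact absurd (by rw [swap v p, swap v q, hvv] : c s(v, p) = c s(v, q)) h.2.2
      · exact h.2.2.symm
      · rw [swap p q]; intro hh; exact h.2.2 (by rw [← hvv, ← hh])
    have hcon : ∀ a x y : Fin 2, a ≠ x → a ≠ y → x ≠ y → False := by decide
    exact hcon _ _ _ h1 h2 hp.2.2
  have htri : ∀ a b d : Fin 2, a = b ∨ a = d ∨ b = d := by decide
  rcases htri (c s(x, u)) (c s(y, u)) (c s(z, u)) with h | h | h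
  · exact main x y hx.1 hx.2 hy.1 hy.2 hxy h
  · exact main x z hx.1 hx.2 hz.1 hz.2 hxz h
  · exact main y z hy.1 hy.2 hz.1 hz.2 hyz h

lemma big_false [Fintype V] [DecidableEq V] {G : SimpleGraph V}
    {c : Sym2 V → Fin 2} (hc : G.IsRainbowColoring 3 c) (h6 : 6 ≤ Fintype.card V) :
    False := by
  haveI : Nonempty V := Fintype.card_pos_iff.mp (by omega)
  obtain ⟨u⟩ := ‹Nonempty V›
  have hs : (Finset.univ : Finset (Fin 2)).card * 2 < (Finset.univ.erase u).card := by
    rw [Finset.card_erase_of_mem (Finset.mem_univ u), Finset.card_univ, Finset.card_univ,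
      Fintype.card_fin]
    omega
  obtain ⟨y₀, -, hy₀⟩ := Finset.exists_lt_card_fiber_of_mul_lt_card_of_maps_to
    (f := fun w => c s(u, w)) (fun a _ => Finset.mem_univ _) hs
  obtain ⟨x, y, z, hx, hy, hz, hxy, hxz, hyz⟩ := Finset.two_lt_card_iff.mp hy₀
  simp only [Finset.mem_filter, Finset.mem_erase, Finset.mem_univ, true_and, and_true] at hx hy hz
  obtain ⟨hxu, hcx⟩ := hx
  obtain ⟨hyu, hcy⟩ := hy
  obtain ⟨hzu, hcz⟩ := hz
  have swap : ∀ p q : V, s(p, q) = s(q, p) := fun _ _ => Sym2.eq_swap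
  have key2 : ∀ p q : V, p ≠ u → q ≠ u → p ≠ q → c s(u, p) = c s(u, q) →
      c s(p, q) ≠ c s(u, p) := by
    intro p q hpu hqu hpq hco
    rcases centers_of_rainbow hc hpu.symm hqu.symm hpq with h | h | h
    · exact absurd hco h.2.2
    · intro hh; apply h.2.2; rw [swap p u, ← hh]
    · intro hh; apply h.2.2; rw [swap q u, swap q p, ← hco, ← hh]
  have e1 : c s(x, y) ≠ c s(u, x) := key2 x y hxu hyu hxy (by rw [hcx, hcy])
  have e2 : c s(x, z) ≠ c s(u, x) := key2 x z hxu hzu hxz (by rw [hcx, hcz])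
  have e3 : c s(y, z) ≠ c s(u, x) := by
    have h := key2 y z hyu hzu hyz (by rw [hcy, hcz])
    rwa [hcy, ← hcx] at h
  have hfin : ∀ a b x : Fin 2, a ≠ x → b ≠ x → a = b := by decide
  have q1 : c s(x, y) = c s(x, z) := hfin _ _ _ e1 e2
  have q2 : c s(x, y) = c s(y, z) := hfin _ _ _ e1 e3
  rcases centers_of_rainbow hc hxy hxz hyz with h | h | h
  · exact h.2.2 q1
  · apply h.2.2; rw [swap y x, ← q2]
  · apply h.2.2; rw [swap z x, swap z y, ← q1, ← q2]

lemma exists_adj_of_reachable {W : Type*} {G : SimpleGraph W} {u w : W}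
    (h : G.Reachable u w) (hne : u ≠ w) : ∃ t, G.Adj u t := by
  obtain ⟨p⟩ := h
  cases p with
  | nil => exact absurd rfl hne
  | cons hadj _ => exact ⟨_, hadj⟩

lemma exists_coloring_of_center [DecidableEq V] {G : SimpleGraph V} {x y z : V}
    (hxy : G.Adj x y) (hxz : G.Adj x z) (hyz : y ≠ z)
    (huniv : ∀ v : V, v = x ∨ v = y ∨ v = z) :
    ∃ c : Sym2 V → Fin 2, G.IsRainbowColoring 3 c := by
  set c : Sym2 V → Fin 2 := fun E => if E = s(x, y) then 0 else 1 with hcdef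
  have hCP : CP G c x y z := by
    refine ⟨hxy, hxz, ?_⟩
    have h0 : c s(x, y) = 0 := if_pos rfl
    have h1 : c s(x, z) = 1 := by
      apply if_neg
      rw [Sym2.eq_iff]
      rintro (⟨-, h⟩ | ⟨h, -⟩)
      · exact hyz h.symm
      · exact (G.ne_of_adj hxy) h
    rw [h0, h1]; decide
  obtain ⟨p1, p2, p3, p4, p5, p6⟩ := P_of_CP hCP
  refine ⟨c, rainbow_of_centers ?_⟩
  intro a b d hab had hbd
  obtain rfl | rfl | rfl := huniv a <;> obtain rfl | rfl | rfl := huniv b <;>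
    obtain rfl | rfl | rfl := huniv d <;> tauto

lemma coloring_of_card3 [Fintype V] [DecidableEq V] {G : SimpleGraph V}
    (hconn : G.Connected) (h3 : Fintype.card V = 3) :
    ∃ c : Sym2 V → Fin 2, G.IsRainbowColoring 3 c := by
  obtain ⟨a, b, d, hab, had, hbd, hU⟩ :=
    Finset.card_eq_three.mp (by rw [Finset.card_univ, h3] : (Finset.univ : Finset V).card = 3)
  have huniv : ∀ v : V, v = a ∨ v = b ∨ v = d := by
    intro v
    have h := Finset.mem_univ v
    rw [hU] at h
    simpa using h
  by_cases h1 : G.Adj a b <;> by_cases h2 : G.Adj a d <;> by_cases h3' : G.Adj b d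
  · exact exists_coloring_of_center h1 h2 hbd huniv
  · exact exists_coloring_of_center h1 h2 hbd huniv
  · -- Adj a b, ¬ Adj a d, Adj b d : center b
    refine exists_coloring_of_center h1.symm h3' had ?_
    intro v; rcases huniv v with h | h | h <;> tauto
  · -- Adj a b only : contradiction via d
    exfalso
    obtain ⟨t, ht⟩ := exists_adj_of_reachable (hconn.preconnected d a) had.symm
    rcases huniv t with h | h | h <;> rw [h] at ht
    · exact h2 ht.symm
    · exact h3' ht.symm
    · exact G.irrefl ht
  · -- ¬Adj a b, Adj a d, Adj b d : center d
    refine exists_coloring_of_center h2.symm h3'.symm hab ?_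
    intro v; rcases huniv v with h | h | h <;> tauto
  · -- Adj a d only : contradiction via b
    exfalso
    obtain ⟨t, ht⟩ := exists_adj_of_reachable (hconn.preconnected b a) hab.symm
    rcases huniv t with h | h | h <;> rw [h] at ht
    · exact h1 ht.symm
    · exact G.irrefl ht
    · exact h3' ht
  · -- Adj b d only : contradiction via a
    exfalso
    obtain ⟨t, ht⟩ := exists_adj_of_reachable (hconn.preconnected a b) hab
    rcases huniv t with h | h | h <;> rw [h] at ht
    · exact G.irrefl ht
    · exact h1 ht
    · exact h2 ht
  · exfalso
    obtain ⟨t, ht⟩ := exists_adj_of_reachable (hconn.preconnected a b) hab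
    rcases huniv t with h | h | h <;> rw [h] at ht
    · exact G.irrefl ht
    · exact h1 ht
    · exact h2 ht

lemma exists_coloring_of_cycle4 [DecidableEq V] {G : SimpleGraph V} {x₁ x₂ x₃ x₄ : V}
    (d12 : x₁ ≠ x₂) (d13 : x₁ ≠ x₃) (d14 : x₁ ≠ x₄) (d23 : x₂ ≠ x₃) (d24 : x₂ ≠ x₄)
    (d34 : x₃ ≠ x₄) (a12 : G.Adj x₁ x₂) (a23 : G.Adj x₂ x₃) (a34 : G.Adj x₃ x₄)
    (a41 : G.Adj x₄ x₁) (huniv : ∀ v : V, v = x₁ ∨ v = x₂ ∨ v = x₃ ∨ v = x₄) :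
    ∃ c : Sym2 V → Fin 2, G.IsRainbowColoring 3 c := by
  set c : Sym2 V → Fin 2 := fun E => if E = s(x₁, x₂) ∨ E = s(x₃, x₄) then 0 else 1 with hcdef
  have swap : ∀ p q : V, s(p, q) = s(q, p) := fun _ _ => Sym2.eq_swap
  have c12 : c s(x₁, x₂) = 0 := if_pos (Or.inl rfl)
  have c34 : c s(x₃, x₄) = 0 := if_pos (Or.inr rfl)
  have c21 : c s(x₂, x₁) = 0 := by rw [swap x₂ x₁]; exact c12
  have c43 : c s(x₄, x₃) = 0 := by rw [swap x₄ x₃]; exact c34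
  have c23 : c s(x₂, x₃) = 1 := by
    apply if_neg
    rintro (h | h) <;> rw [Sym2.eq_iff] at h <;>
      rcases h with ⟨e1, e2⟩ | ⟨e1, e2⟩
    · exact d12 e1.symm
    · exact d13 e2.symm
    · exact d24 (e2 ▸ e1)
    · exact d24 e1
  have c41' : c s(x₄, x₁) = 1 := by
    apply if_neg
    rintro (h | h) <;> rw [Sym2.eq_iff] at h <;>
      rcases h with ⟨e1, e2⟩ | ⟨e1, e2⟩
    · exact d14 e1.symm
    · exact d24 e1.symm
    · exact d34 e1.symm
    · exact d13 e2
  have c32 : c s(x₃, x₂) = 1 := by rw [swap x₃ x₂]; exact c23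
  have c14 : c s(x₁, x₄) = 1 := by rw [swap x₁ x₄]; exact c41'
  have hC1 : CP G c x₂ x₁ x₃ := ⟨a12.symm, a23, by rw [c21, c23]; decide⟩
  have hC2 : CP G c x₃ x₄ x₂ := ⟨a34, a23.symm, by rw [c34, c32]; decide⟩
  have hC3 : CP G c x₄ x₃ x₁ := ⟨a34.symm, a41, by rw [c43, c41']; decide⟩
  have hC4 : CP G c x₁ x₂ x₄ := ⟨a12, a41.symm, by rw [c12, c14]; decide⟩
  obtain ⟨p1, p2, p3, p4, p5, p6⟩ := P_of_CP hC1
  obtain ⟨q1, q2, q3, q4, q5, q6⟩ := P_of_CP hC2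
  obtain ⟨r1, r2, r3, r4, r5, r6⟩ := P_of_CP hC3
  obtain ⟨s1, s2, s3, s4, s5, s6⟩ := P_of_CP hC4
  refine ⟨c, rainbow_of_centers ?_⟩
  intro a b d hab had hbd
  obtain rfl | rfl | rfl | rfl := huniv a <;> obtain rfl | rfl | rfl | rfl := huniv b <;>
    obtain rfl | rfl | rfl | rfl := huniv d <;> tauto

def g5 : Fin 5 → Fin 5 → Fin 2 := fun i j =>
  if (i.val + 5 - j.val) % 5 = 1 ∨ (i.val + 5 - j.val) % 5 = 4 then 0 else 1

lemma g5_symm : ∀ i j, g5 i j = g5 j i := by decide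

lemma g5_key : ∀ a b d : Fin 5, a ≠ b → a ≠ d → b ≠ d →
    (g5 a b ≠ g5 a d ∨ g5 b a ≠ g5 b d ∨ g5 d a ≠ g5 d b) := by decide

lemma exists_coloring_of_K5 [DecidableEq V] {G : SimpleGraph V}
    (e : G ≃g (⊤ : SimpleGraph (Fin 5))) :
    ∃ c : Sym2 V → Fin 2, G.IsRainbowColoring 3 c := by
  have hinj : ∀ {u v : V}, e u = e v → u = v := fun h => e.toEquiv.injective h
  have hadj : ∀ u v : V, u ≠ v → G.Adj u v := by
    intro u v h
    exact e.map_adj_iff.mp ((top_adj _ _).mpr fun hh => h (hinj hh))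
  set f : Sym2 (Fin 5) → Fin 2 := Sym2.lift ⟨g5, g5_symm⟩ with hf
  have hfval : ∀ p q : V, f (Sym2.map e s(p, q)) = g5 (e p) (e q) := by
    intro p q
    rw [Sym2.map_pair_eq, hf, Sym2.lift_mk]
  refine ⟨fun E => f (Sym2.map e E), rainbow_of_centers ?_⟩
  intro a b d hab had hbd
  rcases g5_key (e a) (e b) (e d) (fun hh => hab (hinj hh)) (fun hh => had (hinj hh))
      (fun hh => hbd (hinj hh)) with h | h | h
  · exact Or.inl ⟨hadj a b hab, hadj a d had, by simpa only [hfval] using h⟩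
  · exact Or.inr (Or.inl ⟨hadj b a hab.symm, hadj b d hbd, by simpa only [hfval] using h⟩)
  · exact Or.inr (Or.inr ⟨hadj d a had.symm, hadj d b hbd.symm, by simpa only [hfval] using h⟩)

lemma cycle_of_twoConnected [Fintype V] [DecidableEq V] {G : SimpleGraph V}
    (h4 : Fintype.card V = 4) (htc : G.TwoConnected) :
    ∃ x₁ x₂ x₃ x₄ : V, x₁ ≠ x₂ ∧ x₁ ≠ x₃ ∧ x₁ ≠ x₄ ∧ x₂ ≠ x₃ ∧ x₂ ≠ x₄ ∧ x₃ ≠ x₄ ∧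
      G.Adj x₁ x₂ ∧ G.Adj x₂ x₃ ∧ G.Adj x₃ x₄ ∧ G.Adj x₄ x₁ ∧
      (∀ v : V, v = x₁ ∨ v = x₂ ∨ v = x₃ ∨ v = x₄) := by
  have e := Fintype.equivFinOfCardEq h4
  set v₁ := e.symm 0 with hv₁
  set v₂ := e.symm 1 with hv₂
  set v₃ := e.symm 2 with hv₃
  set v₄ := e.symm 3 with hv₄
  have hne : ∀ i j : Fin 4, i ≠ j → e.symm i ≠ e.symm j :=
    fun i j h hh => h (e.symm.injective hh)
  have d12 : v₁ ≠ v₂ := hne 0 1 (by decide)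
  have d13 : v₁ ≠ v₃ := hne 0 2 (by decide)
  have d14 : v₁ ≠ v₄ := hne 0 3 (by decide)
  have d23 : v₂ ≠ v₃ := hne 1 2 (by decide)
  have d24 : v₂ ≠ v₄ := hne 1 3 (by decide)
  have d34 : v₃ ≠ v₄ := hne 2 3 (by decide)
  have huniv : ∀ v : V, v = v₁ ∨ v = v₂ ∨ v = v₃ ∨ v = v₄ := by
    intro v
    have h4' : ∀ i : Fin 4, i = 0 ∨ i = 1 ∨ i = 2 ∨ i = 3 := by decide
    have hv : v = e.symm (e v) := (Equiv.symm_apply_apply e v).symm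
    rcases h4' (e v) with h | h | h | h <;> rw [h] at hv <;> tauto
  have hH : ∀ u p q : V, u ≠ p → u ≠ q → p ≠ q → ¬G.Adj u p → G.Adj u q := by
    intro u p q hup huq hpq hnup
    have hcompl : ({u, p, q}ᶜ : Finset V).card = 1 := by
      rw [Finset.card_compl, h4]
      have h3 : ({u, p, q} : Finset V).card = 3 := by
        rw [Finset.card_insert_of_notMem (by simp [hup, huq]),
          Finset.card_insert_of_notMem (by simp [hpq]), Finset.card_singleton]
      rw [h3]
    obtain ⟨w, hw⟩ := Finset.card_eq_one.mp hcompl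
    have hmem : ∀ t : V, t ≠ w ↔ (t = u ∨ t = p ∨ t = q) := by
      intro t
      constructor
      · intro h
        by_contra hh
        push_neg at hh
        have hmem2 : t ∈ ({u, p, q} : Finset V)ᶜ := by
          simp only [Finset.mem_compl, Finset.mem_insert, Finset.mem_singleton]
          tauto
        rw [hw] at hmem2
        exact h (Finset.mem_singleton.mp hmem2)
      · intro h hcon
        have hmem2 : w ∈ ({u, p, q} : Finset V)ᶜ := by
          rw [hw]; exact Finset.mem_singleton_self w
        rw [Finset.mem_compl] at hmem2
        apply hmem2
        rw [← hcon]
        simp only [Finset.mem_insert, Finset.mem_singleton]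
        exact h
    have hu' : u ∈ ({w}ᶜ : Set V) := by
      simp only [Set.mem_compl_iff, Set.mem_singleton_iff]
      exact (hmem u).mpr (Or.inl rfl)
    have hp' : p ∈ ({w}ᶜ : Set V) := by
      simp only [Set.mem_compl_iff, Set.mem_singleton_iff]
      exact (hmem p).mpr (Or.inr (Or.inl rfl))
    obtain ⟨t, ht⟩ := exists_adj_of_reachable
      ((htc.2 w).preconnected ⟨u, hu'⟩ ⟨p, hp'⟩)
      (fun hh => hup (congrArg Subtype.val hh))
    have htG : G.Adj u t.val := by
      simpa only [comap_adj, Function.Embedding.coe_subtype] using ht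
    have htw : (t : V) ≠ w := by
      simpa only [Set.mem_compl_iff, Set.mem_singleton_iff] using t.2
    rcases (hmem t.val).mp htw with h | h | h <;> rw [h] at htG
    · exact absurd htG G.irrefl
    · exact absurd htG hnup
    · exact htG
  have key : ∀ p q r s : V, p ≠ q → p ≠ r → p ≠ s → q ≠ r → q ≠ s → r ≠ s →
      (∀ t : V, t = p ∨ t = q ∨ t = r ∨ t = s) → ¬G.Adj p q →
      ∃ x₁ x₂ x₃ x₄ : V, x₁ ≠ x₂ ∧ x₁ ≠ x₃ ∧ x₁ ≠ x₄ ∧ x₂ ≠ x₃ ∧ x₂ ≠ x₄ ∧ x₃ ≠ x₄ ∧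
        G.Adj x₁ x₂ ∧ G.Adj x₂ x₃ ∧ G.Adj x₃ x₄ ∧ G.Adj x₄ x₁ ∧
        (∀ v : V, v = x₁ ∨ v = x₂ ∨ v = x₃ ∨ v = x₄) := by
    intro p q r s h1 h2 h3 h4' h5 h6 hu hnpq
    refine ⟨p, r, q, s, h2, h1, h3, h4'.symm, h6, h5, ?_, ?_, ?_, ?_, ?_⟩
    · exact hH p q r h1 h2 h4' hnpq
    · exact (hH q p r h1.symm h4' h2 (fun hh => hnpq hh.symm)).symm
    · exact hH q p s h1.symm h5 h3 (fun hh => hnpq hh.symm)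
    · exact (hH p q s h1 h3 h5 hnpq).symm
    · intro v; rcases hu v with h | h | h | h <;> tauto
  by_cases c12 : G.Adj v₁ v₂
  · by_cases c23 : G.Adj v₂ v₃
    · by_cases c34 : G.Adj v₃ v₄
      · by_cases c41 : G.Adj v₄ v₁
        · exact ⟨v₁, v₂, v₃, v₄, d12, d13, d14, d23, d24, d34, c12, c23, c34, c41, huniv⟩
        · refine key v₄ v₁ v₂ v₃ d14.symm d24.symm d34.symm d12 d13 d23 ?_ c41
          intro t; rcases huniv t with h | h | h | h <;> tauto
      · refine key v₃ v₄ v₁ v₂ d34 d13.symm d23.symm d14.symm d24.symm d12 ?_ c34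
        intro t; rcases huniv t with h | h | h | h <;> tauto
    · refine key v₂ v₃ v₄ v₁ d23 d24 d12.symm d34 d13.symm d14.symm ?_ c23
      intro t; rcases huniv t with h | h | h | h <;> tauto
  · exact key v₁ v₂ v₃ v₄ d12 d13 d14 d23 d24 d34 huniv c12
end RX3

theorem stmt_7 {V : Type u} [Fintype V] [DecidableEq V] (G : SimpleGraph V) (n : ℕ)
    (hconn : G.Connected) (hn : Fintype.card V = n) :
    G.rxk 3 = 2 ↔
      Nonempty (G ≃g (⊤ : SimpleGraph (Fin 5))) ∨
      (G.TwoConnected ∧ n = 4) ∨ n = 3 := by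
  subst hn
  constructor
  · intro hrx
    obtain ⟨h2Q, h3card⟩ := RX3.of_rxk_eq_two hrx
    obtain ⟨c, hc⟩ := h2Q
    rcases (by omega : Fintype.card V = 3 ∨ Fintype.card V = 4 ∨ Fintype.card V = 5 ∨
        6 ≤ Fintype.card V) with h | h | h | h
    · exact Or.inr (Or.inr h)
    · exact Or.inr (Or.inl ⟨RX3.twoConnected_of_rainbow hc h, h⟩)
    · left
      have hcomp := RX3.complete_of_rainbow hc (by omega)
      have hGtop : G = ⊤ := by
        ext u v
        simp only [top_adj]
        exact ⟨fun ha => G.ne_of_adj ha, fun hne => hcomp u v hne⟩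
      subst hGtop
      exact ⟨Iso.completeGraph (Fintype.equivFinOfCardEq h)⟩
    · exact (RX3.big_false hc h).elim
  · intro h
    rcases h with he | ⟨htc, hn4⟩ | hn3
    · obtain ⟨e⟩ := he
      have h5 : Fintype.card V = 5 := by
        rw [← Fintype.card_fin 5]
        exact Fintype.card_congr e.toEquiv
      exact RX3.rxk_eq_two (by omega) (RX3.exists_coloring_of_K5 e)
    · obtain ⟨x₁, x₂, x₃, x₄, d12, d13, d14, d23, d24, d34, a12, a23, a34, a41, hu⟩ :=
        RX3.cycle_of_twoConnected hn4 htc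
      exact RX3.rxk_eq_two (by omega)
        (RX3.exists_coloring_of_cycle4 d12 d13 d14 d23 d24 d34 a12 a23 a34 a41 hu)
    · exact RX3.rxk_eq_two (by omega) (RX3.coloring_of_card3 hconn hn3)
end

section
/- For every integer r ≥ 3, the 3-rainbow index of the complete bipartite graph K_{r,r} equals 3. -/
open SimpleGraph

universe u

namespace RX

variable {r : ℕ}

abbrev V (r : ℕ) := Fin r ⊕ Fin r

abbrev G (r : ℕ) : SimpleGraph (V r) := completeBipartiteGraph (Fin r) (Fin r)

/-- parity of a vertex -/
def par : V r → ZMod 2 := Sum.elim (fun _ => 0) (fun _ => 1)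

lemma par_adj {u v : V r} (h : (G r).Adj u v) : par u + 1 = par v := by
  rcases u with a | a <;> rcases v with b | b <;>
    simp_all [completeBipartiteGraph, par] <;> decide

lemma par_walk {u v : V r} (w : (G r).Walk u v) :
    par u + (w.length : ZMod 2) = par v := by
  induction w with
  | nil => simp
  | cons h p ih =>
    rw [SimpleGraph.Walk.length_cons]
    push_cast
    rw [← ih, ← par_adj h]
    ring

lemma acyclic_of_card_le (T : (G r).Subgraph) (hfin : T.edgeSet.Finite)
    (hcard : T.edgeSet.ncard ≤ 3) : T.coe.IsAcyclic := by
  intro v c hc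
  have h3 : 3 ≤ c.length := hc.three_le_length
  have heven : (2 : ℕ) ∣ c.length := by
    have hpw := par_walk (c.map T.hom)
    rw [SimpleGraph.Walk.length_map] at hpw
    have : ((c.length : ℕ) : ZMod 2) = 0 := by
      have := add_eq_left.mp hpw
      exact_mod_cast this
    exact (ZMod.natCast_eq_zero_iff _ 2).mp this
  -- length ≤ 3 via distinct edges
  have hnodup : (c.edges.map (Sym2.map (Subtype.val))).Nodup :=
    hc.edges_nodup.map (Sym2.map.injective Subtype.val_injective)
  have hsub : ↑(c.edges.map (Sym2.map (Subtype.val))).toFinset ⊆ T.edgeSet := by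
    intro e he
    simp only [List.coe_toFinset, List.mem_map, Set.mem_setOf_eq] at he
    obtain ⟨e', he', rfl⟩ := he
    have := c.edges_subset_edgeSet he'
    rw [SimpleGraph.Subgraph.edgeSet_coe] at this
    exact this
  have hlen : c.length ≤ 3 := by
    have h1 : (c.edges.map (Sym2.map (Subtype.val))).toFinset.card = c.length := by
      rw [List.toFinset_card_of_nodup hnodup, List.length_map, SimpleGraph.Walk.length_edges]
    calc c.length = ((c.edges.map (Sym2.map (Subtype.val))).toFinset : Set (Sym2 (V r))).ncard := by
            rw [Set.ncard_coe_finset, h1]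
      _ ≤ T.edgeSet.ncard := Set.ncard_le_ncard hsub hfin
      _ ≤ 3 := hcard
  omega

lemma adjLR (a x : Fin r) : (G r).Adj (Sum.inl a) (Sum.inr x) := by simp
lemma adjRL (x a : Fin r) : (G r).Adj (Sum.inr x) (Sum.inl a) := by simp

lemma path2_spec {u m v : V r} (h1 : (G r).Adj u m) (h2 : (G r).Adj m v) :
    ∃ T : (G r).Subgraph, T.coe.IsTree ∧ T.verts = {u, m, v} ∧
      T.edgeSet = {s(u, m), s(m, v)} := by
  refine ⟨(G r).subgraphOfAdj h1 ⊔ (G r).subgraphOfAdj h2, ?_, ?_, ?_⟩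
  · have hconn : ((G r).subgraphOfAdj h1 ⊔ (G r).subgraphOfAdj h2).Connected := by
      refine Subgraph.connected_sup (Subgraph.subgraphOfAdj_connected h1).preconnected (Subgraph.subgraphOfAdj_connected h2).preconnected ⟨m, ?_⟩
      rw [Subgraph.verts_inf]
      constructor <;> simp
    refine ⟨hconn.coe, acyclic_of_card_le _ ?_ ?_⟩ <;>
      rw [Subgraph.edgeSet_sup, edgeSet_subgraphOfAdj, edgeSet_subgraphOfAdj]
    · exact (Set.finite_singleton _).union (Set.finite_singleton _)
    · calc (({s(u,m)} : Set (Sym2 (V r))) ∪ {s(m,v)}).ncard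
          ≤ ({s(u,m)} : Set (Sym2 (V r))).ncard + ({s(m,v)} : Set (Sym2 (V r))).ncard :=
            Set.ncard_union_le _ _
        _ ≤ 3 := by rw [Set.ncard_singleton, Set.ncard_singleton]; try omega
  · rw [Subgraph.verts_sup, subgraphOfAdj_verts, subgraphOfAdj_verts]
    ext w; simp; try tauto
  · rw [Subgraph.edgeSet_sup, edgeSet_subgraphOfAdj, edgeSet_subgraphOfAdj]
    ext e; simp; try tauto

lemma path3_spec {u m v w : V r} (h1 : (G r).Adj u m) (h2 : (G r).Adj m v)
    (h3 : (G r).Adj v w) :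
    ∃ T : (G r).Subgraph, T.coe.IsTree ∧ T.verts = {u, m, v, w} ∧
      T.edgeSet = {s(u, m), s(m, v), s(v, w)} := by
  refine ⟨(G r).subgraphOfAdj h1 ⊔ (G r).subgraphOfAdj h2 ⊔ (G r).subgraphOfAdj h3, ?_, ?_, ?_⟩
  · have hconn : ((G r).subgraphOfAdj h1 ⊔ (G r).subgraphOfAdj h2
        ⊔ (G r).subgraphOfAdj h3).Connected := by
      refine Subgraph.connected_sup ?_ (Subgraph.subgraphOfAdj_connected h3).preconnected ⟨v, ?_⟩
      · refine (Subgraph.connected_sup (Subgraph.subgraphOfAdj_connected h1).preconnected (Subgraph.subgraphOfAdj_connected h2).preconnected ⟨m, ?_⟩).preconnected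
        rw [Subgraph.verts_inf]; constructor <;> simp
      · rw [Subgraph.verts_inf]
        constructor
        · rw [Subgraph.verts_sup]; right; simp
        · simp
    refine ⟨hconn.coe, acyclic_of_card_le _ ?_ ?_⟩ <;>
      rw [Subgraph.edgeSet_sup, Subgraph.edgeSet_sup,
        edgeSet_subgraphOfAdj, edgeSet_subgraphOfAdj, edgeSet_subgraphOfAdj]
    · exact ((Set.finite_singleton _).union (Set.finite_singleton _)).union
        (Set.finite_singleton _)
    · calc ((({s(u,m)} : Set (Sym2 (V r))) ∪ {s(m,v)}) ∪ {s(v,w)}).ncard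
          ≤ (({s(u,m)} : Set (Sym2 (V r))) ∪ {s(m,v)}).ncard
            + ({s(v,w)} : Set (Sym2 (V r))).ncard := Set.ncard_union_le _ _
        _ ≤ (({s(u,m)} : Set (Sym2 (V r)))).ncard + ({s(m,v)} : Set (Sym2 (V r))).ncard
            + ({s(v,w)} : Set (Sym2 (V r))).ncard :=
              Nat.add_le_add_right (Set.ncard_union_le _ _) _
        _ ≤ 3 := by rw [Set.ncard_singleton, Set.ncard_singleton, Set.ncard_singleton]; try omega
  · rw [Subgraph.verts_sup, Subgraph.verts_sup, subgraphOfAdj_verts, subgraphOfAdj_verts,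
      subgraphOfAdj_verts]
    ext z; simp; try tauto
  · rw [Subgraph.edgeSet_sup, Subgraph.edgeSet_sup, edgeSet_subgraphOfAdj,
      edgeSet_subgraphOfAdj, edgeSet_subgraphOfAdj]
    ext e; simp; try tauto

lemma star3_spec {m u v w : V r} (h1 : (G r).Adj m u) (h2 : (G r).Adj m v)
    (h3 : (G r).Adj m w) :
    ∃ T : (G r).Subgraph, T.coe.IsTree ∧ T.verts = {m, u, v, w} ∧
      T.edgeSet = {s(m, u), s(m, v), s(m, w)} := by
  refine ⟨(G r).subgraphOfAdj h1 ⊔ (G r).subgraphOfAdj h2 ⊔ (G r).subgraphOfAdj h3, ?_, ?_, ?_⟩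
  · have hconn : ((G r).subgraphOfAdj h1 ⊔ (G r).subgraphOfAdj h2
        ⊔ (G r).subgraphOfAdj h3).Connected := by
      refine Subgraph.connected_sup ?_ (Subgraph.subgraphOfAdj_connected h3).preconnected ⟨m, ?_⟩
      · refine (Subgraph.connected_sup (Subgraph.subgraphOfAdj_connected h1).preconnected (Subgraph.subgraphOfAdj_connected h2).preconnected ⟨m, ?_⟩).preconnected
        rw [Subgraph.verts_inf]; constructor <;> simp
      · rw [Subgraph.verts_inf]
        constructor
        · rw [Subgraph.verts_sup]; left; simp
        · simp
    refine ⟨hconn.coe, acyclic_of_card_le _ ?_ ?_⟩ <;>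
      rw [Subgraph.edgeSet_sup, Subgraph.edgeSet_sup,
        edgeSet_subgraphOfAdj, edgeSet_subgraphOfAdj, edgeSet_subgraphOfAdj]
    · exact ((Set.finite_singleton _).union (Set.finite_singleton _)).union
        (Set.finite_singleton _)
    · calc ((({s(m,u)} : Set (Sym2 (V r))) ∪ {s(m,v)}) ∪ {s(m,w)}).ncard
          ≤ (({s(m,u)} : Set (Sym2 (V r))) ∪ {s(m,v)}).ncard
            + ({s(m,w)} : Set (Sym2 (V r))).ncard := Set.ncard_union_le _ _
        _ ≤ (({s(m,u)} : Set (Sym2 (V r)))).ncard + ({s(m,v)} : Set (Sym2 (V r))).ncard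
            + ({s(m,w)} : Set (Sym2 (V r))).ncard :=
              Nat.add_le_add_right (Set.ncard_union_le _ _) _
        _ ≤ 3 := by rw [Set.ncard_singleton, Set.ncard_singleton, Set.ncard_singleton]; try omega
  · rw [Subgraph.verts_sup, Subgraph.verts_sup, subgraphOfAdj_verts, subgraphOfAdj_verts,
      subgraphOfAdj_verts]
    ext z; simp; try tauto
  · rw [Subgraph.edgeSet_sup, Subgraph.edgeSet_sup, edgeSet_subgraphOfAdj,
      edgeSet_subgraphOfAdj, edgeSet_subgraphOfAdj]
    ext e; simp; try tauto


def col (a x : Fin r) : Fin 3 := if x < a then 0 else if x = a then 1 else 2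

lemma col_lt {a x : Fin r} (h : x < a) : col a x = 0 := if_pos h
lemma col_self (a : Fin r) : col a a = 1 := by simp [col]
lemma col_gt {a x : Fin r} (h : a < x) : col a x = 2 := by
  rw [col, if_neg (asymm h), if_neg (ne_of_gt h)]

def cfAux : V r → V r → Fin 3
  | Sum.inl a, Sum.inr x => col a x
  | Sum.inr x, Sum.inl a => col a x
  | _, _ => 0

def cf : Sym2 (V r) → Fin 3 :=
  Sym2.lift ⟨cfAux, by rintro (a | a) (b | b) <;> rfl⟩

@[simp] lemma cf_lr (a x : Fin r) : cf s(Sum.inl a, Sum.inr x) = col a x := rfl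
@[simp] lemma cf_rl (x a : Fin r) : cf s(Sum.inr x, Sum.inl a) = col a x := rfl

lemma injOn_pair {W α : Type*} {c : Sym2 W → α} {e1 e2 : Sym2 W} (h : c e1 ≠ c e2) :
    Set.InjOn c {e1, e2} := by
  intro x hx y hy hxy
  simp only [Set.mem_insert_iff, Set.mem_singleton_iff] at hx hy
  rcases hx with rfl | rfl <;> rcases hy with rfl | rfl <;> simp_all

lemma injOn_triple {W α : Type*} {c : Sym2 W → α} {e1 e2 e3 : Sym2 W}
    (h12 : c e1 ≠ c e2) (h13 : c e1 ≠ c e3) (h23 : c e2 ≠ c e3) :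
    Set.InjOn c {e1, e2, e3} := by
  intro x hx y hy hxy
  simp only [Set.mem_insert_iff, Set.mem_singleton_iff] at hx hy
  rcases hx with rfl | rfl | rfl <;> rcases hy with rfl | rfl | rfl <;> simp_all

lemma perm_set {S S' : Set (V r)} (h : S ⊆ S')
    (H : ∃ T, (G r).IsRainbowSTree cf S' T) :
    ∃ T, (G r).IsRainbowSTree cf S T := by
  obtain ⟨T, ht, hs, hi⟩ := H; exact ⟨T, ht, h.trans hs, hi⟩

lemma case_lll_sorted {a b c : Fin r} (hab : a < b) (hbc : b < c) :
    ∃ T, (G r).IsRainbowSTree cf {Sum.inl a, Sum.inl b, Sum.inl c} T := by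
  obtain ⟨T, ht, hv, he⟩ := star3_spec (adjRL b a) (adjRL b b) (adjRL b c)
  refine ⟨T, ht, ?_, ?_⟩
  · rw [hv]; intro z hz
    simp only [Set.mem_insert_iff, Set.mem_singleton_iff] at hz ⊢; tauto
  · rw [he]
    exact injOn_triple (c := cf)
      (by rw [cf_rl, cf_rl, col_gt hab, col_self]; decide)
      (by rw [cf_rl, cf_rl, col_gt hab, col_lt hbc]; decide)
      (by rw [cf_rl, cf_rl, col_self, col_lt hbc]; decide)

lemma case_rrr_sorted {x y z : Fin r} (hxy : x < y) (hyz : y < z) :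
    ∃ T, (G r).IsRainbowSTree cf {Sum.inr x, Sum.inr y, Sum.inr z} T := by
  obtain ⟨T, ht, hv, he⟩ := star3_spec (adjLR y x) (adjLR y y) (adjLR y z)
  refine ⟨T, ht, ?_, ?_⟩
  · rw [hv]; intro w hw
    simp only [Set.mem_insert_iff, Set.mem_singleton_iff] at hw ⊢; tauto
  · rw [he]
    exact injOn_triple (c := cf)
      (by rw [cf_lr, cf_lr, col_lt hxy, col_self]; decide)
      (by rw [cf_lr, cf_lr, col_lt hxy, col_gt hyz]; decide)
      (by rw [cf_lr, cf_lr, col_self, col_gt hyz]; decide)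

lemma case_llr_sorted {a b x : Fin r} (hab : a < b) :
    ∃ T, (G r).IsRainbowSTree cf {Sum.inl a, Sum.inl b, Sum.inr x} T := by
  rcases lt_trichotomy x a with hxa | rfl | hax
  · obtain ⟨T, ht, hv, he⟩ := path3_spec (adjRL x a) (adjLR a b) (adjRL b b)
    refine ⟨T, ht, ?_, ?_⟩
    · rw [hv]; intro z hz
      simp only [Set.mem_insert_iff, Set.mem_singleton_iff] at hz ⊢; tauto
    · rw [he]
      exact injOn_triple (c := cf)
        (by rw [cf_rl, cf_lr, col_lt hxa, col_gt hab]; decide)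
        (by rw [cf_rl, cf_rl, col_lt hxa, col_self]; decide)
        (by rw [cf_lr, cf_rl, col_gt hab, col_self]; decide)
  · obtain ⟨T, ht, hv, he⟩ := path2_spec (adjLR x x) (adjRL x b)
    refine ⟨T, ht, ?_, ?_⟩
    · rw [hv]; intro z hz
      simp only [Set.mem_insert_iff, Set.mem_singleton_iff] at hz ⊢; tauto
    · rw [he]
      exact injOn_pair (c := cf)
        (by rw [cf_lr, cf_rl, col_self, col_lt hab]; decide)
  · rcases lt_trichotomy x b with hxb | rfl | hbx
    · obtain ⟨T, ht, hv, he⟩ := path2_spec (adjLR a x) (adjRL x b)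
      refine ⟨T, ht, ?_, ?_⟩
      · rw [hv]; intro z hz
        simp only [Set.mem_insert_iff, Set.mem_singleton_iff] at hz ⊢; tauto
      · rw [he]
        exact injOn_pair (c := cf)
          (by rw [cf_lr, cf_rl, col_gt hax, col_lt hxb]; decide)
    · obtain ⟨T, ht, hv, he⟩ := path2_spec (adjLR a x) (adjRL x x)
      refine ⟨T, ht, ?_, ?_⟩
      · rw [hv]; intro z hz
        simp only [Set.mem_insert_iff, Set.mem_singleton_iff] at hz ⊢; tauto
      · rw [he]
        exact injOn_pair (c := cf)
          (by rw [cf_lr, cf_rl, col_gt hax, col_self]; decide)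
    · obtain ⟨T, ht, hv, he⟩ := path3_spec (adjRL x a) (adjLR a a) (adjRL a b)
      refine ⟨T, ht, ?_, ?_⟩
      · rw [hv]; intro z hz
        simp only [Set.mem_insert_iff, Set.mem_singleton_iff] at hz ⊢; tauto
      · rw [he]
        exact injOn_triple (c := cf)
          (by rw [cf_rl, cf_lr, col_gt (hab.trans hbx), col_self]; decide)
          (by rw [cf_rl, cf_rl, col_gt (hab.trans hbx), col_lt hab]; decide)
          (by rw [cf_lr, cf_rl, col_self, col_lt hab]; decide)

lemma case_lrr_sorted {a x y : Fin r} (hxy : x < y) :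
    ∃ T, (G r).IsRainbowSTree cf {Sum.inl a, Sum.inr x, Sum.inr y} T := by
  rcases lt_trichotomy a x with hax | heq | hxa
  · obtain ⟨T, ht, hv, he⟩ := path3_spec (adjLR a x) (adjRL x y) (adjLR y y)
    refine ⟨T, ht, ?_, ?_⟩
    · rw [hv]; intro z hz
      simp only [Set.mem_insert_iff, Set.mem_singleton_iff] at hz ⊢; tauto
    · rw [he]
      exact injOn_triple (c := cf)
        (by rw [cf_lr, cf_rl, col_gt hax, col_lt hxy]; decide)
        (by rw [cf_lr, cf_lr, col_gt hax, col_self]; decide)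
        (by rw [cf_rl, cf_lr, col_lt hxy, col_self]; decide)
  · obtain ⟨T, ht, hv, he⟩ := path2_spec (adjRL x a) (adjLR a y)
    refine ⟨T, ht, ?_, ?_⟩
    · rw [hv]; intro z hz
      simp only [Set.mem_insert_iff, Set.mem_singleton_iff] at hz ⊢; tauto
    · rw [he]
      refine injOn_pair (c := cf) ?_
      rw [cf_rl, cf_lr, ← heq, col_self, col_gt (show a < y by rw [heq]; exact hxy)]
      decide
  · rcases lt_trichotomy a y with hay | rfl | hya
    · obtain ⟨T, ht, hv, he⟩ := path2_spec (adjRL x a) (adjLR a y)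
      refine ⟨T, ht, ?_, ?_⟩
      · rw [hv]; intro z hz
        simp only [Set.mem_insert_iff, Set.mem_singleton_iff] at hz ⊢; tauto
      · rw [he]
        exact injOn_pair (c := cf)
          (by rw [cf_rl, cf_lr, col_lt hxa, col_gt hay]; decide)
    · obtain ⟨T, ht, hv, he⟩ := path2_spec (adjRL x a) (adjLR a a)
      refine ⟨T, ht, ?_, ?_⟩
      · rw [hv]; intro z hz
        simp only [Set.mem_insert_iff, Set.mem_singleton_iff] at hz ⊢; tauto
      · rw [he]
        exact injOn_pair (c := cf)
          (by rw [cf_rl, cf_lr, col_lt hxa, col_self]; decide)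
    · obtain ⟨T, ht, hv, he⟩ := path3_spec (adjLR a x) (adjRL x x) (adjLR x y)
      refine ⟨T, ht, ?_, ?_⟩
      · rw [hv]; intro z hz
        simp only [Set.mem_insert_iff, Set.mem_singleton_iff] at hz ⊢; tauto
      · rw [he]
        exact injOn_triple (c := cf)
          (by rw [cf_lr, cf_rl, col_lt (hxy.trans hya), col_self]; decide)
          (by rw [cf_lr, cf_lr, col_lt (hxy.trans hya), col_gt hxy]; decide)
          (by rw [cf_rl, cf_lr, col_self, col_gt hxy]; decide)

lemma case_lll {a b c : Fin r} (hab : a ≠ b) (hac : a ≠ c) (hbc : b ≠ c) :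
    ∃ T, (G r).IsRainbowSTree cf {Sum.inl a, Sum.inl b, Sum.inl c} T := by
  rcases hab.lt_or_gt with h1 | h1 <;> rcases hac.lt_or_gt with h2 | h2 <;>
    rcases hbc.lt_or_gt with h3 | h3
  · exact case_lll_sorted h1 h3
  · exact perm_set (by intro z hz; simp only [Set.mem_insert_iff, Set.mem_singleton_iff] at hz ⊢; tauto) (case_lll_sorted h2 h3)
  · exact absurd (h2.trans (h1.trans h3)) (lt_irrefl _)
  · exact perm_set (by intro z hz; simp only [Set.mem_insert_iff, Set.mem_singleton_iff] at hz ⊢; tauto) (case_lll_sorted h2 h1)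
  · exact perm_set (by intro z hz; simp only [Set.mem_insert_iff, Set.mem_singleton_iff] at hz ⊢; tauto) (case_lll_sorted h1 h2)
  · exact absurd (h1.trans (h2.trans h3)) (lt_irrefl _)
  · exact perm_set (by intro z hz; simp only [Set.mem_insert_iff, Set.mem_singleton_iff] at hz ⊢; tauto) (case_lll_sorted h3 h2)
  · exact perm_set (by intro z hz; simp only [Set.mem_insert_iff, Set.mem_singleton_iff] at hz ⊢; tauto) (case_lll_sorted h3 h1)

lemma case_rrr {a b c : Fin r} (hab : a ≠ b) (hac : a ≠ c) (hbc : b ≠ c) :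
    ∃ T, (G r).IsRainbowSTree cf {Sum.inr a, Sum.inr b, Sum.inr c} T := by
  rcases hab.lt_or_gt with h1 | h1 <;> rcases hac.lt_or_gt with h2 | h2 <;>
    rcases hbc.lt_or_gt with h3 | h3
  · exact case_rrr_sorted h1 h3
  · exact perm_set (by intro z hz; simp only [Set.mem_insert_iff, Set.mem_singleton_iff] at hz ⊢; tauto) (case_rrr_sorted h2 h3)
  · exact absurd (h2.trans (h1.trans h3)) (lt_irrefl _)
  · exact perm_set (by intro z hz; simp only [Set.mem_insert_iff, Set.mem_singleton_iff] at hz ⊢; tauto) (case_rrr_sorted h2 h1)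
  · exact perm_set (by intro z hz; simp only [Set.mem_insert_iff, Set.mem_singleton_iff] at hz ⊢; tauto) (case_rrr_sorted h1 h2)
  · exact absurd (h1.trans (h2.trans h3)) (lt_irrefl _)
  · exact perm_set (by intro z hz; simp only [Set.mem_insert_iff, Set.mem_singleton_iff] at hz ⊢; tauto) (case_rrr_sorted h3 h2)
  · exact perm_set (by intro z hz; simp only [Set.mem_insert_iff, Set.mem_singleton_iff] at hz ⊢; tauto) (case_rrr_sorted h3 h1)

lemma case_llr {a b x : Fin r} (hab : a ≠ b) :
    ∃ T, (G r).IsRainbowSTree cf {Sum.inl a, Sum.inl b, Sum.inr x} T := by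
  rcases hab.lt_or_gt with h | h
  · exact case_llr_sorted h
  · exact perm_set (by intro z hz; simp only [Set.mem_insert_iff, Set.mem_singleton_iff] at hz ⊢; tauto) (case_llr_sorted (x := x) h)

lemma case_lrr {a : Fin r} {x y : Fin r} (hxy : x ≠ y) :
    ∃ T, (G r).IsRainbowSTree cf {Sum.inl a, Sum.inr x, Sum.inr y} T := by
  rcases hxy.lt_or_gt with h | h
  · exact case_lrr_sorted h
  · exact perm_set (by intro z hz; simp only [Set.mem_insert_iff, Set.mem_singleton_iff] at hz ⊢; tauto) (case_lrr_sorted (a := a) h)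

lemma cf_coloring : (G r).IsRainbowColoring 3 (cf (r := r)) := by
  intro S hS
  rw [Finset.card_eq_three] at hS
  obtain ⟨a, b, c, hab, hac, hbc, rfl⟩ := hS
  have hcoe : (↑({a, b, c} : Finset (V r)) : Set (V r)) = {a, b, c} := by simp
  rw [hcoe]
  rcases a with a | a <;> rcases b with b | b <;> rcases c with c | c
  · exact case_lll (by simpa using hab) (by simpa using hac) (by simpa using hbc)
  · exact case_llr (by simpa using hab)
  · exact perm_set (by intro z hz; simp only [Set.mem_insert_iff, Set.mem_singleton_iff] at hz ⊢; tauto)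
      (case_llr (x := b) (by simpa using hac))
  · exact perm_set (by intro z hz; simp only [Set.mem_insert_iff, Set.mem_singleton_iff] at hz ⊢; tauto)
      (case_lrr (a := a) (by simpa using hbc))
  · exact perm_set (by intro z hz; simp only [Set.mem_insert_iff, Set.mem_singleton_iff] at hz ⊢; tauto)
      (case_llr (x := a) (by simpa using hbc))
  · exact perm_set (by intro z hz; simp only [Set.mem_insert_iff, Set.mem_singleton_iff] at hz ⊢; tauto)
      (case_lrr (a := b) (Ne.symm (by simpa using hac)))
  · exact perm_set (by intro z hz; simp only [Set.mem_insert_iff, Set.mem_singleton_iff] at hz ⊢; tauto)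
      (case_lrr (a := c) (Ne.symm (by simpa using hab)))
  · exact case_rrr (by simpa using hab) (by simpa using hac) (by simpa using hbc)

lemma sideL {e : Sym2 (V r)} (he : e ∈ (G r).edgeSet) {v w : Fin r}
    (hv : Sum.inl v ∈ e) (hw : Sum.inl w ∈ e) : v = w := by
  induction e using Sym2.ind with
  | _ p q =>
    rw [SimpleGraph.mem_edgeSet] at he
    rcases p with p | p <;> rcases q with q | q <;>
      simp_all [completeBipartiteGraph, Sym2.mem_iff]

lemma exists_incident {T : (G r).Subgraph} (hconn : T.coe.Connected)
    {u w : V r} (hu : u ∈ T.verts) (hw : w ∈ T.verts) (hne : u ≠ w) :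
    ∃ e ∈ T.edgeSet, u ∈ e := by
  obtain ⟨p⟩ := hconn.preconnected ⟨u, hu⟩ ⟨w, hw⟩
  have hnil : ¬ p.Nil := SimpleGraph.Walk.not_nil_of_ne (by simp [Subtype.ext_iff]; exact hne)
  have hadj : T.coe.Adj ⟨u, hu⟩ (p.getVert 1) := SimpleGraph.Walk.adj_snd hnil
  have hadj' : T.Adj u ↑(p.getVert 1) := hadj
  exact ⟨s(u, ↑(p.getVert 1)), Subgraph.mem_edgeSet.mpr hadj', by simp⟩

lemma lower {q : ℕ} (hr3 : 3 ≤ r) (c : Sym2 (V r) → Fin q)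
    (hc : (G r).IsRainbowColoring 3 c) : 3 ≤ q := by
  by_contra hq
  push_neg at hq
  set a : Fin r := ⟨0, by omega⟩ with ha
  set b : Fin r := ⟨1, by omega⟩ with hb
  set d : Fin r := ⟨2, by omega⟩ with hd
  have hab : a ≠ b := by simp [ha, hb, Fin.ext_iff]
  have had : a ≠ d := by simp [ha, hd, Fin.ext_iff]
  have hbd : b ≠ d := by simp [hb, hd, Fin.ext_iff]
  have hcard : ({Sum.inl a, Sum.inl b, Sum.inl d} : Finset (V r)).card = 3 := by
    rw [Finset.card_insert_of_notMem (by simp [hab, had]),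
      Finset.card_insert_of_notMem (by simp [hbd]), Finset.card_singleton]
  obtain ⟨T, ht, hsub, hinj⟩ := hc _ hcard
  have hva : Sum.inl a ∈ T.verts := hsub (by simp)
  have hvb : Sum.inl b ∈ T.verts := hsub (by simp)
  have hvd : Sum.inl d ∈ T.verts := hsub (by simp)
  have hconn := ht.isConnected
  obtain ⟨e1, he1, hm1⟩ := exists_incident hconn hva hvb (by simp [hab])
  obtain ⟨e2, he2, hm2⟩ := exists_incident hconn hvb hvd (by simp [hbd])
  obtain ⟨e3, he3, hm3⟩ := exists_incident hconn hvd hva (by simp [had.symm])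
  have hG1 := T.edgeSet_subset he1
  have hG2 := T.edgeSet_subset he2
  have hG3 := T.edgeSet_subset he3
  have h12 : e1 ≠ e2 := fun h => hab (sideL hG1 hm1 (h ▸ hm2))
  have h13 : e1 ≠ e3 := fun h => had (sideL hG1 hm1 (h ▸ hm3))
  have h23 : e2 ≠ e3 := fun h => hbd (sideL hG2 hm2 (h ▸ hm3))
  have himg : (c '' T.edgeSet).Finite := Set.finite_univ.subset (Set.subset_univ _)
  have hfin : T.edgeSet.Finite := Set.Finite.of_finite_image himg hinj
  have hle : T.edgeSet.ncard ≤ q := by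
    calc T.edgeSet.ncard ≤ (Set.univ : Set (Fin q)).ncard :=
          Set.ncard_le_ncard_of_injOn c (fun _ _ => Set.mem_univ _) hinj Set.finite_univ
      _ = q := by simp [Set.ncard_univ]
  have h3le : 3 ≤ T.edgeSet.ncard := by
    have hss : ({e1, e2, e3} : Set (Sym2 (V r))) ⊆ T.edgeSet := by
      intro e he
      simp only [Set.mem_insert_iff, Set.mem_singleton_iff] at he
      rcases he with rfl | rfl | rfl <;> assumption
    have : ({e1, e2, e3} : Set (Sym2 (V r))).ncard = 3 :=
      Set.ncard_eq_three.mpr ⟨e1, e2, e3, h12, h13, h23, rfl⟩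
    rw [← this]
    exact Set.ncard_le_ncard hss hfin
  omega

end RX

theorem stmt_11 (r : ℕ) (hr : 3 ≤ r) :
    (completeBipartiteGraph (Fin r) (Fin r)).rxk 3 = 3 := by
  have hmem : 3 ∈ {q | ∃ c : Sym2 (RX.V r) → Fin q, (RX.G r).IsRainbowColoring 3 c} :=
    ⟨RX.cf, RX.cf_coloring⟩
  rw [SimpleGraph.rxk]
  refine le_antisymm (Nat.sInf_le hmem) (le_csInf ⟨3, hmem⟩ ?_)
  rintro q ⟨c, hc⟩
  exact RX.lower hr c hc
end

section
/- For integers r ≥ 2 and t ≥ 3, the 3-rainbow index of the complete t-partite graph with all parts of size r equals 3. -/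
open SimpleGraph

universe u

section Aux1
variable {V : Type u} {G : SimpleGraph V}

lemma list_len_le_three {X : Type*} {e1 e2 e3 : X} {l : List X} (h : l.Nodup)
    (hm : ∀ x ∈ l, x = e1 ∨ x = e2 ∨ x = e3) : l.length ≤ 3 := by
  match l with
  | [] => simp
  | [a] => simp
  | [a,b] => simp
  | [a,b,c] => simp
  | a::b::c::d::rest =>
    exfalso
    simp only [List.nodup_cons, List.mem_cons] at h
    have ha := hm a (by simp)
    have hb := hm b (by simp)
    have hc := hm c (by simp)
    have hd := hm d (by simp)
    rcases ha with rfl|rfl|rfl <;> rcases hb with rfl|rfl|rfl <;>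
      rcases hc with rfl|rfl|rfl <;> rcases hd with rfl|rfl|rfl <;> tauto

lemma subgraph_acyclic_of_small (T : G.Subgraph) (e1 e2 e3 : Sym2 V)
    (hE : ∀ a b, T.Adj a b → s(a,b) = e1 ∨ s(a,b) = e2 ∨ s(a,b) = e3)
    (hT : ∀ a b c, T.Adj a b → T.Adj b c → T.Adj a c → False) : T.coe.IsAcyclic := by
  intro v c hc
  have h3 := hc.three_le_length
  have hnodup : c.edges.Nodup := hc.isTrail.edges_nodup
  have hmap : (c.edges.map (Sym2.map (Subtype.val : T.verts → V))).Nodup :=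
    hnodup.map (Sym2.map.injective Subtype.val_injective)
  have hlen : (c.edges.map (Sym2.map (Subtype.val : T.verts → V))).length ≤ 3 := by
    refine list_len_le_three (e1 := e1) (e2 := e2) (e3 := e3) hmap ?_
    intro x hx
    simp only [List.mem_map] at hx
    obtain ⟨e, he, rfl⟩ := hx
    revert he
    induction e with
    | h a b =>
      intro he
      have hadj : T.coe.Adj a b := c.adj_of_mem_edges he
      simpa using hE a.val b.val hadj
  simp only [List.length_map, Walk.length_edges] at hlen
  have hlen3 : c.length = 3 := le_antisymm hlen h3
  clear h3 hnodup hmap hlen hc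
  cases c with
  | nil => simp at hlen3
  | cons h1 p =>
    cases p with
    | nil => simp at hlen3
    | cons h2 q =>
      cases q with
      | nil => simp at hlen3
      | cons h3 rr =>
        cases rr with
        | cons h4 s => simp [Nat.succ_eq_add_one] at hlen3
        | nil => exact hT _ _ _ h1 h2 h3.symm

end Aux1

section Aux2
variable {V : Type u} {G : SimpleGraph V} {α : Type*}

lemma rainbow_path3 (col : Sym2 V → α) {S : Set V} {x y z : V} (hS : S ⊆ {x, y, z})
    (hxy : G.Adj x y) (hyz : G.Adj y z) (hxz : x ≠ z)
    (hc : col s(x, y) ≠ col s(y, z)) :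
    ∃ T : G.Subgraph, G.IsRainbowSTree col S T := by
  refine ⟨G.subgraphOfAdj hxy ⊔ G.subgraphOfAdj hyz, ⟨?_, ?_⟩, ?_, ?_⟩
  · exact (Subgraph.connected_sup (Subgraph.subgraphOfAdj_connected hxy).preconnected
      (Subgraph.subgraphOfAdj_connected hyz).preconnected ⟨y, by simp⟩).coe
  · apply subgraph_acyclic_of_small _ s(x,y) s(y,z) s(y,z)
    · intro a b hab
      rcases hab with h | h <;> simp only [subgraphOfAdj_adj] at h <;> tauto
    · intro a b c h1 h2 h3
      have hxy' := hxy.ne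
      have hyz' := hyz.ne
      rcases h1 with h1 | h1 <;> rcases h2 with h2 | h2 <;> rcases h3 with h3 | h3 <;>
        simp only [subgraphOfAdj_adj, Sym2.eq, Sym2.rel_iff', Prod.mk.injEq, Prod.swap_prod_mk] at h1 h2 h3 <;>
        rcases h1 with ⟨h1a,h1b⟩|⟨h1a,h1b⟩ <;> rcases h2 with ⟨h2a,h2b⟩|⟨h2a,h2b⟩ <;>
        rcases h3 with ⟨h3a,h3b⟩|⟨h3a,h3b⟩ <;> simp_all
  · intro v hv
    rcases hS hv with rfl | rfl | rfl <;> simp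
  · have he : (G.subgraphOfAdj hxy ⊔ G.subgraphOfAdj hyz).edgeSet = {s(x,y), s(y,z)} := by
      rw [Subgraph.edgeSet_sup, edgeSet_subgraphOfAdj, edgeSet_subgraphOfAdj]
      rfl
    rw [he]
    intro e he1 f he2
    rcases he1 with rfl | rfl <;> rcases he2 with rfl | rfl <;> simp_all [eq_comm]

end Aux2

section Aux3
variable {V : Type u} {G : SimpleGraph V} {α : Type*}

lemma rainbow_path4 (col : Sym2 V → α) {S : Set V} {x y z w : V} (hS : S ⊆ {x, y, z, w})
    (hxy : G.Adj x y) (hyz : G.Adj y z) (hzw : G.Adj z w)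
    (hxz : x ≠ z) (hxw : x ≠ w) (hyw : y ≠ w)
    (c12 : col s(x, y) ≠ col s(y, z)) (c13 : col s(x, y) ≠ col s(z, w))
    (c23 : col s(y, z) ≠ col s(z, w)) :
    ∃ T : G.Subgraph, G.IsRainbowSTree col S T := by
  refine ⟨G.subgraphOfAdj hxy ⊔ G.subgraphOfAdj hyz ⊔ G.subgraphOfAdj hzw, ⟨?_, ?_⟩, ?_, ?_⟩
  · refine (Subgraph.connected_sup (Subgraph.connected_sup (Subgraph.subgraphOfAdj_connected hxy).preconnected
      (Subgraph.subgraphOfAdj_connected hyz).preconnected ⟨y, by simp⟩).preconnected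
      (Subgraph.subgraphOfAdj_connected hzw).preconnected ⟨z, by simp⟩).coe
  · apply subgraph_acyclic_of_small _ s(x,y) s(y,z) s(z,w)
    · intro a b hab
      rcases hab with (h | h) | h <;> simp only [subgraphOfAdj_adj] at h <;> tauto
    · intro a b c h1 h2 h3
      have hxy' := hxy.ne
      have hyz' := hyz.ne
      have hzw' := hzw.ne
      rcases h1 with (h1 | h1) | h1 <;> rcases h2 with (h2 | h2) | h2 <;>
        rcases h3 with (h3 | h3) | h3 <;>
        simp only [subgraphOfAdj_adj, Sym2.eq, Sym2.rel_iff', Prod.mk.injEq,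
          Prod.swap_prod_mk] at h1 h2 h3 <;>
        rcases h1 with ⟨h1a,h1b⟩|⟨h1a,h1b⟩ <;> rcases h2 with ⟨h2a,h2b⟩|⟨h2a,h2b⟩ <;>
        rcases h3 with ⟨h3a,h3b⟩|⟨h3a,h3b⟩ <;> simp_all
  · intro v hv
    rcases hS hv with rfl | rfl | rfl | rfl <;> simp
  · have he : (G.subgraphOfAdj hxy ⊔ G.subgraphOfAdj hyz ⊔ G.subgraphOfAdj hzw).edgeSet
        = {s(x,y), s(y,z), s(z,w)} := by
      rw [Subgraph.edgeSet_sup, Subgraph.edgeSet_sup, edgeSet_subgraphOfAdj,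
        edgeSet_subgraphOfAdj, edgeSet_subgraphOfAdj]
      ext e; simp [or_assoc]; tauto
    rw [he]
    intro e he1 f he2
    rcases he1 with rfl | rfl | rfl <;> rcases he2 with rfl | rfl | rfl <;>
      simp_all [eq_comm]

lemma rainbow_star (col : Sym2 V → α) {S : Set V} {h x y z : V} (hS : S ⊆ {x, y, z})
    (hhx : G.Adj h x) (hhy : G.Adj h y) (hhz : G.Adj h z)
    (hxy : x ≠ y) (hyz : y ≠ z) (hxz : x ≠ z)
    (c12 : col s(h, x) ≠ col s(h, y)) (c13 : col s(h, x) ≠ col s(h, z))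
    (c23 : col s(h, y) ≠ col s(h, z)) :
    ∃ T : G.Subgraph, G.IsRainbowSTree col S T := by
  refine ⟨G.subgraphOfAdj hhx ⊔ G.subgraphOfAdj hhy ⊔ G.subgraphOfAdj hhz, ⟨?_, ?_⟩, ?_, ?_⟩
  · refine (Subgraph.connected_sup (Subgraph.connected_sup (Subgraph.subgraphOfAdj_connected hhx).preconnected
      (Subgraph.subgraphOfAdj_connected hhy).preconnected ⟨h, by simp⟩).preconnected
      (Subgraph.subgraphOfAdj_connected hhz).preconnected ⟨h, by simp⟩).coe
  · apply subgraph_acyclic_of_small _ s(h,x) s(h,y) s(h,z)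
    · intro a b hab
      rcases hab with (hh | hh) | hh <;> simp only [subgraphOfAdj_adj] at hh <;> tauto
    · intro a b c h1 h2 h3
      have hhx' := hhx.ne
      have hhy' := hhy.ne
      have hhz' := hhz.ne
      rcases h1 with (h1 | h1) | h1 <;> rcases h2 with (h2 | h2) | h2 <;>
        rcases h3 with (h3 | h3) | h3 <;>
        simp only [subgraphOfAdj_adj, Sym2.eq, Sym2.rel_iff', Prod.mk.injEq,
          Prod.swap_prod_mk] at h1 h2 h3 <;>
        rcases h1 with ⟨h1a,h1b⟩|⟨h1a,h1b⟩ <;> rcases h2 with ⟨h2a,h2b⟩|⟨h2a,h2b⟩ <;>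
        rcases h3 with ⟨h3a,h3b⟩|⟨h3a,h3b⟩ <;> simp_all
  · intro v hv
    rcases hS hv with rfl | rfl | rfl <;> simp
  · have he : (G.subgraphOfAdj hhx ⊔ G.subgraphOfAdj hhy ⊔ G.subgraphOfAdj hhz).edgeSet
        = {s(h,x), s(h,y), s(h,z)} := by
      rw [Subgraph.edgeSet_sup, Subgraph.edgeSet_sup, edgeSet_subgraphOfAdj,
        edgeSet_subgraphOfAdj, edgeSet_subgraphOfAdj]
      ext e; simp [or_assoc]; tauto
    rw [he]
    intro e he1 f he2
    rcases he1 with rfl | rfl | rfl <;> rcases he2 with rfl | rfl | rfl <;>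
      simp_all [eq_comm]

end Aux3



def cmp3 {r : ℕ} (a b : Fin r) : Fin 3 := if a = b then 0 else if a < b then 1 else 2

@[simp] lemma cmp3_self {r : ℕ} (a : Fin r) : cmp3 a a = 0 := by simp [cmp3]
lemma cmp3_lt {r : ℕ} {a b : Fin r} (h : a < b) : cmp3 a b = 1 := by simp [cmp3, h, h.ne]
lemma cmp3_gt {r : ℕ} {a b : Fin r} (h : b < a) : cmp3 a b = 2 := by
  simp [cmp3, h.ne', not_lt_of_gt h]
lemma cmp3_eq_zero_iff {r : ℕ} {a b : Fin r} : cmp3 a b = 0 ↔ a = b := by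
  rcases lt_trichotomy a b with h|h|h
  · simp [cmp3_lt h, h.ne]
  · simp [h]
  · simp [cmp3_gt h, h.ne']
lemma cmp3_eq_one_iff {r : ℕ} {a b : Fin r} : cmp3 a b = 1 ↔ a < b := by
  rcases lt_trichotomy a b with h|h|h
  · simp [cmp3_lt h, h]
  · subst h; simp [lt_irrefl]
  · simp [cmp3_gt h, not_lt_of_gt h]
lemma cmp3_eq_two_iff {r : ℕ} {a b : Fin r} : cmp3 a b = 2 ↔ b < a := by
  rcases lt_trichotomy a b with h|h|h
  · simp [cmp3_lt h, not_lt_of_gt h]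
  · subst h; simp [lt_irrefl]
  · simp [cmp3_gt h, h]

def colFun (r t : ℕ) : Sym2 ((_ : Fin t) × Fin r) → Fin 3 :=
  Sym2.lift ⟨fun v w => if v.1 = w.1 then 0 else if v.1 < w.1 then cmp3 v.2 w.2 else cmp3 w.2 v.2,
    by
      intro v w
      rcases lt_trichotomy v.1 w.1 with h|h|h
      · simp [h, h.ne, h.ne', not_lt_of_gt h]
      · simp only []; rw [if_pos h, if_pos h.symm]
      · simp [h, h.ne, h.ne', not_lt_of_gt h]⟩

lemma col_lt {r t : ℕ} {i j : Fin t} (h : i < j) (a b : Fin r) :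
    colFun r t s(⟨i,a⟩, ⟨j,b⟩) = cmp3 a b := by
  simp [colFun, h, h.ne]

lemma col_gt {r t : ℕ} {i j : Fin t} (h : j < i) (a b : Fin r) :
    colFun r t s(⟨i,a⟩, ⟨j,b⟩) = cmp3 b a := by
  simp [colFun, h, h.ne', not_lt_of_gt h]

lemma cmg_adj {r t : ℕ} {u v : (_ : Fin t) × Fin r} :
    (completeMultipartiteGraph fun _ : Fin t => Fin r).Adj u v ↔ u.1 ≠ v.1 := Iff.rfl

lemma sne1 {r t : ℕ} {i j : Fin t} {a b : Fin r} (h : i ≠ j) :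
    (⟨i,a⟩ : (_ : Fin t) × Fin r) ≠ ⟨j,b⟩ := by
  intro hc; cases hc; exact h rfl

lemma sne2 {r t : ℕ} {i : Fin t} {a b : Fin r} (h : a ≠ b) :
    (⟨i,a⟩ : (_ : Fin t) × Fin r) ≠ ⟨i,b⟩ := by
  intro hc; cases hc; exact h rfl


section Cases

variable {r t : ℕ}

local notation "V'" => (_ : Fin t) × Fin r
local notation "G'" => completeMultipartiteGraph fun _ : Fin t => Fin r

lemma caseA (ht : 3 ≤ t) (i : Fin t) {a b d : Fin r} (hab : a < b) (hbd : b < d)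
    {S : Set V'} (hS : S ⊆ {⟨i,a⟩, ⟨i,b⟩, ⟨i,d⟩}) :
    ∃ T : (G' : SimpleGraph _).Subgraph, (G' : SimpleGraph _).IsRainbowSTree (colFun r t) S T := by
  have h0 : (0 : ℕ) < t := by omega
  have h1 : (1 : ℕ) < t := by omega
  set k : Fin t := if i = ⟨0, h0⟩ then ⟨1, h1⟩ else ⟨0, h0⟩ with hk
  have hki : k ≠ i := by
    by_cases h : i = ⟨0, h0⟩
    · rw [hk, if_pos h, h]
      intro hc; cases hc
    · rw [hk, if_neg h]
      exact fun hc => h hc.symm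
  refine rainbow_star (colFun r t) (h := (⟨k, b⟩ : V')) hS ?_ ?_ ?_
    (sne2 hab.ne) (sne2 hbd.ne) (sne2 (hab.trans hbd).ne) ?_ ?_ ?_ <;>
    try exact cmg_adj.mpr hki
  all_goals rcases hki.lt_or_gt with h|h
  · rw [col_lt h, col_lt h, cmp3_gt hab]
    intro hc; rw [cmp3_eq_zero_iff.mpr rfl] at hc; exact absurd hc (by decide)
  · rw [col_gt h, col_gt h, cmp3_lt hab]
    intro hc; rw [cmp3_eq_zero_iff.mpr rfl] at hc; exact absurd hc (by decide)
  · rw [col_lt h, col_lt h, cmp3_gt hab, cmp3_lt hbd]; decide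
  · rw [col_gt h, col_gt h, cmp3_lt hab, cmp3_gt hbd]; decide
  · rw [col_lt h, col_lt h, cmp3_lt hbd]
    intro hc; rw [cmp3_eq_zero_iff.mpr rfl] at hc; exact absurd hc.symm (by decide)
  · rw [col_gt h, col_gt h, cmp3_gt hbd]
    intro hc; rw [cmp3_eq_zero_iff.mpr rfl] at hc; exact absurd hc.symm (by decide)


lemma caseB (i j : Fin t) (hij : i ≠ j) {a b : Fin r} (hab : a < b) (d : Fin r)
    {S : Set V'} (hS : S ⊆ {⟨i,a⟩, ⟨i,b⟩, ⟨j,d⟩}) :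
    ∃ T : (G' : SimpleGraph _).Subgraph, (G' : SimpleGraph _).IsRainbowSTree (colFun r t) S T := by
  by_cases heq : colFun r t s(⟨i,a⟩, ⟨j,d⟩) = colFun r t s(⟨i,b⟩, ⟨j,d⟩)
  · -- need a 4-path
    have hd : d < a ∨ b < d := by
      rcases hij.lt_or_gt with h|h
      · rw [col_lt h, col_lt h] at heq
        rcases lt_trichotomy a d with h1|h1|h1
        · right
          rw [cmp3_lt h1] at heq
          exact cmp3_eq_one_iff.mp heq.symm
        · exfalso
          rw [← h1] at heq
          rw [cmp3_eq_zero_iff.mpr rfl] at heq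
          exact hab.ne' (cmp3_eq_zero_iff.mp heq.symm)
        · exact Or.inl h1
      · rw [col_gt h, col_gt h] at heq
        rcases lt_trichotomy a d with h1|h1|h1
        · right
          rw [cmp3_gt h1] at heq
          exact cmp3_eq_two_iff.mp heq.symm
        · exfalso
          rw [← h1] at heq
          rw [cmp3_eq_zero_iff.mpr rfl] at heq
          exact hab.ne (cmp3_eq_zero_iff.mp heq.symm)
        · exact Or.inl h1
    have hS4 : ∀ m : Fin r, S ⊆ {(⟨i,a⟩ : V'), ⟨j,m⟩, ⟨i,b⟩, ⟨j,d⟩} := by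
      intro m
      refine hS.trans ?_
      intro u hu
      simp only [Set.mem_insert_iff, Set.mem_singleton_iff] at hu ⊢
      tauto
    rcases hd with hd | hd
    · -- d < a : w = ⟨j,b⟩
      refine rainbow_path4 (colFun r t) (hS4 b)
        (cmg_adj.mpr hij) (cmg_adj.mpr (Ne.symm hij)) (cmg_adj.mpr hij)
        (sne2 hab.ne) (sne1 hij) (sne2 (hd.trans hab).ne') ?_ ?_ ?_ <;>
        rcases hij.lt_or_gt with h|h
      · rw [col_lt h, col_gt h, cmp3_lt hab, cmp3_self]; decide
      · rw [col_gt h, col_lt h, cmp3_gt hab, cmp3_self]; decide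
      · rw [col_lt h, col_lt h, cmp3_lt hab, cmp3_gt (hd.trans hab)]; decide
      · rw [col_gt h, col_gt h, cmp3_gt hab, cmp3_lt (hd.trans hab)]; decide
      · rw [col_gt h, col_lt h, cmp3_self, cmp3_gt (hd.trans hab)]; decide
      · rw [col_lt h, col_gt h, cmp3_self, cmp3_lt (hd.trans hab)]; decide
    · -- b < d : w = ⟨j,a⟩
      refine rainbow_path4 (colFun r t) (hS4 a)
        (cmg_adj.mpr hij) (cmg_adj.mpr (Ne.symm hij)) (cmg_adj.mpr hij)
        (sne2 hab.ne) (sne1 hij) (sne2 (hab.trans hd).ne) ?_ ?_ ?_ <;>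
        rcases hij.lt_or_gt with h|h
      · rw [col_lt h, col_gt h, cmp3_self, cmp3_gt hab]; decide
      · rw [col_gt h, col_lt h, cmp3_self, cmp3_lt hab]; decide
      · rw [col_lt h, col_lt h, cmp3_self, cmp3_lt hd]; decide
      · rw [col_gt h, col_gt h, cmp3_self, cmp3_gt hd]; decide
      · rw [col_gt h, col_lt h, cmp3_gt hab, cmp3_lt hd]; decide
      · rw [col_lt h, col_gt h, cmp3_lt hab, cmp3_gt hd]; decide
  · -- 2-path through ⟨j,d⟩
    have hS3 : S ⊆ {(⟨i,a⟩ : V'), ⟨j,d⟩, ⟨i,b⟩} := by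
      refine hS.trans ?_
      intro u hu
      simp only [Set.mem_insert_iff, Set.mem_singleton_iff] at hu ⊢
      tauto
    refine rainbow_path3 (colFun r t) hS3 (cmg_adj.mpr hij) (cmg_adj.mpr (Ne.symm hij))
      (sne2 hab.ne) ?_
    rw [Sym2.eq_swap (a := (⟨j,d⟩ : V'))]
    exact heq

lemma caseC (i j k : Fin t) (hij : i < j) (hjk : j < k) (hr : 2 ≤ r) (a b d : Fin r)
    {S : Set V'} (hS : S ⊆ {⟨i,a⟩, ⟨j,b⟩, ⟨k,d⟩}) :
    ∃ T : (G' : SimpleGraph _).Subgraph, (G' : SimpleGraph _).IsRainbowSTree (colFun r t) S T := by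
  have hik : i < k := hij.trans hjk
  by_cases h12 : cmp3 a b = cmp3 b d
  · by_cases h13 : cmp3 a b = cmp3 a d
    · -- all three colors equal
      rcases lt_trichotomy a b with hab|hab|hab
      · -- a < b, so b < d : path x w y z with w = ⟨k,a⟩
        have hbd : b < d := by
          rw [cmp3_lt hab] at h12; exact cmp3_eq_one_iff.mp h12.symm
        have hS4 : S ⊆ {(⟨i,a⟩ : V'), ⟨k,a⟩, ⟨j,b⟩, ⟨k,d⟩} := by
          refine hS.trans ?_
          intro u hu
          simp only [Set.mem_insert_iff, Set.mem_singleton_iff] at hu ⊢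
          tauto
        refine rainbow_path4 (colFun r t) hS4
          (cmg_adj.mpr hik.ne) (cmg_adj.mpr hjk.ne') (cmg_adj.mpr hjk.ne)
          (sne1 hij.ne) (sne1 hik.ne) (sne2 (hab.trans hbd).ne) ?_ ?_ ?_
        · rw [col_lt hik, col_gt hjk, cmp3_self, cmp3_gt hab]; decide
        · rw [col_lt hik, col_lt hjk, cmp3_self, cmp3_lt hbd]; decide
        · rw [col_gt hjk, col_lt hjk, cmp3_gt hab, cmp3_lt hbd]; decide
      · -- a = b = d : path x w z y with w = ⟨j,m⟩, m ≠ a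
        subst hab
        have had : a = d := by
          rw [cmp3_eq_zero_iff.mpr rfl] at h13
          exact cmp3_eq_zero_iff.mp h13.symm
        subst had
        have h0 : (0 : ℕ) < r := by omega
        have h1 : (1 : ℕ) < r := by omega
        set m : Fin r := if a = ⟨0, h0⟩ then ⟨1, h1⟩ else ⟨0, h0⟩ with hm
        have hma : m ≠ a := by
          by_cases h : a = ⟨0, h0⟩
          · rw [hm, if_pos h, h]
            intro hc; cases hc
          · rw [hm, if_neg h]
            exact fun hc => h hc.symm
        have hS4 : S ⊆ {(⟨i,a⟩ : V'), ⟨j,m⟩, ⟨k,a⟩, ⟨j,a⟩} := by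
          refine hS.trans ?_
          intro u hu
          simp only [Set.mem_insert_iff, Set.mem_singleton_iff] at hu ⊢
          tauto
        refine rainbow_path4 (colFun r t) hS4
          (cmg_adj.mpr hij.ne) (cmg_adj.mpr hjk.ne) (cmg_adj.mpr hjk.ne')
          (sne1 hik.ne) (sne1 hij.ne) (sne2 hma) ?_ ?_ ?_ <;>
          rcases hma.lt_or_gt with h|h
        · rw [col_lt hij, col_lt hjk, cmp3_gt h, cmp3_lt h]; decide
        · rw [col_lt hij, col_lt hjk, cmp3_lt h, cmp3_gt h]; decide
        · rw [col_lt hij, col_gt hjk, cmp3_gt h, cmp3_self]; decide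
        · rw [col_lt hij, col_gt hjk, cmp3_lt h, cmp3_self]; decide
        · rw [col_lt hjk, col_gt hjk, cmp3_lt h, cmp3_self]; decide
        · rw [col_lt hjk, col_gt hjk, cmp3_gt h, cmp3_self]; decide
      · -- b < a, so d < b : path x w y z with w = ⟨k,a⟩
        have hdb : d < b := by
          rw [cmp3_gt hab] at h12; exact cmp3_eq_two_iff.mp h12.symm
        have hS4 : S ⊆ {(⟨i,a⟩ : V'), ⟨k,a⟩, ⟨j,b⟩, ⟨k,d⟩} := by
          refine hS.trans ?_
          intro u hu
          simp only [Set.mem_insert_iff, Set.mem_singleton_iff] at hu ⊢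
          tauto
        refine rainbow_path4 (colFun r t) hS4
          (cmg_adj.mpr hik.ne) (cmg_adj.mpr hjk.ne') (cmg_adj.mpr hjk.ne)
          (sne1 hij.ne) (sne1 hik.ne) (sne2 (hdb.trans hab).ne') ?_ ?_ ?_
        · rw [col_lt hik, col_gt hjk, cmp3_self, cmp3_lt hab]; decide
        · rw [col_lt hik, col_lt hjk, cmp3_self, cmp3_gt hdb]; decide
        · rw [col_gt hjk, col_lt hjk, cmp3_lt hab, cmp3_gt hdb]; decide
    · -- 2-path with middle ⟨i,a⟩
      have hS3 : S ⊆ {(⟨j,b⟩ : V'), ⟨i,a⟩, ⟨k,d⟩} := by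
        refine hS.trans ?_
        intro u hu
        simp only [Set.mem_insert_iff, Set.mem_singleton_iff] at hu ⊢
        tauto
      refine rainbow_path3 (colFun r t) hS3 (cmg_adj.mpr hij.ne') (cmg_adj.mpr hik.ne)
        (sne1 hjk.ne) ?_
      rw [Sym2.eq_swap (a := (⟨j,b⟩ : V')), col_lt hij, col_lt hik]
      exact h13
  · -- 2-path with middle ⟨j,b⟩
    refine rainbow_path3 (colFun r t) hS (cmg_adj.mpr hij.ne) (cmg_adj.mpr hjk.ne)
      (sne1 hik.ne) ?_
    rw [col_lt hij, col_lt hjk]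
    exact h12


lemma vne {i : Fin t} {a b : Fin r} (h : (⟨i,a⟩ : V') ≠ ⟨i,b⟩) : a ≠ b :=
  fun hc => h (by rw [hc])

lemma exists_rainbow_tree (hr : 2 ≤ r) (ht : 3 ≤ t) {x y z : V'}
    (hxy : x ≠ y) (hxz : x ≠ z) (hyz : y ≠ z) {S : Set V'} (hS : S ⊆ {x, y, z}) :
    ∃ T : (G' : SimpleGraph _).Subgraph, (G' : SimpleGraph _).IsRainbowSTree (colFun r t) S T := by
  obtain ⟨i, a⟩ := x
  obtain ⟨j, b⟩ := y
  obtain ⟨k, d⟩ := z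
  have resub : ∀ u v w : V', ({(⟨i,a⟩ : V'), ⟨j,b⟩, ⟨k,d⟩} : Set V') ⊆ {u, v, w} →
      S ⊆ {u, v, w} := fun u v w h => hS.trans h
  rcases lt_trichotomy i j with hij|hij|hij
  · rcases lt_trichotomy j k with hjk|hjk|hjk
    · exact caseC i j k hij hjk hr a b d hS
    · subst hjk
      have hbd := vne hyz
      rcases hbd.lt_or_gt with h|h
      · exact caseB j i hij.ne' h a (resub _ _ _ (by intro u hu; simp at hu ⊢; tauto))
      · exact caseB j i hij.ne' h a (resub _ _ _ (by intro u hu; simp at hu ⊢; tauto))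
    · rcases lt_trichotomy i k with hik|hik|hik
      · exact caseC i k j hik hjk hr a d b (resub _ _ _ (by intro u hu; simp at hu ⊢; tauto))
      · subst hik
        have had := vne hxz
        rcases had.lt_or_gt with h|h
        · exact caseB i j hij.ne h b (resub _ _ _ (by intro u hu; simp at hu ⊢; tauto))
        · exact caseB i j hij.ne h b (resub _ _ _ (by intro u hu; simp at hu ⊢; tauto))
      · exact caseC k i j hik hij hr d a b (resub _ _ _ (by intro u hu; simp at hu ⊢; tauto))
  · subst hij
    rcases eq_or_ne i k with hik|hik
    · subst hik
      have hab := vne hxy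
      have had := vne hxz
      have hbd := vne hyz
      rcases hab.lt_or_gt with h1|h1 <;> rcases had.lt_or_gt with h2|h2 <;>
        rcases hbd.lt_or_gt with h3|h3
      · exact caseA ht i h1 h3 hS
      · exact caseA ht i h2 h3 (resub _ _ _ (by intro u hu; simp at hu ⊢; tauto))
      · exact absurd ((h1.trans h3).trans h2) (lt_irrefl _)
      · exact caseA ht i h2 h1 (resub _ _ _ (by intro u hu; simp at hu ⊢; tauto))
      · exact caseA ht i h1 h2 (resub _ _ _ (by intro u hu; simp at hu ⊢; tauto))
      · exact absurd ((h2.trans h3).trans h1) (lt_irrefl _)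
      · exact caseA ht i h3 h2 (resub _ _ _ (by intro u hu; simp at hu ⊢; tauto))
      · exact caseA ht i h3 h1 (resub _ _ _ (by intro u hu; simp at hu ⊢; tauto))
    · have hab := vne hxy
      rcases hab.lt_or_gt with h|h
      · exact caseB i k hik h d (resub _ _ _ (by intro u hu; simp at hu ⊢; tauto))
      · exact caseB i k hik h d (resub _ _ _ (by intro u hu; simp at hu ⊢; tauto))
  · rcases lt_trichotomy i k with hik|hik|hik
    · exact caseC j i k hij hik hr b a d (resub _ _ _ (by intro u hu; simp at hu ⊢; tauto))
    · subst hik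
      have had := vne hxz
      rcases had.lt_or_gt with h|h
      · exact caseB i j hij.ne' h b (resub _ _ _ (by intro u hu; simp at hu ⊢; tauto))
      · exact caseB i j hij.ne' h b (resub _ _ _ (by intro u hu; simp at hu ⊢; tauto))
    · rcases lt_trichotomy j k with hjk|hjk|hjk
      · exact caseC j k i hjk hik hr b d a (resub _ _ _ (by intro u hu; simp at hu ⊢; tauto))
      · subst hjk
        have hbd := vne hyz
        rcases hbd.lt_or_gt with h|h
        · exact caseB j i hij.ne h a (resub _ _ _ (by intro u hu; simp at hu ⊢; tauto))
        · exact caseB j i hij.ne h a (resub _ _ _ (by intro u hu; simp at hu ⊢; tauto))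
      · exact caseC k j i hjk hij hr d b a (resub _ _ _ (by intro u hu; simp at hu ⊢; tauto))

end Cases

section Aux9
variable {V : Type u} [Fintype V] [DecidableEq V] {G : SimpleGraph V}

lemma get_tree {q : ℕ} (hq : q ≤ 2) {c : Sym2 V → Fin q} (hc : G.IsRainbowColoring 3 c)
    {u v w : V} (huv : u ≠ v) (huw : u ≠ w) (hvw : v ≠ w) :
    ∃ T : G.Subgraph, T.verts = {u, v, w} ∧ T.edgeSet.ncard = 2 ∧
      Set.InjOn c T.edgeSet ∧ T.coe.Connected := by
  classical
  obtain ⟨T, htree, hsub, hinj⟩ := hc {u, v, w}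
    (Finset.card_eq_three.mpr ⟨u, v, w, huv, huw, hvw, rfl⟩)
  have hsub' : ({u, v, w} : Set V) ⊆ T.verts := by
    intro x hx
    apply hsub
    simp only [Finset.coe_insert, Finset.coe_singleton] at hx ⊢
    exact hx
  -- edge bound
  have hEfin : T.edgeSet.Finite := Set.toFinite _
  have hle : T.edgeSet.ncard ≤ q := by
    calc T.edgeSet.ncard = (c '' T.edgeSet).ncard := (Set.ncard_image_of_injOn hinj).symm
    _ ≤ (Set.univ : Set (Fin q)).ncard := Set.ncard_le_ncard (Set.subset_univ _) Set.finite_univ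
    _ = q := by rw [Set.ncard_univ, Nat.card_eq_fintype_card, Fintype.card_fin]
  -- tree edge/vertex relation
  have hVfin : T.verts.Finite := Set.toFinite _
  have hcard : Fintype.card T.verts = T.coe.edgeFinset.card + 1 := htree.card_edgeFinset.symm
  have hcoeE : T.coe.edgeSet.ncard = T.edgeSet.ncard := by
    rw [← T.image_coe_edgeSet_coe]
    exact (Set.ncard_image_of_injective _ (Sym2.map.injective Subtype.val_injective)).symm
  have hEcard : T.coe.edgeSet.ncard = T.coe.edgeFinset.card := by
    simp [Set.ncard_eq_toFinset_card', edgeFinset]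
  have hvcard : T.verts.ncard = Fintype.card T.verts := by
    rw [Set.ncard_eq_toFinset_card']
    exact Set.toFinset_card _
  have hverts_card : T.verts.ncard = T.edgeSet.ncard + 1 := by
    rw [hvcard, hcard, ← hEcard, hcoeE]
  have h3 : ({u, v, w} : Set V).ncard = 3 := by
    rw [Set.ncard_insert_of_notMem (by simp [huv, huw]) (Set.toFinite _),
      Set.ncard_insert_of_notMem (by simp [hvw]) (Set.toFinite _), Set.ncard_singleton]
  have hveq : ({u, v, w} : Set V) = T.verts := by
    apply Set.eq_of_subset_of_ncard_le hsub' _ hVfin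
    omega
  refine ⟨T, hveq.symm, ?_, hinj, htree.isConnected⟩
  have : T.verts.ncard = 3 := by rw [← hveq]; exact h3
  omega

lemma neighbor_in_tree {T : G.Subgraph} (hconn : T.coe.Connected)
    {u w : V} (hu : u ∈ T.verts) (hw : w ∈ T.verts) (huw : u ≠ w) :
    ∃ x : V, x ∈ T.verts ∧ T.Adj u x := by
  obtain ⟨p⟩ := hconn ⟨u, hu⟩ ⟨w, hw⟩
  cases p with
  | nil => exact absurd rfl huw
  | @cons _ b _ h p' =>
    exact ⟨b.val, b.property, h⟩

lemma fact1 {q : ℕ} (hq : q ≤ 2) {c : Sym2 V → Fin q} (hc : G.IsRainbowColoring 3 c)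
    {u v w : V} (huv : u ≠ v) (huw : u ≠ w) (hvw : v ≠ w)
    (hGuv : ¬ G.Adj u v) : c s(u, w) ≠ c s(v, w) := by
  obtain ⟨T, hverts, hE2, hinj, hconn⟩ := get_tree hq hc huv huw hvw
  have hadj_uw : T.Adj u w := by
    obtain ⟨x, hx, hadj⟩ := neighbor_in_tree hconn (by rw [hverts]; simp)
      (by rw [hverts]; simp) huw
    rw [hverts] at hx
    rcases hx with rfl | rfl | rfl
    · exact absurd (T.adj_sub hadj) (G.irrefl)
    · exact absurd (T.adj_sub hadj) hGuv
    · exact hadj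
  have hadj_vw : T.Adj v w := by
    obtain ⟨x, hx, hadj⟩ := neighbor_in_tree hconn (show v ∈ T.verts by rw [hverts]; simp)
      (show w ∈ T.verts by rw [hverts]; simp) hvw
    rw [hverts] at hx
    rcases hx with rfl | rfl | rfl
    · exact absurd (T.adj_sub hadj) (fun h => hGuv h.symm)
    · exact absurd (T.adj_sub hadj) (G.irrefl)
    · exact hadj
  intro hcc
  have := hinj (Subgraph.mem_edgeSet.mpr hadj_uw) (Subgraph.mem_edgeSet.mpr hadj_vw) hcc
  simp only [Sym2.eq, Sym2.rel_iff', Prod.mk.injEq, Prod.swap_prod_mk] at this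
  rcases this with ⟨h1, h2⟩ | ⟨h1, h2⟩
  · exact huv h1
  · exact huw h1

lemma fact2 {q : ℕ} (hq : q ≤ 2) {c : Sym2 V → Fin q} (hc : G.IsRainbowColoring 3 c)
    {u v w : V} (huv : u ≠ v) (huw : u ≠ w) (hvw : v ≠ w) :
    ¬ (c s(u, v) = c s(v, w) ∧ c s(v, w) = c s(u, w)) := by
  rintro ⟨hc1, hc2⟩
  obtain ⟨T, hverts, hE2, hinj, hconn⟩ := get_tree hq hc huv huw hvw
  obtain ⟨e, f, hef, hEset⟩ := Set.ncard_eq_two.mp hE2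
  have hmem : ∀ g ∈ T.edgeSet, g = s(u,v) ∨ g = s(v,w) ∨ g = s(u,w) := by
    intro g hg
    induction g with
    | h a b =>
      have hadj : T.Adj a b := hg
      have ha : a ∈ T.verts := T.edge_vert hadj
      have hb : b ∈ T.verts := T.edge_vert hadj.symm
      have hne : a ≠ b := (T.adj_sub hadj).ne
      rw [hverts] at ha hb
      rcases ha with rfl | rfl | rfl <;> rcases hb with rfl | rfl | rfl <;>
        simp_all [Sym2.eq_swap]
  have hvalall : ∀ g ∈ T.edgeSet, c g = c s(u,v) := by
    intro g hg
    rcases hmem g hg with rfl | rfl | rfl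
    · rfl
    · exact hc1.symm
    · exact (hc1.trans hc2).symm
  have : c e = c f := by
    rw [hvalall e (by rw [hEset]; simp), hvalall f (by rw [hEset]; simp)]
  exact hef (hinj (by rw [hEset]; simp) (by rw [hEset]; simp) this)

end Aux9


set_option maxHeartbeats 1000000 in
lemma two_color_key' : ∀ f g h : Fin 2 → Fin 2 → Fin 2,
    ¬(∀ d, f 0 d ≠ f 1 d) ∨ ¬(∀ e, f e 0 ≠ f e 1) ∨
    ¬(∀ d, g 0 d ≠ g 1 d) ∨ ¬(∀ e, g e 0 ≠ g e 1) ∨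
    ¬(∀ d, h 0 d ≠ h 1 d) ∨ ¬(∀ e, h e 0 ≠ h e 1) ∨
    ∃ x y z, f x y = g y z ∧ g y z = h x z := by decide
lemma two_color_key (f g h : Fin 2 → Fin 2 → Fin 2)
    (hf : ∀ d, f 0 d ≠ f 1 d) (hf' : ∀ e, f e 0 ≠ f e 1)
    (hg : ∀ d, g 0 d ≠ g 1 d) (hg' : ∀ e, g e 0 ≠ g e 1)
    (hh : ∀ d, h 0 d ≠ h 1 d) (hh' : ∀ e, h e 0 ≠ h e 1) :
    ∃ x y z, f x y = g y z ∧ g y z = h x z := by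
  rcases two_color_key' f g h with H|H|H|H|H|H|H
  · exact absurd hf H
  · exact absurd hf' H
  · exact absurd hg H
  · exact absurd hg' H
  · exact absurd hh H
  · exact absurd hh' H
  · exact H


theorem stmt_12 (r t : ℕ) (hr : 2 ≤ r) (ht : 3 ≤ t) :
    (completeMultipartiteGraph (fun _ : Fin t => Fin r)).rxk 3 = 3 := by
  have mem3 : 3 ∈ {q | ∃ c : Sym2 ((_ : Fin t) × Fin r) → Fin q,
      (completeMultipartiteGraph (fun _ : Fin t => Fin r)).IsRainbowColoring 3 c} := by
    refine ⟨colFun r t, ?_⟩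
    intro S hS3
    obtain ⟨x, y, z, hxy, hxz, hyz, hSeq⟩ := Finset.card_eq_three.mp hS3
    have hsub : (↑S : Set ((_ : Fin t) × Fin r)) ⊆ {x, y, z} := by
      rw [hSeq]; simp
    exact exists_rainbow_tree hr ht hxy hxz hyz hsub
  refine le_antisymm (Nat.sInf_le mem3) (le_csInf ⟨3, mem3⟩ ?_)
  rintro q ⟨c, hc⟩
  by_contra hq3
  push_neg at hq3
  have hq : q ≤ 2 := by omega
  have h0t : (0 : ℕ) < t := by omega
  have h1t : (1 : ℕ) < t := by omega
  have h2t : (2 : ℕ) < t := by omega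
  have h0r : (0 : ℕ) < r := by omega
  have h1r : (1 : ℕ) < r := by omega
  set p0 : Fin t := ⟨0, h0t⟩ with hp0
  set p1 : Fin t := ⟨1, h1t⟩ with hp1
  set p2 : Fin t := ⟨2, h2t⟩ with hp2
  have p01 : p0 ≠ p1 := by simp [hp0, hp1, Fin.ext_iff]
  have p02 : p0 ≠ p2 := by simp [hp0, hp2, Fin.ext_iff]
  have p12 : p1 ≠ p2 := by simp [hp1, hp2, Fin.ext_iff]
  set A : Fin 2 → (_ : Fin t) × Fin r := fun x => ⟨p0, ⟨x.val, by omega⟩⟩ with hA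
  set B : Fin 2 → (_ : Fin t) × Fin r := fun x => ⟨p1, ⟨x.val, by omega⟩⟩ with hB
  set C : Fin 2 → (_ : Fin t) × Fin r := fun x => ⟨p2, ⟨x.val, by omega⟩⟩ with hC
  have vne01 : ∀ h h', (⟨(0 : Fin 2).val, h⟩ : Fin r) ≠ ⟨(1 : Fin 2).val, h'⟩ := by
    intro h h'
    simp [Fin.ext_iff]
  have hAB : ∀ x y, A x ≠ B y := fun x y => sne1 p01
  have hAC : ∀ x y, A x ≠ C y := fun x y => sne1 p02
  have hBC : ∀ x y, B x ≠ C y := fun x y => sne1 p12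
  have hA01 : A 0 ≠ A 1 := sne2 (vne01 _ _)
  have hB01 : B 0 ≠ B 1 := sne2 (vne01 _ _)
  have hC01 : C 0 ≠ C 1 := sne2 (vne01 _ _)
  have hnAA : ¬ (completeMultipartiteGraph (fun _ : Fin t => Fin r)).Adj (A 0) (A 1) :=
    fun h => (cmg_adj.mp h) rfl
  have hnBB : ¬ (completeMultipartiteGraph (fun _ : Fin t => Fin r)).Adj (B 0) (B 1) :=
    fun h => (cmg_adj.mp h) rfl
  have hnCC : ¬ (completeMultipartiteGraph (fun _ : Fin t => Fin r)).Adj (C 0) (C 1) :=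
    fun h => (cmg_adj.mp h) rfl
  -- the six distinctness constraints
  have hf1 : ∀ d, c s(A 0, B d) ≠ c s(A 1, B d) :=
    fun d => fact1 hq hc hA01 (hAB 0 d) (hAB 1 d) hnAA
  have hf2 : ∀ e, c s(A e, B 0) ≠ c s(A e, B 1) := by
    intro e
    rw [Sym2.eq_swap (a := A e) (b := B 0), Sym2.eq_swap (a := A e) (b := B 1)]
    exact fact1 hq hc hB01 (hAB e 0).symm (hAB e 1).symm hnBB
  have hg1 : ∀ d, c s(B 0, C d) ≠ c s(B 1, C d) :=
    fun d => fact1 hq hc hB01 (hBC 0 d) (hBC 1 d) hnBB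
  have hg2 : ∀ e, c s(B e, C 0) ≠ c s(B e, C 1) := by
    intro e
    rw [Sym2.eq_swap (a := B e) (b := C 0), Sym2.eq_swap (a := B e) (b := C 1)]
    exact fact1 hq hc hC01 (hBC e 0).symm (hBC e 1).symm hnCC
  have hh1 : ∀ d, c s(A 0, C d) ≠ c s(A 1, C d) :=
    fun d => fact1 hq hc hA01 (hAC 0 d) (hAC 1 d) hnAA
  have hh2 : ∀ e, c s(A e, C 0) ≠ c s(A e, C 1) := by
    intro e
    rw [Sym2.eq_swap (a := A e) (b := C 0), Sym2.eq_swap (a := A e) (b := C 1)]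
    exact fact1 hq hc hC01 (hAC e 0).symm (hAC e 1).symm hnCC
  -- collapse to Fin 2
  set base : Fin q := c s(A 0, B 0) with hbase
  have fin2_pigeon : ∀ x y z : Fin q, x ≠ z → y ≠ z → x = y := by
    intro x y z hx hy
    have hx' : x.val ≠ z.val := fun h => hx (Fin.ext h)
    have hy' : y.val ≠ z.val := fun h => hy (Fin.ext h)
    have := x.isLt
    have := y.isLt
    have := z.isLt
    exact Fin.ext (by omega)
  have mne : ∀ u v : Fin q, u ≠ v →
      (if u = base then (0 : Fin 2) else 1) ≠ (if v = base then (0 : Fin 2) else 1) := by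
    intro u v huv
    by_cases hu : u = base <;> by_cases hv : v = base
    · exact absurd (hu.trans hv.symm) huv
    · simp [hu, hv]
    · simp [hu, hv]
    · exact absurd (fin2_pigeon u v base hu hv) huv
  have meq : ∀ u v : Fin q,
      (if u = base then (0 : Fin 2) else 1) = (if v = base then (0 : Fin 2) else 1) → u = v := by
    intro u v h
    by_contra hne
    exact mne u v hne h
  obtain ⟨x, y, z, h1, h2⟩ := two_color_key
    (fun x y => if c s(A x, B y) = base then 0 else 1)
    (fun y z => if c s(B y, C z) = base then 0 else 1)
    (fun x z => if c s(A x, C z) = base then 0 else 1)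
    (fun d => mne _ _ (hf1 d)) (fun e => mne _ _ (hf2 e))
    (fun d => mne _ _ (hg1 d)) (fun e => mne _ _ (hg2 e))
    (fun d => mne _ _ (hh1 d)) (fun e => mne _ _ (hh2 e))
  have hc1 : c s(A x, B y) = c s(B y, C z) := meq _ _ h1
  have hc2 : c s(B y, C z) = c s(A x, C z) := meq _ _ h2
  exact fact2 hq hc (hAB x y) (hAC x z) (hBC y z) ⟨hc1, hc2⟩
end

section
/- If G is a connected graph and {H_1, …, H_k} is a partition of V(G) into sets each inducing a connected subgraph, then rx_3(G) ≤ k − 1 + Σ_{i=1}^k rx_3(H_i). -/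
open SimpleGraph

universe u

section ST
variable {W : Type*} {G : SimpleGraph W}

lemma aux_delete_preconnected {v w : W}
    (hp : G.Preconnected)
    (hr : (G \ fromEdgeSet {s(v, w)}).Reachable v w) :
    (G \ fromEdgeSet {s(v, w)}).Preconnected := by
  intro x y
  obtain ⟨p⟩ := hp x y
  induction p with
  | nil => exact Reachable.refl _
  | @cons a b c hab p ih =>
    refine Reachable.trans ?_ ih
    by_cases he : s(a, b) = s(v, w)
    · rw [Sym2.eq_iff] at he
      rcases he with ⟨rfl, rfl⟩ | ⟨rfl, rfl⟩
      · exact hr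
      · exact hr.symm
    · exact Adj.reachable (by
        rw [sdiff_adj, fromEdgeSet_adj]
        exact ⟨hab, fun h => he h.1⟩)

end ST

section ST2
variable {V : Type u} {G : SimpleGraph V}

lemma exists_spanning_tree_le [Finite V] (H : G.Subgraph) (hc : H.Connected) :
    ∃ T : G.Subgraph, T ≤ H ∧ T.verts = H.verts ∧ T.coe.IsTree := by
  classical
  generalize hn : H.edgeSet.ncard = n
  induction n using Nat.strong_induction_on generalizing H with
  | _ n ih =>
    by_cases hac : H.coe.IsAcyclic
    · exact ⟨H, le_refl _, rfl, ⟨hc.coe, hac⟩⟩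
    · rw [SimpleGraph.IsAcyclic] at hac
      push_neg at hac
      obtain ⟨v, p, hp⟩ := hac
      match p, hp with
      | .nil, hp => exact absurd rfl hp.ne_nil
      | .cons (v := x) hvx p', hp =>
        -- s(v, x) is on the cycle, hence not a bridge
        have hmem : s(v, x) ∈ (SimpleGraph.Walk.cons hvx p').edges := by simp
        have hnb : ¬ H.coe.IsBridge s(v, x) := by
          rw [SimpleGraph.isBridge_iff_adj_and_forall_cycle_notMem (show s(v, x) ∈ H.coe.edgeSet from hvx)]
          push_neg
          exact ⟨v, _, hp, hmem⟩
        rw [SimpleGraph.isBridge_iff] at hnb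
        push_neg at hnb
        have hreach := hnb
        -- delete the edge
        set H' : G.Subgraph := H.deleteEdges {s(v.1, x.1)} with hH'
        have hcoe : H'.coe = (H.coe \ fromEdgeSet {s(v, x)}) := by
          ext a b
          simp only [Subgraph.coe_adj, hH', Subgraph.deleteEdges_adj, Set.mem_singleton_iff,
            sdiff_adj, fromEdgeSet_adj]
          constructor
          · rintro ⟨h1, h2⟩
            refine ⟨h1, fun hh => h2 ?_⟩
            have := hh.1
            change @Eq (Sym2 ↑H.verts) s(a, b) s(v, x) at this
            rw [Sym2.eq_iff]; replace this := Sym2.eq_iff.mp this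
            rcases this with ⟨h3, h4⟩ | ⟨h3, h4⟩
            · exact Or.inl ⟨congrArg Subtype.val h3, congrArg Subtype.val h4⟩
            · exact Or.inr ⟨congrArg Subtype.val h3, congrArg Subtype.val h4⟩
          · rintro ⟨h1, h2⟩
            refine ⟨h1, fun hh => h2 ⟨?_, ?_⟩⟩
            · show @Eq (Sym2 ↑H.verts) s(a, b) s(v, x)
              refine Sym2.eq_iff.mpr ?_; replace hh := Sym2.eq_iff.mp hh
              rcases hh with ⟨h3, h4⟩ | ⟨h3, h4⟩
              · exact Or.inl ⟨Subtype.ext h3, Subtype.ext h4⟩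
              · exact Or.inr ⟨Subtype.ext h3, Subtype.ext h4⟩
            · exact fun hab => (H.coe.irrefl (hab ▸ h1))
        have hverts : H'.verts = H.verts := Subgraph.deleteEdges_verts _
        have hc' : H'.Connected := by
          rw [Subgraph.connected_iff]
          constructor
          · rw [Subgraph.preconnected_iff]
            have : H'.coe.Preconnected := by
              rw [hcoe]
              -- transport vertices: H'.verts = H.verts, types equal? hcoe gives graph on ↑H.verts
              exact aux_delete_preconnected hc.coe.preconnected hreach
            exact this
          · rw [hverts]; exact hc.nonempty
        have hedge : s(v.1, x.1) ∈ H.edgeSet := Subgraph.mem_edgeSet.mpr hvx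
        have hlt : H'.edgeSet.ncard < n := by
          have hsub : H'.edgeSet = H.edgeSet \ {s(v.1, x.1)} := by
            ext e
            induction e using Sym2.ind with
            | _ a b =>
              simp [hH', Subgraph.deleteEdges_adj, Subgraph.mem_edgeSet, Set.mem_diff,
                Sym2.eq_iff]
          rw [hsub, ← hn]
          exact Set.ncard_diff_singleton_lt_of_mem hedge (Set.toFinite _)
        obtain ⟨T, hT1, hT2, hT3⟩ := ih _ hlt H' hc' rfl
        exact ⟨T, le_trans hT1 (Subgraph.deleteEdges_le _), hT2.trans hverts, hT3⟩

end ST2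

section MapConn
variable {V : Type*} {W : Type*} {G : SimpleGraph V} {G' : SimpleGraph W}

lemma Subgraph.connected_map (f : G →g G') {H : G.Subgraph} (h : H.Connected) :
    (H.map f).Connected := by
  let hhom : H.coe →g (H.map f).coe :=
    { toFun := fun a => ⟨f a.1, Set.mem_image_of_mem _ a.2⟩
      map_rel' := fun {a b} hab => ⟨a.1, b.1, hab, rfl, rfl⟩ }
  rw [Subgraph.connected_iff]
  obtain ⟨a0, ha0⟩ := h.nonempty
  constructor
  · rw [Subgraph.preconnected_iff]
    rintro ⟨x, ⟨u, hu, rfl⟩⟩ ⟨y, ⟨v, hv, rfl⟩⟩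
    exact (h ⟨u, hu⟩ ⟨v, hv⟩).map hhom
  · exact ⟨f a0, Set.mem_image_of_mem _ ha0⟩

end MapConn

section Main
variable {V : Type u} [Fintype V] [DecidableEq V]

/-- `A` is `q`-good: there is a coloring with `q` colors such that every subset of `A` of size
at most 3 is connected by a connected subgraph inside `A` with injectively colored edges. -/
def Good (G : SimpleGraph V) (A : Set V) (q : ℕ) : Prop :=
  A.Nonempty ∧ ∃ c : Sym2 V → Fin q, ∀ S : Finset V, ↑S ⊆ A → S.card ≤ 3 →
    ∃ T : G.Subgraph, T.verts ⊆ A ∧ T.Connected ∧ ↑S ⊆ T.verts ∧ Set.InjOn c T.edgeSet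

lemma good_base {G : SimpleGraph V} (A : Set V) (hA : (G.induce A).Connected) :
    Good G A ((G.induce A).rxk 3) := by
  classical
  haveI : Nonempty ↑A := hA.nonempty
  have hAne : A.Nonempty := Set.nonempty_coe_sort.mp ‹Nonempty ↑A›
  refine ⟨hAne, ?_⟩
  -- the set defining rxk is nonempty
  have hMne : {q | ∃ c : Sym2 ↑A → Fin q, (G.induce A).IsRainbowColoring 3 c}.Nonempty := by
    haveI : Fintype ↑A := Fintype.ofFinite ↑A
    refine ⟨Fintype.card (Sym2 ↑A), (Fintype.equivFin (Sym2 ↑A)).toFun, ?_⟩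
    have htop : (⊤ : (G.induce A).Subgraph).Connected := by
      rw [Subgraph.connected_iff_forall_exists_walk_subgraph]
      refine ⟨⟨Classical.arbitrary ↑A, trivial⟩, ?_⟩
      intro u v _ _
      exact ⟨(hA u v).some, le_top⟩
    obtain ⟨T, _, hTverts, hTtree⟩ := exists_spanning_tree_le _ htop
    intro S hScard
    refine ⟨T, hTtree, ?_, (Fintype.equivFin (Sym2 ↑A)).injective.injOn⟩
    rw [hTverts]
    exact fun x _ => trivial
  obtain ⟨c₀, hc₀⟩ := Nat.sInf_mem hMne
  -- lift the coloring to `Sym2 V`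
  have hvalinj : Function.Injective (Sym2.map (Subtype.val : ↑A → V)) :=
    Sym2.map.injective Subtype.val_injective
  set c : Sym2 V → Fin ((G.induce A).rxk 3) :=
    Function.extend (Sym2.map (Subtype.val : ↑A → V)) c₀
      (fun _ => c₀ (Sym2.diag (Classical.arbitrary ↑A))) with hc
  have hclift : ∀ e : Sym2 ↑A, c (Sym2.map Subtype.val e) = c₀ e :=
    fun e => hvalinj.extend_apply _ _ e
  refine ⟨c, ?_⟩
  intro S hS hcard
  set F := (Set.toFinite A).toFinset with hF
  have hSF : S ⊆ F := fun x hx => (Set.Finite.mem_toFinset _).mpr (hS hx)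
  by_cases h3 : 3 ≤ F.card
  · obtain ⟨S₂, hSS₂, hS₂F, hcard₂⟩ := Finset.exists_subsuperset_card_eq hSF hcard h3
    have hmemA : ∀ x ∈ S₂, x ∈ A := fun x hx => (Set.Finite.mem_toFinset _).mp (hS₂F hx)
    let f : {x // x ∈ S₂} ↪ ↑A :=
      ⟨fun x => ⟨x.1, hmemA x.1 x.2⟩, by intro a b h; exact Subtype.ext (congrArg (fun y : ↑A => y.1) h)⟩
    obtain ⟨T', hTree', hSin', hInj'⟩ := hc₀ (S₂.attach.map f) (by simp [hcard₂])
    let ι : G.induce A →g G := ⟨Subtype.val, fun {a b} h => h⟩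
    refine ⟨T'.map ι, ?_, Subgraph.connected_map ι ⟨hTree'.1⟩, ?_, ?_⟩
    · rintro x ⟨u, hu, rfl⟩
      exact u.2
    · intro x hx
      have hx₂ : x ∈ S₂ := hSS₂ hx
      have : (⟨x, hmemA x hx₂⟩ : ↑A) ∈ T'.verts := by
        apply hSin'
        simp only [Finset.coe_map, Set.mem_image, Finset.mem_coe, Finset.mem_attach]
        exact ⟨⟨x, hx₂⟩, trivial, rfl⟩
      exact ⟨⟨x, hmemA x hx₂⟩, this, rfl⟩
    · have hedges : ∀ e ∈ (T'.map ι).edgeSet, ∃ e' ∈ T'.edgeSet,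
          e = Sym2.map Subtype.val e' := by
        intro e he
        induction e using Sym2.ind with
        | _ a b =>
          rw [Subgraph.mem_edgeSet] at he
          obtain ⟨u, v, huv, rfl, rfl⟩ := he
          exact ⟨s(u, v), huv, rfl⟩
      intro e₁ h₁ e₂ h₂ hceq
      obtain ⟨e₁', he₁', rfl⟩ := hedges e₁ h₁
      obtain ⟨e₂', he₂', rfl⟩ := hedges e₂ h₂
      rw [hclift, hclift] at hceq
      rw [hInj' he₁' he₂' hceq]
  · have hFpos : 0 < F.card := Finset.card_pos.mpr (by
      obtain ⟨a, ha⟩ := hAne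
      exact ⟨a, (Set.Finite.mem_toFinset _).mpr ha⟩)
    have hF12 : F.card = 1 ∨ F.card = 2 := by omega
    rcases hF12 with h1 | h2
    · obtain ⟨a, hFa⟩ := Finset.card_eq_one.mp h1
      have hAa : A = {a} := by
        ext x
        rw [show (x ∈ A) ↔ x ∈ F from ((Set.toFinite A).mem_toFinset).symm, hFa]
        simp
      refine ⟨G.singletonSubgraph a, ?_, Subgraph.singletonSubgraph_connected, ?_, ?_⟩
      · rw [singletonSubgraph_verts, hAa]
      · rw [singletonSubgraph_verts, ← hAa]; exact hS
      · rw [edgeSet_singletonSubgraph]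
        exact Set.injOn_empty _
    · obtain ⟨a, b, hab, hFab⟩ := Finset.card_eq_two.mp h2
      have hAab : A = {a, b} := by
        ext x
        rw [show (x ∈ A) ↔ x ∈ F from ((Set.toFinite A).mem_toFinset).symm, hFab]
        simp
      have haA : a ∈ A := by rw [hAab]; exact Set.mem_insert _ _
      have hbA : b ∈ A := by rw [hAab]; exact Set.mem_insert_iff.mpr (Or.inr rfl)
      have hadj : G.Adj a b := by
        obtain ⟨p⟩ := hA ⟨a, haA⟩ ⟨b, hbA⟩
        cases p with
        | nil => exact absurd rfl hab
        | cons h p' =>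
          rename_i x
          have hGx : G.Adj a ↑x := h
          have hxA : (↑x : V) ∈ ({a, b} : Set V) := by rw [← hAab]; exact x.2
          simp only [Set.mem_insert_iff, Set.mem_singleton_iff] at hxA
          rcases hxA with hxa | hxb
          · rw [hxa] at hGx; exact absurd hGx (G.irrefl)
          · rwa [hxb] at hGx
      refine ⟨G.subgraphOfAdj hadj, ?_, Subgraph.subgraphOfAdj_connected hadj, ?_, ?_⟩
      · rw [subgraphOfAdj_verts, hAab]
      · rw [subgraphOfAdj_verts, ← hAab]; exact hS
      · rw [edgeSet_subgraphOfAdj]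
        intro x hx y hy _
        simp only [Set.mem_singleton_iff] at hx hy
        rw [hx, hy]

lemma good_merge {G : SimpleGraph V} {A B : Set V} {qa qb : ℕ}
    (hdisj : Disjoint A B) {a b : V} (haA : a ∈ A) (hbB : b ∈ B) (hab : G.Adj a b)
    (hA : Good G A qa) (hB : Good G B qb) : Good G (A ∪ B) (qa + qb + 1) := by
  classical
  obtain ⟨hAne, ca, hca⟩ := hA
  obtain ⟨hBne, cb, hcb⟩ := hB
  refine ⟨hAne.mono Set.subset_union_left, ?_⟩
  set c : Sym2 V → Fin (qa + qb + 1) := fun e =>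
    if ∀ x ∈ e, x ∈ A then (ca e).castLE (by omega)
    else if ∀ x ∈ e, x ∈ B then ⟨qa + (cb e).val, by omega⟩
    else ⟨qa + qb, by omega⟩ with hcdef
  have hcA : ∀ e : Sym2 V, (∀ x ∈ e, x ∈ A) → c e = (ca e).castLE (by omega) := by
    intro e he; simp only [hcdef, if_pos he]
  have hcB : ∀ e : Sym2 V, (∀ x ∈ e, x ∈ B) → c e = ⟨qa + (cb e).val, by omega⟩ := by
    intro e he
    have hnA : ¬ ∀ x ∈ e, x ∈ A := by
      induction e using Sym2.ind with
      | _ u v =>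
        intro hA'
        have hu : u ∈ A := hA' u (Sym2.mem_mk_left u v)
        have hu' : u ∈ B := he u (Sym2.mem_mk_left u v)
        exact Set.disjoint_left.mp hdisj hu hu'
    simp only [hcdef, if_neg hnA, if_pos he]
  have hcX : c s(a, b) = ⟨qa + qb, by omega⟩ := by
    have h1 : ¬ ∀ x ∈ s(a, b), x ∈ A := fun h =>
      Set.disjoint_left.mp hdisj (h b (Sym2.mem_mk_right a b)) hbB
    have h2 : ¬ ∀ x ∈ s(a, b), x ∈ B := fun h =>
      Set.disjoint_left.mp hdisj haA (h a (Sym2.mem_mk_left a b))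
    simp only [hcdef, if_neg h1, if_neg h2]
  refine ⟨c, ?_⟩
  intro S hS hcard
  have hends : ∀ (T : G.Subgraph) (X : Set V), T.verts ⊆ X →
      ∀ e ∈ T.edgeSet, ∀ x ∈ e, x ∈ X := by
    intro T X hTX e he x hx
    induction e using Sym2.ind with
    | _ u v =>
      rw [Subgraph.mem_edgeSet] at he
      rw [Sym2.mem_iff] at hx
      rcases hx with rfl | rfl
      · exact hTX (T.edge_vert he)
      · exact hTX (T.edge_vert he.symm)
  by_cases hSA : ↑S ⊆ A
  · obtain ⟨T, hTA, hTc, hTS, hTI⟩ := hca S hSA hcard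
    refine ⟨T, hTA.trans Set.subset_union_left, hTc, hTS, ?_⟩
    intro e₁ h₁ e₂ h₂ heq
    rw [hcA e₁ (hends T A hTA e₁ h₁), hcA e₂ (hends T A hTA e₂ h₂)] at heq
    exact hTI h₁ h₂ (Fin.castLE_injective _ heq)
  · by_cases hSB : ↑S ⊆ B
    · obtain ⟨T, hTB, hTc, hTS, hTI⟩ := hcb S hSB hcard
      refine ⟨T, hTB.trans Set.subset_union_right, hTc, hTS, ?_⟩
      intro e₁ h₁ e₂ h₂ heq
      rw [hcB e₁ (hends T B hTB e₁ h₁), hcB e₂ (hends T B hTB e₂ h₂)] at heq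
      apply hTI h₁ h₂
      have := congrArg Fin.val heq
      simp only [] at this
      exact Fin.ext (by omega)
    · -- S meets both sides
      set SA := S.filter (· ∈ A) with hSAdef
      set SB := S.filter (· ∉ A) with hSBdef
      have hSAsub : ↑SA ⊆ A := by
        intro x hx
        simp only [hSAdef, Finset.coe_filter, Set.mem_setOf_eq] at hx
        exact hx.2
      have hSBsub : ↑SB ⊆ B := by
        intro x hx
        simp only [hSBdef, Finset.coe_filter, Set.mem_setOf_eq] at hx
        rcases hS hx.1 with h | h
        · exact absurd h hx.2
        · exact h
      have hSAne : SA.Nonempty := by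
        have : ∃ x ∈ S, x ∉ B := by
          by_contra h
          push_neg at h
          exact hSB h
        obtain ⟨x, hx, hxB⟩ := this
        refine ⟨x, ?_⟩
        simp only [hSAdef, Finset.mem_filter]
        rcases hS hx with h | h
        · exact ⟨hx, h⟩
        · exact absurd h hxB
      have hSBne : SB.Nonempty := by
        have : ∃ x ∈ S, x ∉ A := by
          by_contra h
          push_neg at h
          exact hSA h
        obtain ⟨x, hx, hxA⟩ := this
        exact ⟨x, by simp only [hSBdef, Finset.mem_filter]; exact ⟨hx, hxA⟩⟩
      have hcards : SA.card + SB.card = S.card := Finset.card_filter_add_card_filter_not _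
      have hSAcard : (insert a SA).card ≤ 3 := by
        have h1 : 1 ≤ SB.card := Finset.card_pos.mpr hSBne
        have := Finset.card_insert_le a SA
        omega
      have hSBcard : (insert b SB).card ≤ 3 := by
        have h1 : 1 ≤ SA.card := Finset.card_pos.mpr hSAne
        have := Finset.card_insert_le b SB
        omega
      have hSA'sub : ↑(insert a SA) ⊆ A := by
        rw [Finset.coe_insert]
        exact Set.insert_subset haA hSAsub
      have hSB'sub : ↑(insert b SB) ⊆ B := by
        rw [Finset.coe_insert]
        exact Set.insert_subset hbB hSBsub
      obtain ⟨TA, hTAv, hTAc, hTAS, hTAI⟩ := hca (insert a SA) hSA'sub hSAcard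
      obtain ⟨TB, hTBv, hTBc, hTBS, hTBI⟩ := hcb (insert b SB) hSB'sub hSBcard
      have haTA : a ∈ TA.verts := hTAS (by simp)
      have hbTB : b ∈ TB.verts := hTBS (by simp)
      refine ⟨(TA ⊔ G.subgraphOfAdj hab) ⊔ TB, ?_, ?_, ?_, ?_⟩
      · simp only [Subgraph.verts_sup, subgraphOfAdj_verts]
        refine Set.union_subset (Set.union_subset ?_ ?_) ?_
        · exact hTAv.trans Set.subset_union_left
        · intro x hx
          rcases hx with rfl | hx
          · exact Or.inl haA
          · rw [Set.mem_singleton_iff] at hx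
            exact Or.inr (hx ▸ hbB)
        · exact hTBv.trans Set.subset_union_right
      · refine Subgraph.connected_sup (Subgraph.Connected.preconnected ?_) hTBc.preconnected ?_
        · refine Subgraph.connected_sup hTAc.preconnected (Subgraph.subgraphOfAdj_connected hab).preconnected ?_
          exact ⟨a, by simp [haTA]⟩
        · exact ⟨b, by simp [hbTB]⟩
      · intro x hx
        simp only [Subgraph.verts_sup, Set.mem_union]
        by_cases hxA : x ∈ A
        · refine Or.inl (Or.inl (hTAS ?_))
          simp only [Finset.coe_insert, Set.mem_insert_iff]
          right
          simp only [hSAdef, Finset.coe_filter, Set.mem_setOf_eq]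
          exact ⟨hx, hxA⟩
        · refine Or.inr (hTBS ?_)
          simp only [Finset.coe_insert, Set.mem_insert_iff]
          right
          simp only [hSBdef, Finset.coe_filter, Set.mem_setOf_eq]
          exact ⟨hx, hxA⟩
      · -- injectivity on edges
        have hedges : ((TA ⊔ G.subgraphOfAdj hab) ⊔ TB).edgeSet =
            (TA.edgeSet ∪ {s(a, b)}) ∪ TB.edgeSet := by
          rw [Subgraph.edgeSet_sup, Subgraph.edgeSet_sup, edgeSet_subgraphOfAdj]
        rw [hedges]
        have hvA : ∀ e ∈ TA.edgeSet, (c e).val < qa := by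
          intro e he
          rw [hcA e (hends TA A hTAv e he)]
          simpa using (ca e).isLt
        have hvB : ∀ e ∈ TB.edgeSet, qa ≤ (c e).val ∧ (c e).val < qa + qb := by
          intro e he
          rw [hcB e (hends TB B hTBv e he)]
          refine ⟨Nat.le_add_right _ _, ?_⟩
          show qa + (cb e).val < qa + qb
          have := (cb e).isLt
          omega
        have hvX : (c s(a, b)).val = qa + qb := by rw [hcX]
        intro e₁ h₁ e₂ h₂ heq
        have hval := congrArg Fin.val heq
        rcases h₁ with (h₁ | h₁) | h₁ <;> rcases h₂ with (h₂ | h₂) | h₂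
        · -- both in TA
          rw [hcA e₁ (hends TA A hTAv e₁ h₁), hcA e₂ (hends TA A hTAv e₂ h₂)] at heq
          exact hTAI h₁ h₂ (Fin.castLE_injective _ heq)
        · exact absurd hval (by rw [Set.mem_singleton_iff] at h₂; rw [h₂, hvX]
                                have := hvA e₁ h₁; omega)
        · exact absurd hval (by have := hvA e₁ h₁; have := hvB e₂ h₂; omega)
        · exact absurd hval (by rw [Set.mem_singleton_iff] at h₁; rw [h₁, hvX]
                                have := hvA e₂ h₂; omega)
        · rw [Set.mem_singleton_iff] at h₁ h₂; rw [h₁, h₂]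
        · exact absurd hval (by rw [Set.mem_singleton_iff] at h₁; rw [h₁, hvX]
                                have := hvB e₂ h₂; omega)
        · exact absurd hval (by have := hvA e₂ h₂; have := hvB e₁ h₁; omega)
        · exact absurd hval (by rw [Set.mem_singleton_iff] at h₂; rw [h₂, hvX]
                                have := hvB e₁ h₁; omega)
        · rw [hcB e₁ (hends TB B hTBv e₁ h₁), hcB e₂ (hends TB B hTBv e₂ h₂)] at heq
          apply hTBI h₁ h₂
          have := congrArg Fin.val heq
          simp only [] at this
          exact Fin.ext (by omega)

lemma exists_cross_edge {G : SimpleGraph V} (hpre : G.Preconnected) {k : ℕ} (Hf : Fin k → Set V)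
    (s : Finset (Fin k)) (hcover : (⋃ i ∈ s, Hf i) = Set.univ)
    (hdisjs : ∀ i ∈ s, ∀ j ∈ s, i ≠ j → Disjoint (Hf i) (Hf j))
    (hs2 : 1 < s.card) (hne : ∀ i ∈ s, (Hf i).Nonempty) :
    ∃ i j a b, i ∈ s ∧ j ∈ s ∧ i ≠ j ∧ a ∈ Hf i ∧ b ∈ Hf j ∧ G.Adj a b := by
  by_contra hcon
  push_neg at hcon
  have hpart : ∀ x : V, ∃ l ∈ s, x ∈ Hf l := by
    intro x
    have : x ∈ ⋃ i ∈ s, Hf i := by rw [hcover]; trivial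
    obtain ⟨l, hl, hx⟩ := Set.mem_iUnion₂.mp this
    exact ⟨l, hl, hx⟩
  have key : ∀ (i : Fin k), i ∈ s → ∀ {u y : V} (_ : G.Walk u y), u ∈ Hf i → y ∈ Hf i := by
    intro i hi u y p
    induction p with
    | nil => exact id
    | @cons u v w hadj p ih =>
      intro hu
      obtain ⟨l, hl, hv⟩ := hpart v
      by_cases hli : l = i
      · exact ih (hli ▸ hv)
      · exact absurd hadj (hcon i l u v hi hl (fun h => hli h.symm) hu hv)
  obtain ⟨i, hi, j, hj, hij⟩ := Finset.one_lt_card.mp hs2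
  obtain ⟨a, ha⟩ := hne i hi
  obtain ⟨b, hb⟩ := hne j hj
  have hbi : b ∈ Hf i := key i hi (hpre a b).some ha
  exact Set.disjoint_left.mp (hdisjs i hi j hj hij) hbi hb

lemma good_univ {G : SimpleGraph V} (hconn : G.Connected) {k : ℕ} :
    ∀ (n : ℕ) (s : Finset (Fin k)) (Hf : Fin k → Set V) (q : Fin k → ℕ),
      s.card = n → (⋃ i ∈ s, Hf i) = Set.univ →
      (∀ i ∈ s, ∀ j ∈ s, i ≠ j → Disjoint (Hf i) (Hf j)) →
      (∀ i ∈ s, Good G (Hf i) (q i)) →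
      Good G Set.univ (s.card - 1 + ∑ i ∈ s, q i) := by
  classical
  intro n
  induction n using Nat.strong_induction_on with
  | _ n ih =>
    intro s Hf q hcard hcover hdisjs hgood
    rcases Nat.lt_or_ge n 2 with hn2 | hn2
    · interval_cases n
      · exfalso
        rw [Finset.card_eq_zero] at hcard
        rw [hcard] at hcover
        simp only [Finset.notMem_empty, Set.iUnion_of_empty, Set.iUnion_empty] at hcover
        haveI := hconn.nonempty
        have : (Set.univ : Set V).Nonempty := Set.univ_nonempty
        rw [← hcover] at this
        exact Set.not_nonempty_empty this
      · obtain ⟨i0, rfl⟩ := Finset.card_eq_one.mp hcard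
        have hHf : Hf i0 = Set.univ := by
          rw [← hcover]
          simp
        have := hgood i0 (Finset.mem_singleton_self i0)
        rw [hHf] at this
        simpa using this
    · -- at least two parts: find a cross edge and merge
      obtain ⟨i, j, a, b, hi, hj, hij, ha, hb, hadj⟩ :=
        exists_cross_edge hconn.preconnected Hf s hcover hdisjs (by omega)
          (fun l hl => (hgood l hl).1)
      set s' := s.erase j with hs'
      set Hf' := Function.update Hf i (Hf i ∪ Hf j) with hHf'
      set q' := Function.update q i (q i + q j + 1) with hq'
      have hi' : i ∈ s' := Finset.mem_erase.mpr ⟨hij, hi⟩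
      have hcard' : s'.card = n - 1 := by
        rw [hs', Finset.card_erase_of_mem hj, hcard]
      have hcover' : (⋃ l ∈ s', Hf' l) = Set.univ := by
        rw [Set.eq_univ_iff_forall]
        intro x
        rw [Set.mem_iUnion₂]
        have : x ∈ ⋃ l ∈ s, Hf l := by rw [hcover]; trivial
        obtain ⟨l, hl, hx⟩ := Set.mem_iUnion₂.mp this
        by_cases hlj : l = j
        · exact ⟨i, hi', by rw [hHf', Function.update_self]; exact Or.inr (hlj ▸ hx)⟩
        · by_cases hli : l = i
          · exact ⟨i, hi', by rw [hHf', Function.update_self]; exact Or.inl (hli ▸ hx)⟩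
          · exact ⟨l, Finset.mem_erase.mpr ⟨hlj, hl⟩,
              by rw [hHf', Function.update_of_ne hli]; exact hx⟩
      have hdisjs' : ∀ l ∈ s', ∀ m ∈ s', l ≠ m → Disjoint (Hf' l) (Hf' m) := by
        intro l hl m hm hlm
        have hlj : l ≠ j := (Finset.mem_erase.mp hl).1
        have hmj : m ≠ j := (Finset.mem_erase.mp hm).1
        have hls : l ∈ s := (Finset.mem_erase.mp hl).2
        have hms : m ∈ s := (Finset.mem_erase.mp hm).2
        by_cases hli : l = i
        · subst hli
          rw [hHf', Function.update_self, Function.update_of_ne (fun h => hlm h.symm)]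
          exact Disjoint.union_left (hdisjs l hls m hms hlm) (hdisjs j hj m hms (Ne.symm hmj))
        · by_cases hmi : m = i
          · subst hmi
            rw [hHf', Function.update_self, Function.update_of_ne hli]
            exact Disjoint.union_right (hdisjs l hls m hms hlm)
              (hdisjs l hls j hj hlj)
          · rw [hHf', Function.update_of_ne hli, Function.update_of_ne hmi]
            exact hdisjs l hls m hms hlm
      have hgood' : ∀ l ∈ s', Good G (Hf' l) (q' l) := by
        intro l hl
        by_cases hli : l = i
        · subst hli
          rw [hHf', hq', Function.update_self, Function.update_self]
          exact good_merge (hdisjs l hi j hj hij) ha hb hadj (hgood l hi) (hgood j hj)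
        · rw [hHf', hq', Function.update_of_ne hli, Function.update_of_ne hli]
          exact hgood l (Finset.mem_erase.mp hl).2
      have hrec := ih (n - 1) (by omega) s' Hf' q' hcard' hcover' hdisjs' hgood'
      -- arithmetic
      have hsum' : ∑ l ∈ s', q' l = (∑ l ∈ s, q l) + 1 := by
        rw [← Finset.add_sum_erase _ q' hi']
        have h1 : q' i = q i + q j + 1 := by rw [hq', Function.update_self]
        have h2 : ∑ l ∈ s'.erase i, q' l = ∑ l ∈ s'.erase i, q l := by
          refine Finset.sum_congr rfl ?_
          intro l hl
          rw [hq', Function.update_of_ne (Finset.mem_erase.mp hl).1]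
        rw [h1, h2, ← Finset.add_sum_erase _ q hj, ← Finset.add_sum_erase _ q hi']
        ring
      rw [hcard', hsum'] at hrec
      have harith : n - 1 - 1 + ((∑ l ∈ s, q l) + 1) = n - 1 + ∑ l ∈ s, q l := by omega
      rw [harith] at hrec
      rw [hcard]
      exact hrec

end Main

theorem stmt_14 {V : Type u} [Fintype V] [DecidableEq V] (G : SimpleGraph V)
    (hconn : G.Connected) (k : ℕ) (H : Fin k → Set V)
    (hdisj : ∀ i j, i ≠ j → Disjoint (H i) (H j))
    (hcover : (⋃ i, H i) = Set.univ)
    (hHconn : ∀ i, (G.induce (H i)).Connected) :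
    G.rxk 3 ≤ k - 1 + ∑ i, (G.induce (H i)).rxk 3 := by
  classical
  have hgood := good_univ (G := G) hconn (Finset.univ : Finset (Fin k)).card
      Finset.univ H (fun i => (G.induce (H i)).rxk 3) rfl
      (by simp only [Finset.mem_univ, Set.iUnion_true]; exact hcover)
      (fun i _ j _ hij => hdisj i j hij)
      (fun i _ => good_base (H i) (hHconn i))
  rw [Finset.card_univ, Fintype.card_fin] at hgood
  obtain ⟨-, c, hc⟩ := hgood
  apply Nat.sInf_le
  refine ⟨c, ?_⟩
  intro S hS
  obtain ⟨T, -, hTc, hTS, hTI⟩ := hc S (by simp) (by omega)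
  obtain ⟨T', hT'le, hT'verts, hT'tree⟩ := exists_spanning_tree_le T hTc
  exact ⟨T', hT'tree, by rw [hT'verts]; exact hTS,
    hTI.mono (Subgraph.edgeSet_mono hT'le)⟩
end
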